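/- arXiv:1608.04177 — 6 statements merged into one kernel-verified Lean document; each statement's English description precedes it below -/
import Mathlib

section
/- Let V and W be finite-dimensional real vector spaces, let X ⊆ V and Y ⊆ W be nonempty convex compact sets, and let f : X → Y be an affine map. Then the fiber body Σf is a nonempty convex compact subset of V. -/
open Set MeasureTheory Filter Topology
open scoped RealInnerProductSpace

/-- Weak sequential compactness of bounded sequences in a separable real Hilbert space. -/
lemma exists_subseq_weak_tendsto {H : Type*} [NormedAddCommGroup H] [InnerProductSpace ℝ H]
    [CompleteSpace H] [TopologicalSpace.SeparableSpace H]
    (ξ : ℕ → H) (R : ℝ) (hb : ∀ n, ‖ξ n‖ ≤ R) :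
    ∃ (g : H) (s : ℕ → ℕ), StrictMono s ∧
      ∀ v : H, Tendsto (fun j => ⟪ξ (s j), v⟫) atTop (𝓝 ⟪g, v⟫) := by
  have hR' : (0:ℝ) ≤ max R 0 := le_max_right _ _
  set R' := max R 0 with hR'def
  have hball : ∀ n (v : H), |⟪ξ n, v⟫| ≤ R' * ‖v‖ := by
    intro n v
    calc |⟪ξ n, v⟫| ≤ ‖ξ n‖ * ‖v‖ := abs_real_inner_le_norm _ _
    _ ≤ R' * ‖v‖ := by
        apply mul_le_mul_of_nonneg_right ((hb n).trans (le_max_left _ _)) (norm_nonneg _)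
  obtain ⟨w, hw⟩ := TopologicalSpace.exists_dense_seq H
  set P : Set (ℕ → ℝ) := Set.univ.pi (fun k => Icc (-(R' * ‖w k‖)) (R' * ‖w k‖)) with hP
  have hPc : IsCompact P := isCompact_univ_pi fun k => isCompact_Icc
  have hmem : ∀ n, (fun k => ⟪ξ n, w k⟫) ∈ P := by
    intro n k _
    exact abs_le.mp (hball n (w k))
  obtain ⟨a, -, s, hs, ha⟩ := hPc.tendsto_subseq hmem
  have hak : ∀ k, Tendsto (fun j => ⟪ξ (s j), w k⟫) atTop (𝓝 (a k)) := by
    intro k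
    have := tendsto_pi_nhds.mp ha k
    simpa using this
  -- Cauchy for every vector
  have hcauchy : ∀ v : H, CauchySeq (fun j => ⟪ξ (s j), v⟫) := by
    intro v
    rw [Metric.cauchySeq_iff]
    intro ε hε
    obtain ⟨k, hk⟩ : ∃ k, dist v (w k) < ε / (4 * (R' + 1)) := by
      have := Metric.denseRange_iff.mp hw v (ε / (4 * (R' + 1)))
        (by positivity)
      exact this
    have hck : CauchySeq (fun j => ⟪ξ (s j), w k⟫) := (hak k).cauchySeq
    obtain ⟨N, hN⟩ := Metric.cauchySeq_iff.mp hck (ε / 2) (by positivity)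
    refine ⟨N, fun m hm n hn => ?_⟩
    have key : ∀ j, |⟪ξ (s j), v⟫ - ⟪ξ (s j), w k⟫| ≤ ε / 4 := by
      intro j
      rw [← inner_sub_right]
      calc |⟪ξ (s j), v - w k⟫| ≤ R' * ‖v - w k‖ := hball _ _
      _ ≤ R' * (ε / (4 * (R' + 1))) := by
          apply mul_le_mul_of_nonneg_left _ hR'
          rw [← dist_eq_norm]
          exact hk.le
      _ ≤ ε / 4 := by
          rw [div_mul_eq_div_div]
          rw [mul_div_assoc']
          rw [div_le_div_iff₀ (by positivity) (by norm_num)]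
          nlinarith [hε.le]
    have h1 := key m
    have h2 := key n
    have h3 := hN m hm n hn
    rw [Real.dist_eq] at h3 ⊢
    have : ⟪ξ (s m), v⟫ - ⟪ξ (s n), v⟫ =
        (⟪ξ (s m), v⟫ - ⟪ξ (s m), w k⟫) + (⟪ξ (s m), w k⟫ - ⟪ξ (s n), w k⟫)
          + (⟪ξ (s n), w k⟫ - ⟪ξ (s n), v⟫) := by ring
    rw [this]
    calc _ ≤ |⟪ξ (s m), v⟫ - ⟪ξ (s m), w k⟫| + |⟪ξ (s m), w k⟫ - ⟪ξ (s n), w k⟫|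
        + |⟪ξ (s n), w k⟫ - ⟪ξ (s n), v⟫| := abs_add_three _ _ _
    _ < ε := by
        rw [abs_sub_comm (⟪ξ (s n), w k⟫) (⟪ξ (s n), v⟫)]
        linarith
  have hconv : ∀ v : H, ∃ L : ℝ, Tendsto (fun j => ⟪ξ (s j), v⟫) atTop (𝓝 L) :=
    fun v => cauchySeq_tendsto_of_complete (hcauchy v)
  choose Λ hΛ using hconv
  have hadd : ∀ v v', Λ (v + v') = Λ v + Λ v' := by
    intro v v'
    refine tendsto_nhds_unique ?_ ((hΛ v).add (hΛ v'))
    have : (fun j => ⟪ξ (s j), v⟫ + ⟪ξ (s j), v'⟫) = fun j => ⟪ξ (s j), v + v'⟫ := by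
      funext j; rw [inner_add_right]
    rw [← this] at *
    exact (hΛ (v + v')).congr (fun j => by rw [inner_add_right])
  have hsmul : ∀ (c : ℝ) v, Λ (c • v) = c * Λ v := by
    intro c v
    refine tendsto_nhds_unique ?_ ((hΛ v).const_mul c)
    exact (hΛ (c • v)).congr (fun j => by rw [inner_smul_right])
  have hbound : ∀ v, |Λ v| ≤ R' * ‖v‖ := by
    intro v
    exact le_of_tendsto (hΛ v).abs (Eventually.of_forall fun j => hball _ _)
  set Λ' : H →L[ℝ] ℝ := LinearMap.mkContinuous
    { toFun := Λ, map_add' := hadd, map_smul' := hsmul } R'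
    (fun v => by simpa [Real.norm_eq_abs] using hbound v) with hΛ'
  refine ⟨(InnerProductSpace.toDual ℝ H).symm Λ', s, hs, fun v => ?_⟩
  have : ⟪(InnerProductSpace.toDual ℝ H).symm Λ', v⟫ = Λ' v :=
    InnerProductSpace.toDual_symm_apply
  rw [this]
  exact hΛ v

open Set MeasureTheory Filter Topology
open scoped RealInnerProductSpace ENNReal

section Selection
variable {E W : Type*} [NormedAddCommGroup E] [InnerProductSpace ℝ E] [FiniteDimensional ℝ E]
  [MeasurableSpace E] [BorelSpace E]
  [NormedAddCommGroup W] [NormedSpace ℝ W] [FiniteDimensional ℝ W]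
  [MeasurableSpace W] [BorelSpace W]

omit [InnerProductSpace ℝ E] [FiniteDimensional ℝ E] [MeasurableSpace E] [BorelSpace E] in
lemma compact_exists_min_norm {K : Set E} (hK : IsCompact K) (hne : K.Nonempty) :
    ∃ x ∈ K, ∀ z ∈ K, ‖x‖ ≤ ‖z‖ := by
  obtain ⟨x, hx, hmin⟩ := hK.exists_isMinOn hne continuous_norm.continuousOn
  exact ⟨x, hx, fun z hz => hmin hz⟩

/-- Infimum of the norm over the part of the fiber of `f` over `y` inside `X ∩ C`. -/
noncomputable def fiberInf (f : E →ᵃ[ℝ] W) (X C : Set E) (y : W) : ℝ≥0∞ :=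
  sInf ((fun x => (‖x‖₊ : ℝ≥0∞)) '' (X ∩ C ∩ ⇑f ⁻¹' {y}))

omit [FiniteDimensional ℝ E] [MeasurableSpace E] [BorelSpace E] [FiniteDimensional ℝ W] [MeasurableSpace W] [BorelSpace W] in
lemma fiberInf_eq_of_min {f : E →ᵃ[ℝ] W} {X C : Set E} {y : W} {x₀ : E}
    (hx₀ : x₀ ∈ X ∩ C ∩ ⇑f ⁻¹' {y}) (hmin : ∀ z ∈ X ∩ C ∩ ⇑f ⁻¹' {y}, ‖x₀‖ ≤ ‖z‖) :
    fiberInf f X C y = (‖x₀‖₊ : ℝ≥0∞) := by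
  refine (IsLeast.csInf_eq ⟨⟨x₀, hx₀, rfl⟩, ?_⟩)
  rintro - ⟨z, hz, rfl⟩
  show (‖x₀‖₊ : ℝ≥0∞) ≤ (‖z‖₊ : ℝ≥0∞)
  exact_mod_cast hmin z hz

omit [MeasurableSpace E] [BorelSpace E] [MeasurableSpace W] [BorelSpace W] in
lemma isCompact_fiber {f : E →ᵃ[ℝ] W} {X : Set E} (hX : IsCompact X) (C : Set E)
    (hC : IsClosed C) (y : W) : IsCompact (X ∩ C ∩ ⇑f ⁻¹' {y}) :=
  (hX.inter_right hC).inter_right (isClosed_singleton.preimage f.continuous_of_finiteDimensional)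

lemma measurable_fiberInf {f : E →ᵃ[ℝ] W} {X : Set E} (hX : IsCompact X) {C : Set E}
    (hC : IsClosed C) : Measurable (fiberInf f X C) := by
  have hfc : Continuous ⇑f := f.continuous_of_finiteDimensional
  apply measurable_of_Iic
  intro t
  rcases eq_or_ne t ⊤ with rfl | ht
  · simp
  · have hclosed : IsClosed {x : E | (‖x‖₊ : ℝ≥0∞) ≤ t} :=
      isClosed_Iic.preimage (ENNReal.continuous_coe.comp continuous_nnnorm)
    have heq : fiberInf f X C ⁻¹' Iic t = ⇑f '' (X ∩ C ∩ {x | (‖x‖₊ : ℝ≥0∞) ≤ t}) := by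
      ext y
      constructor
      · intro h
        have h' : fiberInf f X C y ≤ t := h
        have hKne : (X ∩ C ∩ ⇑f ⁻¹' {y}).Nonempty := by
          by_contra hemp
          rw [not_nonempty_iff_eq_empty] at hemp
          rw [fiberInf, hemp, image_empty, sInf_empty] at h'
          exact ht (top_le_iff.mp h')
        obtain ⟨x₀, hx₀, hmin⟩ := compact_exists_min_norm (isCompact_fiber hX C hC y) hKne
        have := fiberInf_eq_of_min hx₀ hmin
        rw [this] at h'
        exact ⟨x₀, ⟨hx₀.1, h'⟩, hx₀.2⟩
      · rintro ⟨x, ⟨hx, hxt⟩, rfl⟩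
        have : fiberInf f X C (f x) ≤ (‖x‖₊ : ℝ≥0∞) :=
          sInf_le ⟨x, ⟨hx, rfl⟩, rfl⟩
        exact this.trans hxt
    rw [heq]
    exact (((hX.inter_right hC).inter_right hclosed).image hfc).isClosed.measurableSet

open Classical in
/-- The minimal-norm selection of the fibers of `f` over `X`. -/
noncomputable def minSection (f : E →ᵃ[ℝ] W) (X : Set E) (x₀ : E) (y : W) : E :=
  if h : ∃ x ∈ X ∩ ⇑f ⁻¹' {y}, ∀ z ∈ X ∩ ⇑f ⁻¹' {y}, ‖x‖ ≤ ‖z‖ then h.choose else x₀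

omit [MeasurableSpace E] [BorelSpace E] [MeasurableSpace W] [BorelSpace W] in
lemma minSection_spec {f : E →ᵃ[ℝ] W} {X : Set E} (hX : IsCompact X) (x₀ : E) {y : W}
    (hy : y ∈ ⇑f '' X) :
    minSection f X x₀ y ∈ X ∩ ⇑f ⁻¹' {y} ∧
      ∀ z ∈ X ∩ ⇑f ⁻¹' {y}, ‖minSection f X x₀ y‖ ≤ ‖z‖ := by
  classical
  have hne : (X ∩ ⇑f ⁻¹' {y}).Nonempty := by
    obtain ⟨x, hx, rfl⟩ := hy
    exact ⟨x, hx, rfl⟩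
  have hcomp : IsCompact (X ∩ ⇑f ⁻¹' {y}) :=
    hX.inter_right (isClosed_singleton.preimage f.continuous_of_finiteDimensional)
  have h : ∃ x ∈ X ∩ ⇑f ⁻¹' {y}, ∀ z ∈ X ∩ ⇑f ⁻¹' {y}, ‖x‖ ≤ ‖z‖ :=
    compact_exists_min_norm hcomp hne
  rw [minSection, dif_pos h]
  exact ⟨h.choose_spec.1, h.choose_spec.2⟩

omit [FiniteDimensional ℝ E] [MeasurableSpace E] [BorelSpace E] [FiniteDimensional ℝ W] [MeasurableSpace W] [BorelSpace W] in
lemma minSection_of_not_mem {f : E →ᵃ[ℝ] W} {X : Set E} (x₀ : E) {y : W}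
    (hy : y ∉ ⇑f '' X) : minSection f X x₀ y = x₀ := by
  classical
  rw [minSection, dif_neg]
  rintro ⟨x, ⟨hxX, hxy⟩, -⟩
  exact hy ⟨x, hxX, hxy⟩

omit [FiniteDimensional ℝ E] [MeasurableSpace E] [BorelSpace E] [FiniteDimensional ℝ W]
  [MeasurableSpace W] [BorelSpace W] in
lemma min_norm_unique {f : E →ᵃ[ℝ] W} {X : Set E} (hXconv : Convex ℝ X) {y : W} {x x' : E}
    (hx : x ∈ X ∩ ⇑f ⁻¹' {y}) (hx' : x' ∈ X ∩ ⇑f ⁻¹' {y})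
    (hmin : ∀ z ∈ X ∩ ⇑f ⁻¹' {y}, ‖x‖ ≤ ‖z‖) (hmin' : ∀ z ∈ X ∩ ⇑f ⁻¹' {y}, ‖x'‖ ≤ ‖z‖) :
    x = x' := by
  by_contra hne
  have hxx' : ‖x‖ = ‖x'‖ := le_antisymm (hmin x' hx') (hmin' x hx)
  set m : E := (2⁻¹ : ℝ) • x + (2⁻¹ : ℝ) • x' with hm
  have hmX : m ∈ X := hXconv hx.1 hx'.1 (by norm_num) (by norm_num) (by norm_num)
  have hmfib : f m = y := by
    rw [hm, Convex.combo_affine_apply (by norm_num : (2⁻¹ : ℝ) + 2⁻¹ = 1)]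
    have h1 : f x = y := hx.2
    have h2 : f x' = y := hx'.2
    rw [h1, h2, ← add_smul]
    norm_num
  have hlt : ‖m‖ < ‖x‖ :=
    norm_combo_lt_of_ne le_rfl hxx'.ge hne (by norm_num) (by norm_num) (by norm_num)
  exact absurd (hmin m ⟨hmX, hmfib⟩) (not_le.mpr hlt)

lemma measurable_minSection {f : E →ᵃ[ℝ] W} {X : Set E} (hX : IsCompact X)
    (hXconv : Convex ℝ X) (x₀ : E) : Measurable (minSection f X x₀) := by
  have hfc : Continuous ⇑f := f.continuous_of_finiteDimensional
  have hTm : MeasurableSet (⇑f '' X) := (hX.image hfc).isClosed.measurableSet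
  apply measurable_of_isClosed
  intro C hC
  have hA : MeasurableSet {y | fiberInf f X C y ≤ fiberInf f X univ y} :=
    measurableSet_le (measurable_fiberInf hX hC) (measurable_fiberInf hX isClosed_univ)
  have key : ∀ y ∈ ⇑f '' X,
      (minSection f X x₀ y ∈ C ↔ fiberInf f X C y ≤ fiberInf f X univ y) := by
    intro y hy
    obtain ⟨hmem, hmin⟩ := minSection_spec hX x₀ hy
    have hXuniv : X ∩ univ ∩ ⇑f ⁻¹' {y} = X ∩ ⇑f ⁻¹' {y} := by rw [inter_univ]
    have hU : fiberInf f X univ y = (‖minSection f X x₀ y‖₊ : ℝ≥0∞) := by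
      apply fiberInf_eq_of_min
      · rw [hXuniv]; exact hmem
      · rw [hXuniv]; exact hmin
    constructor
    · intro hC'
      rw [hU]
      exact sInf_le ⟨minSection f X x₀ y, ⟨⟨hmem.1, hC'⟩, hmem.2⟩, rfl⟩
    · intro hle
      rw [hU] at hle
      have hKne : (X ∩ C ∩ ⇑f ⁻¹' {y}).Nonempty := by
        by_contra hemp
        rw [not_nonempty_iff_eq_empty] at hemp
        rw [fiberInf, hemp, image_empty, sInf_empty] at hle
        exact ENNReal.coe_ne_top (top_le_iff.mp hle)
      obtain ⟨x₁, hx₁, hmin₁⟩ := compact_exists_min_norm (isCompact_fiber hX C hC y) hKne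
      have hinf : fiberInf f X C y = (‖x₁‖₊ : ℝ≥0∞) := fiberInf_eq_of_min hx₁ hmin₁
      rw [hinf] at hle
      have hnle : ‖x₁‖ ≤ ‖minSection f X x₀ y‖ := by exact_mod_cast hle
      have hglobal : ∀ z ∈ X ∩ ⇑f ⁻¹' {y}, ‖x₁‖ ≤ ‖z‖ :=
        fun z hz => hnle.trans (hmin z hz)
      have : x₁ = minSection f X x₀ y :=
        min_norm_unique hXconv ⟨hx₁.1.1, hx₁.2⟩ hmem hglobal hmin
      rw [← this]
      exact hx₁.1.2
  by_cases hx₀C : x₀ ∈ C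
  · have hset : minSection f X x₀ ⁻¹' C =
        (⇑f '' X ∩ {y | fiberInf f X C y ≤ fiberInf f X univ y}) ∪ (⇑f '' X)ᶜ := by
      ext y
      by_cases hy : y ∈ ⇑f '' X
      · simp only [mem_preimage, mem_union, mem_inter_iff, mem_compl_iff, hy, mem_setOf_eq,
          not_true_eq_false, or_false, true_and]
        exact key y hy
      · simp only [mem_preimage, mem_union, mem_inter_iff, mem_compl_iff, hy, mem_setOf_eq,
          not_false_eq_true, or_true, iff_true, false_and, minSection_of_not_mem x₀ hy]
        exact hx₀C
    rw [hset]
    exact (hTm.inter hA).union hTm.compl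
  · have hset : minSection f X x₀ ⁻¹' C =
        ⇑f '' X ∩ {y | fiberInf f X C y ≤ fiberInf f X univ y} := by
      ext y
      by_cases hy : y ∈ ⇑f '' X
      · simp only [mem_preimage, mem_inter_iff, hy, mem_setOf_eq, true_and]
        exact key y hy
      · simp only [mem_preimage, mem_inter_iff, hy, mem_setOf_eq, false_and, iff_false,
          minSection_of_not_mem x₀ hy]
        exact hx₀C
    rw [hset]
    exact hTm.inter hA
end Selection

open Set MeasureTheory Filter Topology
open scoped RealInnerProductSpace ENNReal

section FiberSup
variable {E W : Type*} [NormedAddCommGroup E] [InnerProductSpace ℝ E] [FiniteDimensional ℝ E]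
  [MeasurableSpace E] [BorelSpace E]
  [NormedAddCommGroup W] [NormedSpace ℝ W] [FiniteDimensional ℝ W]
  [MeasurableSpace W] [BorelSpace W]

/-- The support function of the fiber of `f : X → W` over `y`, in direction `u`. -/
noncomputable def fiberSup (f : E →ᵃ[ℝ] W) (X : Set E) (u : E) (y : W) : ℝ :=
  sSup ((fun x => ⟪u, x⟫) '' (X ∩ ⇑f ⁻¹' {y}))

omit [MeasurableSpace E] [BorelSpace E] [MeasurableSpace W] [BorelSpace W] in
lemma le_fiberSup {f : E →ᵃ[ℝ] W} {X : Set E} (hX : IsCompact X) {u : E} {y : W} {x : E}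
    (hx : x ∈ X ∩ ⇑f ⁻¹' {y}) : ⟪u, x⟫ ≤ fiberSup f X u y := by
  refine le_csSup ?_ ⟨x, hx, rfl⟩
  exact ((hX.inter_right
    (isClosed_singleton.preimage f.continuous_of_finiteDimensional)).image
      (continuous_const.inner continuous_id)).bddAbove

omit [MeasurableSpace E] [BorelSpace E] [MeasurableSpace W] [BorelSpace W] in
lemma fiberSup_exists_max {f : E →ᵃ[ℝ] W} {X : Set E} (hX : IsCompact X) {y : W}
    (hy : y ∈ ⇑f '' X) (u : E) :
    ∃ x ∈ X ∩ ⇑f ⁻¹' {y}, fiberSup f X u y = ⟪u, x⟫ := by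
  have hne : (X ∩ ⇑f ⁻¹' {y}).Nonempty := by
    obtain ⟨x, hx, rfl⟩ := hy; exact ⟨x, hx, rfl⟩
  have hcomp : IsCompact (X ∩ ⇑f ⁻¹' {y}) :=
    hX.inter_right (isClosed_singleton.preimage f.continuous_of_finiteDimensional)
  obtain ⟨x, hx, hmax⟩ := hcomp.exists_isMaxOn (f := fun x => ⟪u, x⟫) hne
    ((continuous_const.inner continuous_id).continuousOn)
  refine ⟨x, hx, ?_⟩
  apply IsGreatest.csSup_eq
  exact ⟨⟨x, hx, rfl⟩, by rintro - ⟨z, hz, rfl⟩; exact hmax hz⟩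

omit [MeasurableSpace E] [BorelSpace E] [MeasurableSpace W] [BorelSpace W] in
lemma fiberSup_of_not_mem {f : E →ᵃ[ℝ] W} {X : Set E} {y : W} (hy : y ∉ ⇑f '' X) (u : E) :
    fiberSup f X u y = 0 := by
  have : X ∩ ⇑f ⁻¹' {y} = ∅ := by
    rw [eq_empty_iff_forall_notMem]
    rintro x ⟨hxX, hxy⟩
    exact hy ⟨x, hxX, hxy⟩
  rw [fiberSup, this, image_empty, Real.sSup_empty]

omit [MeasurableSpace E] [BorelSpace E] in
lemma measurable_fiberSup {f : E →ᵃ[ℝ] W} {X : Set E} (hX : IsCompact X) (u : E) :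
    Measurable (fiberSup f X u) := by
  have hfc : Continuous ⇑f := f.continuous_of_finiteDimensional
  apply measurable_of_Ici
  intro t
  have heq : fiberSup f X u ⁻¹' Ici t =
      ⇑f '' (X ∩ {x | t ≤ ⟪u, x⟫}) ∪ (if t ≤ 0 then (⇑f '' X)ᶜ else ∅) := by
    ext y
    by_cases hy : y ∈ ⇑f '' X
    · obtain ⟨xm, hxm, hmax⟩ := fiberSup_exists_max hX hy u
      constructor
      · intro h
        have ht : t ≤ ⟪u, xm⟫ := by rw [← hmax]; exact h
        exact Or.inl ⟨xm, ⟨hxm.1, ht⟩, hxm.2⟩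
      · intro h
        rcases h with ⟨x, ⟨hxX, hxt⟩, rfl⟩ | h
        · exact hxt.trans (le_fiberSup hX ⟨hxX, rfl⟩)
        · split at h
          · exact absurd hy h
          · exact absurd h (notMem_empty y)
    · have hval : fiberSup f X u y = 0 := fiberSup_of_not_mem hy u
      simp only [mem_preimage, hval, mem_Ici, mem_union, mem_compl_iff]
      constructor
      · intro ht
        right
        rw [if_pos ht]
        exact hy
      · rintro (⟨x, ⟨hxX, -⟩, rfl⟩ | h)
        · exact absurd ⟨x, hxX, rfl⟩ hy
        · split at h
          · assumption
          · exact absurd h (notMem_empty y)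
  rw [heq]
  refine MeasurableSet.union ?_ ?_
  · refine ((hX.inter_right ?_).image hfc).isClosed.measurableSet
    exact isClosed_le continuous_const (continuous_const.inner continuous_id)
  · split
    · exact ((hX.image hfc).isClosed.measurableSet).compl
    · exact MeasurableSet.empty

omit [MeasurableSpace E] [BorelSpace E] [MeasurableSpace W] [BorelSpace W] in
lemma abs_fiberSup_le {f : E →ᵃ[ℝ] W} {X : Set E} (hX : IsCompact X) {R : ℝ}
    (hR : ∀ x ∈ X, ‖x‖ ≤ R) (hR0 : 0 ≤ R) (u : E) (y : W) :
    |fiberSup f X u y| ≤ ‖u‖ * R := by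
  have hub : ∀ x ∈ X ∩ ⇑f ⁻¹' {y}, |⟪u, x⟫| ≤ ‖u‖ * R := by
    intro x hx
    calc |⟪u, x⟫| ≤ ‖u‖ * ‖x‖ := abs_real_inner_le_norm _ _
    _ ≤ ‖u‖ * R := mul_le_mul_of_nonneg_left (hR x hx.1) (norm_nonneg _)
  rw [abs_le]
  constructor
  · by_cases hy : y ∈ ⇑f '' X
    · obtain ⟨x, hx, rfl⟩ := hy
      have h1 : -(‖u‖ * R) ≤ ⟪u, x⟫ := neg_le_of_abs_le (hub x ⟨hx, rfl⟩)
      exact h1.trans (le_fiberSup hX ⟨hx, rfl⟩)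
    · rw [fiberSup_of_not_mem hy]
      simp [mul_nonneg (norm_nonneg u) hR0]
  · apply Real.sSup_le _ (mul_nonneg (norm_nonneg u) hR0)
    rintro - ⟨x, hx, rfl⟩
    exact le_of_abs_le (hub x hx)

omit [MeasurableSpace E] [BorelSpace E] [MeasurableSpace W] [BorelSpace W] in
lemma fiberSup_le_fiberSup_add {f : E →ᵃ[ℝ] W} {X : Set E} (hX : IsCompact X) {R : ℝ}
    (hR : ∀ x ∈ X, ‖x‖ ≤ R) {y : W} (hy : y ∈ ⇑f '' X) (u u' : E) :
    fiberSup f X u' y ≤ fiberSup f X u y + ‖u' - u‖ * R := by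
  have hne : (X ∩ ⇑f ⁻¹' {y}).Nonempty := by
    obtain ⟨x, hx, rfl⟩ := hy; exact ⟨x, hx, rfl⟩
  apply csSup_le (hne.image fun x => ⟪u', x⟫)
  rintro - ⟨x, hx, rfl⟩
  show ⟪u', x⟫ ≤ fiberSup f X u y + ‖u' - u‖ * R
  have h1 : ⟪u', x⟫ = ⟪u, x⟫ + ⟪u' - u, x⟫ := by
    rw [← inner_add_left]; congr 1; abel
  rw [h1]
  have h2 : ⟪u' - u, x⟫ ≤ ‖u' - u‖ * R := by
    calc ⟪u' - u, x⟫ ≤ |⟪u' - u, x⟫| := le_abs_self _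
    _ ≤ ‖u' - u‖ * ‖x‖ := abs_real_inner_le_norm _ _
    _ ≤ ‖u' - u‖ * R := mul_le_mul_of_nonneg_left (hR x hx.1) (norm_nonneg _)
  exact add_le_add (le_fiberSup hX hx) h2
end FiberSup

open Set MeasureTheory Pointwise

/-- The fiber body `Σf` of a map `f` on a set `X`, with respect to a measure `μ`
on the target: the set of averages (w.r.t. `μ`) over `f(X)` of Borel measurable
sections of `f : X → f(X)`. -/
noncomputable def fiberBody {V W : Type*} [NormedAddCommGroup V] [NormedSpace ℝ V]
    [MeasurableSpace V] [MeasurableSpace W]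
    (μ : Measure W) (f : V → W) (X : Set V) : Set V :=
  {x | ∃ γ : W → V, Measurable γ ∧ (∀ y ∈ f '' X, γ y ∈ X ∧ f (γ y) = y) ∧
        x = (μ (f '' X)).toReal⁻¹ • ∫ y in f '' X, γ y ∂μ}

open Filter Topology
open scoped RealInnerProductSpace ENNReal

section Main
variable {E W : Type*} [NormedAddCommGroup E] [InnerProductSpace ℝ E] [FiniteDimensional ℝ E]
  [MeasurableSpace E] [BorelSpace E]
  [NormedAddCommGroup W] [NormedSpace ℝ W] [FiniteDimensional ℝ W]
  [MeasurableSpace W] [BorelSpace W]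

set_option synthInstance.maxHeartbeats 1000000 in
set_option maxHeartbeats 1000000 in
theorem fiberBody_spec_of_inner
    (X : Set E) (hXne : X.Nonempty) (hXconv : Convex ℝ X) (hXcomp : IsCompact X)
    (f : E →ᵃ[ℝ] W) (μ : Measure W)
    (hpos : 0 < μ (⇑f '' X)) (hfin : μ (⇑f '' X) < ⊤) :
    (fiberBody μ (⇑f) X).Nonempty ∧ Convex ℝ (fiberBody μ (⇑f) X) ∧
      IsCompact (fiberBody μ (⇑f) X) := by
  classical
  obtain ⟨x₀, hx₀X⟩ := hXne
  have hfc : Continuous ⇑f := f.continuous_of_finiteDimensional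
  have hTcomp : IsCompact (⇑f '' X) := hXcomp.image hfc
  have hTm : MeasurableSet (⇑f '' X) := hTcomp.isClosed.measurableSet
  haveI : IsFiniteMeasure (μ.restrict (⇑f '' X)) :=
    ⟨by rw [Measure.restrict_apply_univ]; exact hfin⟩
  obtain ⟨R₀, hR₀⟩ := isBounded_iff_forall_norm_le.mp hXcomp.isBounded
  have hR0 : (0:ℝ) ≤ max R₀ 0 := le_max_right _ _
  set R : ℝ := max R₀ 0 with hRdef
  have hR : ∀ x ∈ X, ‖x‖ ≤ R := fun x hx => (hR₀ x hx).trans (le_max_left _ _)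
  have hc0 : (0:ℝ) < (μ (⇑f '' X)).toReal := ENNReal.toReal_pos hpos.ne' hfin.ne
  have hsec_int : ∀ γ : W → E, Measurable γ → (∀ y ∈ ⇑f '' X, γ y ∈ X) →
      Integrable γ (μ.restrict (⇑f '' X)) := by
    intro γ hm hmem
    refine Integrable.mono' (integrable_const R) hm.aestronglyMeasurable ?_
    filter_upwards [ae_restrict_mem hTm] with y hy
    exact hR _ (hmem y hy)
  have hsub : fiberBody μ (⇑f) X ⊆ X := by
    rintro x ⟨γ, hγm, hγsec, rfl⟩
    have hint : IntegrableOn γ (⇑f '' X) μ := hsec_int γ hγm (fun y hy => (hγsec y hy).1)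
    have havg := hXconv.set_average_mem hXcomp.isClosed hpos.ne' hfin.ne
      (by filter_upwards [ae_restrict_mem hTm] with y hy; exact (hγsec y hy).1) hint
    rwa [setAverage_eq] at havg
  have hmin_sec : ∀ y ∈ ⇑f '' X, minSection f X x₀ y ∈ X ∧ f (minSection f X x₀ y) = y := by
    intro y hy
    obtain ⟨⟨h1, h2⟩, -⟩ := minSection_spec hXcomp x₀ hy
    exact ⟨h1, h2⟩
  have hne : (fiberBody μ (⇑f) X).Nonempty :=
    ⟨_, minSection f X x₀, measurable_minSection hXcomp hXconv x₀, hmin_sec, rfl⟩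
  have hconv : Convex ℝ (fiberBody μ (⇑f) X) := by
    rintro x₁ ⟨γ₁, hm₁, hs₁, rfl⟩ x₂ ⟨γ₂, hm₂, hs₂, rfl⟩ a b ha hb hab
    have hi₁ : Integrable γ₁ (μ.restrict (⇑f '' X)) := hsec_int γ₁ hm₁ fun y hy => (hs₁ y hy).1
    have hi₂ : Integrable γ₂ (μ.restrict (⇑f '' X)) := hsec_int γ₂ hm₂ fun y hy => (hs₂ y hy).1
    refine ⟨fun y => a • γ₁ y + b • γ₂ y, (hm₁.const_smul a).add (hm₂.const_smul b), ?_, ?_⟩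
    · intro y hy
      obtain ⟨hX1, hf1⟩ := hs₁ y hy
      obtain ⟨hX2, hf2⟩ := hs₂ y hy
      refine ⟨hXconv hX1 hX2 ha hb hab, ?_⟩
      rw [Convex.combo_affine_apply hab, hf1, hf2, ← add_smul, hab, one_smul]
    · have e : ∫ y in ⇑f '' X, (a • γ₁ y + b • γ₂ y) ∂μ
          = a • ∫ y in ⇑f '' X, γ₁ y ∂μ + b • ∫ y in ⇑f '' X, γ₂ y ∂μ := by
        have hia : Integrable (fun y => a • γ₁ y) (μ.restrict (⇑f '' X)) := hi₁.smul a
        have hib : Integrable (fun y => b • γ₂ y) (μ.restrict (⇑f '' X)) := hi₂.smul b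
        rw [integral_add hia hib, integral_smul, integral_smul]
      rw [e]
      module
  refine ⟨hne, hconv, ?_⟩
  have hclosed : IsClosed (fiberBody μ (⇑f) X) := by
    rw [← isSeqClosed_iff_isClosed]
    intro xs x hxs hlim
    choose γ hγm hγsec hγeq using hxs
    have hγint : ∀ n, Integrable (γ n) (μ.restrict (⇑f '' X)) :=
      fun n => hsec_int _ (hγm n) (fun y hy => (hγsec n y hy).1)
    have hmemLp : ∀ n, MemLp (γ n) 2 (μ.restrict (⇑f '' X)) := fun n =>
      MemLp.of_bound (hγm n).aestronglyMeasurable R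
        (by filter_upwards [ae_restrict_mem hTm] with y hy; exact hR _ ((hγsec n y hy).1))
    set ξ : ℕ → Lp E 2 (μ.restrict (⇑f '' X)) := fun n => (hmemLp n).toLp (γ n) with hξdef
    have hξbd : ∀ n, ‖ξ n‖ ≤
        ((μ.restrict (⇑f '' X)) univ ^ (2:ℝ≥0∞).toReal⁻¹ * ENNReal.ofReal R).toReal := by
      intro n
      rw [hξdef, Lp.norm_toLp]
      refine ENNReal.toReal_mono ?_ ?_
      · exact ENNReal.mul_ne_top
          (ENNReal.rpow_ne_top_of_nonneg (by positivity) (measure_ne_top _ _))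
          ENNReal.ofReal_ne_top
      · exact eLpNorm_le_of_ae_bound
          (by filter_upwards [ae_restrict_mem hTm] with y hy; exact hR _ ((hγsec n y hy).1))
    haveI : MeasureTheory.IsSeparable (μ.restrict (⇑f '' X)) := inferInstance
    haveI : Fact ((2:ℝ≥0∞) ≠ ⊤) := ⟨by norm_num⟩
    haveI : SecondCountableTopology (Lp E 2 (μ.restrict (⇑f '' X))) :=
      MeasureTheory.Lp.SecondCountableTopology
    obtain ⟨g, s, hs, hgw⟩ := exists_subseq_weak_tendsto ξ _ hξbd
    have hgmem : MemLp (⇑g) 2 (μ.restrict (⇑f '' X)) := Lp.memLp g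
    have hg'int : Integrable (⇑g) (μ.restrict (⇑f '' X)) := hgmem.integrable (by norm_num)
    have hg_test : ∀ (A : Set W), MeasurableSet A → ∀ u : E,
        Tendsto (fun j => ∫ y in A, ⟪u, γ (s j) y⟫ ∂(μ.restrict (⇑f '' X))) atTop
          (𝓝 (∫ y in A, ⟪u, g y⟫ ∂(μ.restrict (⇑f '' X)))) := by
      intro A hA u
      have hw := hgw (indicatorConstLp 2 hA (measure_ne_top _ A) u)
      have h1 : ∀ j, ⟪ξ (s j), indicatorConstLp 2 hA (measure_ne_top _ A) u⟫
          = ∫ y in A, ⟪u, γ (s j) y⟫ ∂(μ.restrict (⇑f '' X)) := by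
        intro j
        rw [real_inner_comm, L2.inner_indicatorConstLp_eq_setIntegral_inner ℝ]
        refine setIntegral_congr_ae hA ?_
        filter_upwards [(hmemLp (s j)).coeFn_toLp] with y hy _
        rw [hξdef]
        simp only
        rw [hy]
      have h2 : ⟪g, indicatorConstLp 2 hA (measure_ne_top _ A) u⟫
          = ∫ y in A, ⟪u, g y⟫ ∂(μ.restrict (⇑f '' X)) := by
        rw [real_inner_comm, L2.inner_indicatorConstLp_eq_setIntegral_inner ℝ]
      rw [h2] at hw
      exact hw.congr h1
    have hxs_sub : Tendsto (fun j => xs (s j)) atTop (𝓝 x) := hlim.comp hs.tendsto_atTop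
    have hIlim : Tendsto (fun j => ∫ y in ⇑f '' X, γ (s j) y ∂μ) atTop
        (𝓝 ((μ (⇑f '' X)).toReal • x)) := by
      have he : ∀ j, ∫ y in ⇑f '' X, γ (s j) y ∂μ = (μ (⇑f '' X)).toReal • xs (s j) := by
        intro j
        rw [hγeq (s j), smul_smul, mul_inv_cancel₀ hc0.ne', one_smul]
      exact Tendsto.congr (fun j => (he j).symm) (hxs_sub.const_smul ((μ (⇑f '' X)).toReal))
    have hgx : (μ (⇑f '' X)).toReal • x = ∫ y in ⇑f '' X, g y ∂μ := by
      refine ext_inner_left ℝ fun u => ?_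
      have h1 : Tendsto (fun j => ⟪u, ∫ y in ⇑f '' X, γ (s j) y ∂μ⟫) atTop
          (𝓝 ⟪u, (μ (⇑f '' X)).toReal • x⟫) := tendsto_const_nhds.inner hIlim
      have h2 : Tendsto (fun j => ⟪u, ∫ y in ⇑f '' X, γ (s j) y ∂μ⟫) atTop
          (𝓝 ⟪u, ∫ y in ⇑f '' X, g y ∂μ⟫) := by
        have h3 := hg_test univ MeasurableSet.univ u
        simp only [setIntegral_univ] at h3
        have h4 : ∀ j, ∫ y, ⟪u, γ (s j) y⟫ ∂(μ.restrict (⇑f '' X))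
            = ⟪u, ∫ y in ⇑f '' X, γ (s j) y ∂μ⟫ := fun j => integral_inner (hγint (s j)) u
        have h5 : ∫ y, ⟪u, g y⟫ ∂(μ.restrict (⇑f '' X)) = ⟪u, ∫ y in ⇑f '' X, g y ∂μ⟫ :=
          integral_inner hg'int u
        rw [h5] at h3
        exact h3.congr h4
      exact tendsto_nhds_unique h1 h2
    have hsupμ : ∀ u : E, ∀ᵐ y ∂(μ.restrict (⇑f '' X)), ⟪u, g y⟫ ≤ fiberSup f X u y := by
      intro u
      have hfs_int : Integrable (fiberSup f X u) (μ.restrict (⇑f '' X)) := by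
        refine Integrable.mono' (integrable_const (‖u‖ * R))
          (measurable_fiberSup hXcomp u).aestronglyMeasurable ?_
        exact Eventually.of_forall fun y => by
          rw [Real.norm_eq_abs]; exact abs_fiberSup_le hXcomp hR hR0 u y
      have hinner_int : Integrable (fun y => ⟪u, g y⟫) (μ.restrict (⇑f '' X)) :=
        hg'int.const_inner u
      have h0 : ∀ A, MeasurableSet A → (μ.restrict (⇑f '' X)) A < ⊤ →
          0 ≤ ∫ y in A, (fiberSup f X u y - ⟪u, g y⟫) ∂(μ.restrict (⇑f '' X)) := by
        intro A hA _
        rw [integral_sub hfs_int.integrableOn hinner_int.integrableOn, sub_nonneg]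
        have hj : ∀ j, ∫ y in A, ⟪u, γ (s j) y⟫ ∂(μ.restrict (⇑f '' X))
            ≤ ∫ y in A, fiberSup f X u y ∂(μ.restrict (⇑f '' X)) := by
          intro j
          refine integral_mono_ae ((hγint (s j)).const_inner u).integrableOn
            hfs_int.integrableOn ?_
          filter_upwards [ae_restrict_of_ae (ae_restrict_mem hTm)] with y hy
          exact le_fiberSup hXcomp ⟨(hγsec (s j) y hy).1, (hγsec (s j) y hy).2⟩
        exact le_of_tendsto (hg_test A hA u) (Eventually.of_forall hj)
      have hae0 := ae_nonneg_of_forall_setIntegral_nonneg (hfs_int.sub hinner_int) h0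
      filter_upwards [hae0] with y hy
      exact sub_nonneg.mp hy
    obtain ⟨D, hDc, hDd⟩ := TopologicalSpace.exists_countable_dense E
    have haeD : ∀ᵐ y ∂(μ.restrict (⇑f '' X)), ∀ u ∈ D, ⟪u, g y⟫ ≤ fiberSup f X u y :=
      (ae_ball_iff hDc).mpr fun u _ => hsupμ u
    have haefib : ∀ᵐ y ∂(μ.restrict (⇑f '' X)), g y ∈ X ∧ f (g y) = y := by
      filter_upwards [haeD, ae_restrict_mem hTm] with y hyD hyT
      have hK : g y ∈ X ∩ ⇑f ⁻¹' {y} := by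
        by_contra hv
        have hKconv : Convex ℝ (X ∩ ⇑f ⁻¹' {y}) :=
          hXconv.inter ((convex_singleton y).affine_preimage f)
        have hKclosed : IsClosed (X ∩ ⇑f ⁻¹' {y}) :=
          (hXcomp.inter_right (isClosed_singleton.preimage hfc)).isClosed
        obtain ⟨ℓ, r, hr1, hr2⟩ := geometric_hahn_banach_point_closed hKconv hKclosed hv
        set u₀ : E := -((InnerProductSpace.toDual ℝ E).symm ℓ) with hu₀def
        have hu₀ : ∀ z : E, ⟪u₀, z⟫ = -(ℓ z) := by
          intro z
          rw [hu₀def, inner_neg_left, InnerProductSpace.toDual_symm_apply]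
        have hsup_lt : fiberSup f X u₀ y < ⟪u₀, g y⟫ := by
          obtain ⟨xm, hxm, hfeq⟩ := fiberSup_exists_max hXcomp hyT u₀
          rw [hfeq, hu₀, hu₀]
          have hx1 := hr2 xm hxm
          linarith
        have hδ : 0 < ⟪u₀, g y⟫ - fiberSup f X u₀ y := sub_pos.mpr hsup_lt
        set δ : ℝ := ⟪u₀, g y⟫ - fiberSup f X u₀ y with hδdef
        have hc2 : (0:ℝ) < 2 * (R + ‖g y‖ + 1) := by positivity
        obtain ⟨u', hu'D, hu'close⟩ :=
          Metric.mem_closure_iff.mp (hDd u₀) (δ / (2 * (R + ‖g y‖ + 1))) (by positivity)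
        have hcontr := hyD u' hu'D
        have hb1 : fiberSup f X u' y ≤ fiberSup f X u₀ y + ‖u' - u₀‖ * R :=
          fiberSup_le_fiberSup_add hXcomp hR hyT u₀ u'
        have hb2 : ⟪u₀, g y⟫ - ‖u' - u₀‖ * ‖g y‖ ≤ ⟪u', g y⟫ := by
          have heq : ⟪u', g y⟫ = ⟪u₀, g y⟫ + ⟪u' - u₀, g y⟫ := by
            rw [← inner_add_left]; congr 1; abel
          have habs := abs_real_inner_le_norm (u' - u₀) (g y)
          have hneg := neg_abs_le ⟪u' - u₀, (g y : E)⟫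
          rw [heq]
          nlinarith
        have hdist' : ‖u' - u₀‖ * (2 * (R + ‖g y‖ + 1)) < δ := by
          rw [← lt_div_iff₀ hc2]
          rw [← dist_eq_norm, dist_comm]
          exact hu'close
        nlinarith [norm_nonneg (g y : E), norm_nonneg (u' - u₀),
          mul_nonneg (norm_nonneg (u' - u₀)) hR0,
          mul_nonneg (norm_nonneg (u' - u₀)) (norm_nonneg (g y : E))]
      exact ⟨hK.1, hK.2⟩
    set gm : W → E := (Lp.aestronglyMeasurable g).mk ⇑g with hgmdef
    have hgm_sm : StronglyMeasurable gm := (Lp.aestronglyMeasurable g).stronglyMeasurable_mk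
    have hgm_ae : ⇑g =ᵐ[μ.restrict (⇑f '' X)] gm := (Lp.aestronglyMeasurable g).ae_eq_mk
    have hgm_meas : Measurable gm := hgm_sm.measurable
    have hSm : MeasurableSet {y | gm y ∈ X ∧ f (gm y) = y} := by
      have h1 : MeasurableSet {y | gm y ∈ X} := hgm_meas hXcomp.isClosed.measurableSet
      have h2 : MeasurableSet {y | f (gm y) = y} :=
        measurableSet_eq_fun (hfc.measurable.comp hgm_meas) measurable_id
      exact h1.inter h2
    set γf : W → E := ({y | gm y ∈ X ∧ f (gm y) = y}).piecewise gm (minSection f X x₀)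
      with hγfdef
    have hγfm : Measurable γf :=
      Measurable.piecewise hSm hgm_meas (measurable_minSection hXcomp hXconv x₀)
    have hγfs : ∀ y ∈ ⇑f '' X, γf y ∈ X ∧ f (γf y) = y := by
      intro y hy
      by_cases hyS : y ∈ {y | gm y ∈ X ∧ f (gm y) = y}
      · rw [hγfdef, Set.piecewise_eq_of_mem _ _ _ hyS]
        exact hyS
      · rw [hγfdef, Set.piecewise_eq_of_notMem _ _ _ hyS]
        exact hmin_sec y hy
    have hγf_ae : γf =ᵐ[μ.restrict (⇑f '' X)] ⇑g := by
      filter_upwards [haefib, hgm_ae] with y hy1 hy2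
      have hyS : y ∈ {y | gm y ∈ X ∧ f (gm y) = y} := by
        constructor
        · rw [← hy2]; exact hy1.1
        · rw [← hy2]; exact hy1.2
      rw [hγfdef, Set.piecewise_eq_of_mem _ _ _ hyS, ← hy2]
    refine ⟨γf, hγfm, hγfs, ?_⟩
    have hint_eq : ∫ y in ⇑f '' X, γf y ∂μ = ∫ y in ⇑f '' X, g y ∂μ :=
      integral_congr_ae hγf_ae
    calc x = (μ (⇑f '' X)).toReal⁻¹ • ((μ (⇑f '' X)).toReal • x) := by
          rw [smul_smul, inv_mul_cancel₀ hc0.ne', one_smul]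
    _ = (μ (⇑f '' X)).toReal⁻¹ • ∫ y in ⇑f '' X, γf y ∂μ := by rw [hgx, hint_eq]
  exact Metric.isCompact_of_isClosed_isBounded hclosed (hXcomp.isBounded.subset hsub)
end Main
section Transport
variable {V E' W : Type*}
  [NormedAddCommGroup V] [NormedSpace ℝ V] [FiniteDimensional ℝ V]
  [MeasurableSpace V] [BorelSpace V]
  [NormedAddCommGroup E'] [NormedSpace ℝ E'] [FiniteDimensional ℝ E']
  [MeasurableSpace E'] [BorelSpace E']
  [NormedAddCommGroup W] [NormedSpace ℝ W] [FiniteDimensional ℝ W]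
  [MeasurableSpace W] [BorelSpace W]

lemma fiberBody_image_subset (e : V ≃L[ℝ] E') (f : V →ᵃ[ℝ] W) (X : Set V)
    (hXcomp : IsCompact X) (μ : Measure W) (hfin : μ (⇑f '' X) < ⊤) :
    ⇑e '' fiberBody μ (⇑f) X ⊆ fiberBody μ (⇑f ∘ ⇑e.symm) (⇑e '' X) := by
  have hcomp_img : (⇑f ∘ ⇑e.symm) '' (⇑e '' X) = ⇑f '' X := by
    rw [← image_comp]
    exact image_congr fun x _ => by simp
  have hTm : MeasurableSet (⇑f '' X) :=
    (hXcomp.image f.continuous_of_finiteDimensional).isClosed.measurableSet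
  haveI : IsFiniteMeasure (μ.restrict (⇑f '' X)) :=
    ⟨by rw [Measure.restrict_apply_univ]; exact hfin⟩
  obtain ⟨R₀, hR₀⟩ := isBounded_iff_forall_norm_le.mp hXcomp.isBounded
  rintro - ⟨x, ⟨γ, hγm, hγs, rfl⟩, rfl⟩
  have hint : Integrable γ (μ.restrict (⇑f '' X)) := by
    refine Integrable.mono' (integrable_const (max R₀ 0)) hγm.aestronglyMeasurable ?_
    filter_upwards [ae_restrict_mem hTm] with y hy
    exact (hR₀ _ ((hγs y hy).1)).trans (le_max_left _ _)
  refine ⟨⇑e ∘ γ, e.continuous.measurable.comp hγm, ?_, ?_⟩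
  · intro y hy
    rw [hcomp_img] at hy
    refine ⟨mem_image_of_mem _ ((hγs y hy).1), ?_⟩
    show f (e.symm (e (γ y))) = y
    rw [e.symm_apply_apply]
    exact (hγs y hy).2
  · rw [hcomp_img, _root_.map_smul]
    congr 1
    have h2 := ((e : V →L[ℝ] E').integral_comp_comm hint).symm
    exact h2
end Transport

/-- For an affine map `f : X → Y` between nonempty convex compact
sets in finite-dimensional real vector spaces, and a (σ-finite) nonzero
translation-invariant Borel measure `μ` on the affine hull of `f(X)`
(so `0 < μ(f(X)) < ∞`), the fiber body `Σf` is a nonempty convex compact subset of `V`. -/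
theorem fiberBody_nonempty_convex_isCompact {V W : Type*}
    [NormedAddCommGroup V] [NormedSpace ℝ V] [FiniteDimensional ℝ V]
    [MeasurableSpace V] [BorelSpace V]
    [NormedAddCommGroup W] [NormedSpace ℝ W] [FiniteDimensional ℝ W]
    [MeasurableSpace W] [BorelSpace W]
    (X : Set V) (Y : Set W)
    (hXne : X.Nonempty) (hXconv : Convex ℝ X) (hXcomp : IsCompact X)
    (hYne : Y.Nonempty) (hYconv : Convex ℝ Y) (hYcomp : IsCompact Y)
    (f : V →ᵃ[ℝ] W) (hf : ⇑f '' X ⊆ Y)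
    (μ : Measure W) [SigmaFinite μ]
    (hsupp : μ (((affineSpan ℝ (⇑f '' X) : AffineSubspace ℝ W) : Set W)ᶜ) = 0)
    (hinv : ∀ v ∈ (affineSpan ℝ (⇑f '' X)).direction, ∀ s : Set W,
      μ ((fun y => y + v) ⁻¹' s) = μ s)
    (hpos : 0 < μ (⇑f '' X)) (hfin : μ (⇑f '' X) < ⊤) :
    (fiberBody μ (⇑f) X).Nonempty ∧ Convex ℝ (fiberBody μ (⇑f) X) ∧
      IsCompact (fiberBody μ (⇑f) X) := by
  classical
  set e : V ≃L[ℝ] EuclideanSpace ℝ (Fin (Module.finrank ℝ V)) := toEuclidean with hedef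
  set f' : EuclideanSpace ℝ (Fin (Module.finrank ℝ V)) →ᵃ[ℝ] W :=
    f.comp ((e.symm : EuclideanSpace ℝ (Fin (Module.finrank ℝ V)) →L[ℝ] V) :
      EuclideanSpace ℝ (Fin (Module.finrank ℝ V)) →ₗ[ℝ] V).toAffineMap with hf'def
  have hf' : ⇑f' = ⇑f ∘ ⇑e.symm := by
    funext y
    simp [hf'def]
  have hXne' : (⇑e '' X).Nonempty := hXne.image _
  have hXconv' : Convex ℝ (⇑e '' X) := by
    have := hXconv.linear_image
      (e.toLinearEquiv : V →ₗ[ℝ] EuclideanSpace ℝ (Fin (Module.finrank ℝ V)))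
    simpa using this
  have hXcomp' : IsCompact (⇑e '' X) := hXcomp.image e.continuous
  have himg : ⇑f' '' (⇑e '' X) = ⇑f '' X := by
    rw [hf', ← image_comp]
    exact image_congr fun x _ => by simp
  obtain ⟨h1, h2, h3⟩ := fiberBody_spec_of_inner (⇑e '' X) hXne' hXconv' hXcomp' f' μ
    (by rwa [himg]) (by rwa [himg])
  have hsub1 : ⇑e '' fiberBody μ (⇑f) X ⊆ fiberBody μ (⇑f') (⇑e '' X) := by
    have h := fiberBody_image_subset e f X hXcomp μ hfin
    rwa [← hf'] at h
  have hsub2 : ⇑e.symm '' fiberBody μ (⇑f') (⇑e '' X) ⊆ fiberBody μ (⇑f) X := by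
    have h := fiberBody_image_subset e.symm f' (⇑e '' X) hXcomp' μ (by rwa [himg])
    have hfun : ⇑f' ∘ ⇑e.symm.symm = ⇑f := by
      funext x
      rw [hf']
      simp
    have hset : ⇑e.symm '' (⇑e '' X) = X := by
      ext z
      constructor
      · rintro ⟨-, ⟨x, hx, rfl⟩, rfl⟩
        rwa [e.symm_apply_apply]
      · intro hz
        exact ⟨e z, mem_image_of_mem _ hz, e.symm_apply_apply z⟩
    rwa [hfun, hset] at h
  have hEq : fiberBody μ (⇑f) X = ⇑e.symm '' fiberBody μ (⇑f') (⇑e '' X) := by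
    apply Set.Subset.antisymm
    · intro z hz
      exact ⟨e z, hsub1 (mem_image_of_mem _ hz), e.symm_apply_apply z⟩
    · exact hsub2
  rw [hEq]
  refine ⟨h1.image _, ?_, h3.image e.symm.continuous⟩
  have := h2.linear_image (e.symm.toLinearEquiv :
    EuclideanSpace ℝ (Fin (Module.finrank ℝ V)) →ₗ[ℝ] V)
  simpa using this
end

section
/- Let V and W be finite-dimensional real vector spaces, let X ⊆ V and Y ⊆ W be nonempty convex compact sets, and let f : X → Y be an affine map. Then dim(Σf) = dim X − dim f(X), i.e., the dimension of the fiber body of f equals the codimension of f. -/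
open Set MeasureTheory Pointwise

/-- The dimension of a convex set: the dimension of the direction of its affine span. -/
noncomputable def convDim {V : Type*} [AddCommGroup V] [Module ℝ V] (s : Set V) : ℕ :=
  Module.finrank ℝ (affineSpan ℝ s).direction

set_option linter.unusedSectionVars false
section SecAux
variable {V W : Type*}
    [NormedAddCommGroup V] [NormedSpace ℝ V] [FiniteDimensional ℝ V]
    [MeasurableSpace V] [BorelSpace V]
    [NormedAddCommGroup W] [NormedSpace ℝ W] [FiniteDimensional ℝ W]
    [MeasurableSpace W] [BorelSpace W]

/-- Uniqueness of the minimizer of the euclidean norm on a convex set. -/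
lemma aux_min_unique (X : Set V) (hXconv : Convex ℝ X) (f : V →ᵃ[ℝ] W) {y : W}
    {a b : V} (ha : a ∈ X ∩ ⇑f ⁻¹' {y}) (hb : b ∈ X ∩ ⇑f ⁻¹' {y})
    (hamin : ∀ x ∈ X ∩ ⇑f ⁻¹' {y}, ‖toEuclidean a‖ ≤ ‖toEuclidean x‖)
    (hbmin : ∀ x ∈ X ∩ ⇑f ⁻¹' {y}, ‖toEuclidean b‖ ≤ ‖toEuclidean x‖) : a = b := by
  have hmid : midpoint ℝ a b ∈ X ∩ ⇑f ⁻¹' {y} := by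
    refine ⟨(hXconv.segment_subset ha.1 hb.1) (midpoint_mem_segment a b), ?_⟩
    simp only [mem_preimage, mem_singleton_iff, AffineMap.map_midpoint]
    have h1 : f a = y := ha.2
    have h2 : f b = y := hb.2
    rw [h1, h2, midpoint_self]
  set u := toEuclidean a with hu
  set v := toEuclidean b with hv
  have hEm : toEuclidean (midpoint ℝ a b) = midpoint ℝ u v := by
    rw [midpoint_eq_smul_add, midpoint_eq_smul_add]
    simp [map_add, ContinuousLinearEquiv.map_smul]
    rfl
  have h1 : ‖u‖ ≤ ‖v‖ := hamin b hb
  have h2 : ‖v‖ ≤ ‖u‖ := hbmin a ha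
  have huv : ‖u‖ = ‖v‖ := le_antisymm h1 h2
  have h3 : ‖u‖ ≤ ‖midpoint ℝ u v‖ := by
    have := hamin _ hmid
    rwa [hEm] at this
  have h4 : ‖midpoint ℝ u v‖ = 2⁻¹ * ‖u + v‖ := by
    rw [midpoint_eq_smul_add, norm_smul]
    norm_num
  have hpar := parallelogram_law_with_norm ℝ u v
  have h5 : ‖u - v‖ = 0 := by nlinarith [norm_nonneg (u - v), norm_nonneg u, norm_nonneg (u + v)]
  have : u = v := by rwa [← sub_eq_zero, ← norm_eq_zero]
  exact toEuclidean.injective (by rw [← hu, ← hv, this])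

lemma exists_measurable_section (X : Set V) (hXne : X.Nonempty) (hXconv : Convex ℝ X)
    (hXcomp : IsCompact X) (f : V →ᵃ[ℝ] W) :
    ∃ γ : W → V, Measurable γ ∧ ∀ y ∈ ⇑f '' X, γ y ∈ X ∧ f (γ y) = y := by
  classical
  have hfc : Continuous f := f.continuous_of_finiteDimensional
  set N : V → ℝ := fun x => ‖toEuclidean x‖ with hN
  have hNc : Continuous N := toEuclidean.continuous.norm
  set fib : W → Set V := fun y => X ∩ ⇑f ⁻¹' {y} with hfib
  have hfibcomp : ∀ y, IsCompact (fib y) := fun y =>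
    hXcomp.inter_right ((isClosed_singleton.preimage hfc))
  have hmin : ∀ y ∈ ⇑f '' X, ∃ x ∈ fib y, ∀ x' ∈ fib y, N x ≤ N x' := by
    rintro y ⟨x, hx, rfl⟩
    obtain ⟨z, hz, hzmin⟩ := (hfibcomp (f x)).exists_isMinOn ⟨x, hx, rfl⟩ hNc.continuousOn
    exact ⟨z, hz, fun x' hx' => hzmin hx'⟩
  set γ : W → V := fun y => if h : y ∈ ⇑f '' X then (hmin y h).choose else hXne.choose with hγ
  have hγspec : ∀ y (h : y ∈ ⇑f '' X), γ y ∈ fib y ∧ ∀ x' ∈ fib y, N (γ y) ≤ N x' := by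
    intro y h
    simp only [hγ, dif_pos h]
    exact ⟨(hmin y h).choose_spec.1, (hmin y h).choose_spec.2⟩
  refine ⟨γ, ?_, fun y hy => ⟨(hγspec y hy).1.1, (hγspec y hy).1.2⟩⟩
  -- measurability
  have hFmeas : MeasurableSet (⇑f '' X) := (hXcomp.image hfc).isClosed.measurableSet
  apply measurable_of_isClosed
  intro C hC
  have key : γ ⁻¹' C =
      ((⇑f '' X)ᶜ ∩ (if hXne.choose ∈ C then univ else ∅)) ∪
      (⇑f '' (X ∩ C) ∩ ⋂ (q : ℚ),
        ((⇑f '' (X ∩ {x | N x ≤ (q:ℝ)}))ᶜ ∪ ⇑f '' (X ∩ (C ∩ {x | N x ≤ (q:ℝ)})))) := by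
    ext y
    by_cases hy : y ∈ ⇑f '' X
    · simp only [mem_union, mem_inter_iff, mem_compl_iff, hy, not_true_eq_false, false_and,
        false_or, mem_preimage, mem_iInter]
      obtain ⟨hmem, hminy⟩ := hγspec y hy
      constructor
      · intro hyC
        refine ⟨⟨γ y, ⟨hmem.1, hyC⟩, hmem.2⟩, fun q => ?_⟩
        by_cases h1 : y ∈ ⇑f '' (X ∩ {x | N x ≤ (q:ℝ)})
        · refine Or.inr ?_
          obtain ⟨x, ⟨hxX, hxq⟩, hfx⟩ := h1
          exact ⟨γ y, ⟨hmem.1, hyC, (hminy x ⟨hxX, by simp [hfx]⟩).trans hxq⟩, hmem.2⟩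
        · exact Or.inl h1
      · rintro ⟨⟨xc, ⟨hxcX, hxcC⟩, hfxc⟩, hq⟩
        -- the minimizer over fiber ∩ C
        have hfibC : IsCompact (fib y ∩ C) := (hfibcomp y).inter_right hC
        have hfibCne : (fib y ∩ C).Nonempty := ⟨xc, ⟨hxcX, by simp [hfxc]⟩, hxcC⟩
        obtain ⟨z, hz, hzmin⟩ := hfibC.exists_isMinOn hfibCne hNc.continuousOn
        have hle : N z ≤ N (γ y) := by
          by_contra hlt
          push_neg at hlt
          obtain ⟨q, hq1, hq2⟩ := exists_rat_btwn hlt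
          have h1 : y ∈ ⇑f '' (X ∩ {x | N x ≤ (q:ℝ)}) :=
            ⟨γ y, ⟨hmem.1, le_of_lt hq1⟩, hmem.2⟩
          have h2 := (hq q).resolve_left (fun hcon => hcon h1)
          obtain ⟨x', ⟨hx'X, hx'C, hx'q⟩, hfx'⟩ := h2
          have hx'q' : N x' ≤ (q:ℝ) := hx'q
          have : N z ≤ N x' := hzmin ⟨⟨hx'X, by simp [hfx']⟩, hx'C⟩
          linarith
        have hzminfull : ∀ x' ∈ fib y, N z ≤ N x' := fun x' hx' =>
          hle.trans (hminy x' hx')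
        have : z = γ y := aux_min_unique X hXconv f hz.1 hmem hzminfull hminy
        rw [← this]; exact hz.2
    · simp only [mem_union, mem_inter_iff, mem_compl_iff, hy, not_false_eq_true, true_and,
        mem_preimage]
      have hγy : γ y = hXne.choose := dif_neg hy
      constructor
      · intro hyC
        left
        rw [hγy] at hyC
        simp [if_pos hyC]
      · rintro (h | h)
        · split_ifs at h with h'
          · rwa [hγy]
          · exact absurd h (notMem_empty y)
        · exact absurd (image_mono inter_subset_left h.1) hy
  rw [key]
  have himg : ∀ s : Set V, IsClosed s → MeasurableSet (⇑f '' (X ∩ s)) := fun s hs =>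
    ((hXcomp.inter_right hs).image hfc).isClosed.measurableSet
  refine MeasurableSet.union (hFmeas.compl.inter (by split_ifs <;> simp)) ?_
  refine (himg C hC).inter (MeasurableSet.iInter fun q => ?_)
  exact ((himg _ (isClosed_le hNc continuous_const)).compl).union
    (himg (C ∩ {x | N x ≤ (q:ℝ)}) (hC.inter (isClosed_le hNc continuous_const)))

end SecAux

set_option maxHeartbeats 2000000 in
/-- For an affine map `f : X → Y` between nonempty convex compact
sets in finite-dimensional real vector spaces, and a (σ-finite) nonzero
translation-invariant Borel measure `μ` on the affine hull of `f(X)`,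
the dimension of the fiber body `Σf` equals the codimension of `f`:
`dim Σf = dim X − dim f(X)`. -/
theorem convDim_fiberBody {V W : Type*}
    [NormedAddCommGroup V] [NormedSpace ℝ V] [FiniteDimensional ℝ V]
    [MeasurableSpace V] [BorelSpace V]
    [NormedAddCommGroup W] [NormedSpace ℝ W] [FiniteDimensional ℝ W]
    [MeasurableSpace W] [BorelSpace W]
    (X : Set V) (Y : Set W)
    (hXne : X.Nonempty) (hXconv : Convex ℝ X) (hXcomp : IsCompact X)
    (hYne : Y.Nonempty) (hYconv : Convex ℝ Y) (hYcomp : IsCompact Y)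
    (f : V →ᵃ[ℝ] W) (hf : ⇑f '' X ⊆ Y)
    (μ : Measure W) [SigmaFinite μ]
    (hsupp : μ (((affineSpan ℝ (⇑f '' X) : AffineSubspace ℝ W) : Set W)ᶜ) = 0)
    (hinv : ∀ v ∈ (affineSpan ℝ (⇑f '' X)).direction, ∀ s : Set W,
      μ ((fun y => y + v) ⁻¹' s) = μ s)
    (hpos : 0 < μ (⇑f '' X)) (hfin : μ (⇑f '' X) < ⊤) :
    convDim (fiberBody μ (⇑f) X) = convDim X - convDim (⇑f '' X) := by
  classical
  have hfc : Continuous f := f.continuous_of_finiteDimensional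
  set F : Set W := ⇑f '' X with hF
  have hFcomp : IsCompact F := hXcomp.image hfc
  have hFmeas : MeasurableSet F := hFcomp.isClosed.measurableSet
  set A : AffineSubspace ℝ W := affineSpan ℝ F with hA
  set AX : AffineSubspace ℝ V := affineSpan ℝ X with hAX
  set D : Submodule ℝ V := AX.direction with hD
  set L : V →ₗ[ℝ] W := f.linear with hL
  have hspan : A = AX.map f := (AffineSubspace.map_span f X).symm
  have hdir : A.direction = D.map L := by rw [hspan, AffineSubspace.map_direction]
  set KK : Submodule ℝ V := D ⊓ LinearMap.ker L with hKK
  -- dimension identity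
  have hdim : Module.finrank ℝ KK + convDim F = convDim X := by
    have h1 := LinearMap.finrank_range_add_finrank_ker (L.comp D.subtype)
    have hr : LinearMap.range (L.comp D.subtype) = D.map L := by
      rw [LinearMap.range_comp, Submodule.range_subtype]
    have hk : LinearMap.ker (L.comp D.subtype) = KK.comap D.subtype := by
      rw [LinearMap.ker_comp, hKK]
      ext x
      simp only [Submodule.mem_comap, LinearMap.mem_ker, Submodule.mem_inf]
      exact ⟨fun h => ⟨x.2, h⟩, fun h => h.2⟩
    have hk2 : Module.finrank ℝ (LinearMap.ker (L.comp D.subtype)) = Module.finrank ℝ KK := by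
      rw [hk]
      exact LinearEquiv.finrank_eq (Submodule.comapSubtypeEquivOfLe (inf_le_left : KK ≤ D))
    rw [hr, hk2] at h1
    have h2 : convDim F = Module.finrank ℝ (D.map L) := by rw [convDim, ← hA, hdir]
    have h3 : convDim X = Module.finrank ℝ D := rfl
    omega
  -- measure facts
  have hμF0 : (μ F).toReal ≠ 0 := by
    simp [ENNReal.toReal_eq_zero_iff, hpos.ne', hfin.ne]
  have hμFpos : 0 < (μ F).toReal := by
    rcases (ENNReal.toReal_nonneg (a := μ F)).lt_or_eq with h | h
    · exact h
    · exact absurd h.symm hμF0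
  set c : ℝ := (μ F).toReal⁻¹ with hc
  set b : W := c • ∫ y in F, y ∂μ with hb
  -- integrability of sections
  haveI hfinF : IsFiniteMeasure (μ.restrict F) :=
    ⟨by rwa [Measure.restrict_apply_univ]⟩
  obtain ⟨RX, hRX⟩ : ∃ R, ∀ x ∈ X, ‖x‖ ≤ R := by
    obtain ⟨R, hR⟩ := hXcomp.isBounded.subset_closedBall 0
    exact ⟨R, fun x hx => by simpa [Metric.mem_closedBall, dist_eq_norm] using hR hx⟩
  have hint : ∀ γ : W → V, Measurable γ → (∀ y ∈ F, γ y ∈ X) → IntegrableOn γ F μ := by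
    intro γ hγm hγX
    refine Integrable.mono' (integrable_const RX) hγm.aestronglyMeasurable ?_
    filter_upwards [ae_restrict_mem hFmeas] with y hy
    exact hRX _ (hγX y hy)
  -- upper bound facts
  have hintW : IntegrableOn (fun y : W => y) F μ := by
    obtain ⟨RF, hRF⟩ : ∃ R, ∀ y ∈ F, ‖y‖ ≤ R := by
      obtain ⟨R, hR⟩ := hFcomp.isBounded.subset_closedBall 0
      exact ⟨R, fun y hy => by simpa [Metric.mem_closedBall, dist_eq_norm] using hR hy⟩
    refine Integrable.mono' (integrable_const RF) measurable_id.aestronglyMeasurable ?_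
    filter_upwards [ae_restrict_mem hFmeas] with y hy
    exact hRF _ hy
  have hupper : ∀ p ∈ fiberBody μ (⇑f) X, p ∈ AX ∧ f p = b := by
    rintro p ⟨γ, hγm, hγsec, rfl⟩
    have hγX : ∀ y ∈ F, γ y ∈ X := fun y hy => (hγsec y hy).1
    have hγint : IntegrableOn γ F μ := hint γ hγm hγX
    constructor
    · have hmem : (⨍ y in F, γ y ∂μ) ∈ (AX : Set V) := by
        refine AX.convex.set_average_mem AX.closed_of_finiteDimensional hpos.ne' hfin.ne ?_ hγint
        filter_upwards [ae_restrict_mem hFmeas] with y hy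
        exact subset_affineSpan ℝ X (hγX y hy)
      rwa [setAverage_eq] at hmem
    · have h2 : L (∫ y in F, γ y ∂μ) = ∫ y in F, L (γ y) ∂μ :=
        ((LinearMap.toContinuousLinearMap L).integral_comp_comm hγint).symm
      have h3 : ∀ y ∈ F, L (γ y) = y - f 0 := by
        intro y hy
        have hsec := (hγsec y hy).2
        have : f (γ y) = L (γ y) + f 0 := by
          conv_lhs => rw [f.decomp]
          rfl
        rw [hsec] at this
        rw [eq_sub_iff_add_eq]
        exact this.symm
      have h4 : ∫ y in F, L (γ y) ∂μ = (∫ y in F, y ∂μ) - (μ F).toReal • f 0 := by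
        rw [setIntegral_congr_fun hFmeas h3, integral_sub hintW (integrable_const _),
          setIntegral_const]
        rfl
      have h5 : f (c • ∫ y in F, γ y ∂μ) = L (c • ∫ y in F, γ y ∂μ) + f 0 := by
        conv_lhs => rw [f.decomp]
        rfl
      rw [h5, L.map_smul, h2, h4, smul_sub, smul_smul, hc,
        inv_mul_cancel₀ hμF0, one_smul]
      simp [hb, hc]
  -- lower bound: KK ≤ direction of span
  have hfadd : ∀ (x v : V), f (x + v) = f x + L v := by
    intro x v
    have h1 : f (x + v) = L (x + v) + f 0 := by
      conv_lhs => rw [f.decomp]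
      rfl
    have h2 : f x = L x + f 0 := by
      conv_lhs => rw [f.decomp]
      rfl
    rw [h1, h2, map_add]
    abel
  have hlower : KK ≤ (affineSpan ℝ (fiberBody μ (⇑f) X)).direction := by
    obtain ⟨x0, hx0⟩ := hXne.intrinsicInterior hXconv
    have hx0X : x0 ∈ X := intrinsicInterior_subset hx0
    have hx0A : x0 ∈ AX := subset_affineSpan ℝ X hx0X
    obtain ⟨δ, hδpos, hδ⟩ : ∃ δ > 0, ∀ v ∈ D, ‖v‖ < δ → x0 + v ∈ X := by
      obtain ⟨p, hp, hpx⟩ := hx0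
      obtain ⟨ε, hεpos, hε⟩ := Metric.mem_nhds_iff.mp (mem_interior_iff_mem_nhds.mp hp)
      refine ⟨ε, hεpos, fun v hv hvn => ?_⟩
      have hq : v +ᵥ (p : V) ∈ affineSpan ℝ X := AffineSubspace.vadd_mem_of_mem_direction hv p.2
      have hqball : (⟨v +ᵥ (p : V), hq⟩ : affineSpan ℝ X) ∈ Metric.ball p ε := by
        simp only [Metric.mem_ball, Subtype.dist_eq, dist_eq_norm, vadd_eq_add]
        simpa using hvn
      have hmem := hε hqball
      simp only [mem_preimage] at hmem
      have : v +ᵥ (p : V) = x0 + v := by rw [hpx, vadd_eq_add, add_comm]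
      rwa [this] at hmem
    obtain ⟨ℓ, hℓD, hℓL⟩ : ∃ ℓ : W →ₗ[ℝ] V, (∀ w ∈ D.map L, ℓ w ∈ D) ∧
        (∀ w ∈ D.map L, L (ℓ w) = w) := by
      set g : ↥D →ₗ[ℝ] W := L.comp D.subtype with hg
      obtain ⟨rinv, hrinv⟩ := g.rangeRestrict.exists_rightInverse_of_surjective
        (LinearMap.range_eq_top.mpr g.surjective_rangeRestrict)
      obtain ⟨Q, hQ⟩ := Submodule.exists_isCompl (LinearMap.range g)
      set π := (LinearMap.range g).linearProjOfIsCompl Q hQ with hπdef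
      have hrg : LinearMap.range g = Submodule.map L D := by
        rw [hg, LinearMap.range_comp, Submodule.range_subtype]
      refine ⟨D.subtype ∘ₗ rinv ∘ₗ π, fun w hw => ?_, fun w hw => ?_⟩
      · exact (rinv (π w)).2
      · have hw' : w ∈ LinearMap.range g := hrg ▸ hw
        have hπ : π w = ⟨w, hw'⟩ := Submodule.linearProjOfIsCompl_apply_left hQ ⟨w, hw'⟩
        have hid : g.rangeRestrict (rinv ⟨w, hw'⟩) = ⟨w, hw'⟩ := by
          rw [← LinearMap.comp_apply, hrinv, LinearMap.id_apply]
        have hgr : g (rinv ⟨w, hw'⟩) = w := congrArg Subtype.val hid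
        simp only [LinearMap.comp_apply, hπ]
        exact hgr
    have hℓcont : Continuous ℓ := ℓ.continuous_of_finiteDimensional
    set ℓc : W →L[ℝ] V := LinearMap.toContinuousLinearMap ℓ with hℓcdef
    set Cl : ℝ := ‖ℓc‖ with hCldef
    have hCl0 : 0 ≤ Cl := norm_nonneg _
    have hℓnorm : ∀ w : W, ‖ℓ w‖ ≤ Cl * ‖w‖ := fun w => ℓc.le_opNorm w
    set r : ℝ := δ / (2 * (Cl + 1)) with hrdef
    have hrpos : 0 < r := by positivity
    have hClr : Cl * r < δ / 2 := by
      have hCl1 : (0:ℝ) < Cl + 1 := by linarith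
      have h1 : r * (Cl + 1) = δ / 2 := by
        rw [hrdef]
        field_simp
      nlinarith [hrpos]
    set S : Set W := Metric.ball (f x0) r ∩ (A : Set W) with hSdef
    have hfx0F : f x0 ∈ F := ⟨x0, hx0X, rfl⟩
    have hfx0A : f x0 ∈ A := subset_affineSpan ℝ F hfx0F
    have hSmeas : MeasurableSet S :=
      Metric.isOpen_ball.measurableSet.inter A.closed_of_finiteDimensional.measurableSet
    have hAdir : ∀ y ∈ (A : Set W), y - f x0 ∈ Submodule.map L D := by
      intro y hy
      have := AffineSubspace.vsub_mem_direction hy hfx0A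
      rwa [hdir] at this
    set σb : W → V := fun y => x0 + ℓ (y - f x0) with hσbdef
    have hσ : ∀ k ∈ KK, ‖k‖ < δ / 2 → ∀ y ∈ S,
        (σb y + k) ∈ X ∧ f (σb y + k) = y := by
      intro k hk hkn y hy
      have hyd : y - f x0 ∈ Submodule.map L D := hAdir y hy.2
      have hkD : k ∈ D := (Submodule.mem_inf.mp hk).1
      have hkker : L k = 0 := LinearMap.mem_ker.mp (Submodule.mem_inf.mp hk).2
      have hvD : ℓ (y - f x0) + k ∈ D := D.add_mem (hℓD _ hyd) hkD
      have hynorm : ‖y - f x0‖ < r := by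
        have := hy.1
        simpa [dist_eq_norm] using this
      have hnorm : ‖ℓ (y - f x0) + k‖ < δ := by
        calc ‖ℓ (y - f x0) + k‖ ≤ ‖ℓ (y - f x0)‖ + ‖k‖ := norm_add_le _ _
          _ ≤ Cl * ‖y - f x0‖ + ‖k‖ := by gcongr; exact hℓnorm _
          _ < Cl * r + δ / 2 := by
              have h1 : Cl * ‖y - f x0‖ ≤ Cl * r := by
                apply mul_le_mul_of_nonneg_left hynorm.le hCl0
              linarith
          _ ≤ δ := by linarith
      have heqσ : σb y + k = x0 + (ℓ (y - f x0) + k) := by rw [hσbdef]; dsimp only; abel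
      constructor
      · rw [heqσ]
        exact hδ _ hvD hnorm
      · rw [heqσ, hfadd, map_add, hℓL _ hyd, hkker, add_zero]
        abel
    have hk0 : (0 : V) ∈ KK := KK.zero_mem
    have h0norm : ‖(0 : V)‖ < δ / 2 := by simpa using half_pos hδpos
    have hSF : S ⊆ F := by
      intro y hy
      obtain ⟨hmem, hfeq⟩ := hσ 0 hk0 h0norm y hy
      rw [add_zero] at hmem hfeq
      exact ⟨_, hmem, hfeq⟩
    have hμSfin : μ S < ⊤ := lt_of_le_of_lt (measure_mono hSF) hfin
    have htrans : ∀ y ∈ F, μ (Metric.ball y r ∩ (A : Set W)) = μ S := by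
      intro y hy
      have hyA : y ∈ (A : Set W) := subset_affineSpan ℝ F hy
      have hv : y - f x0 ∈ A.direction := AffineSubspace.vsub_mem_direction hyA hfx0A
      have heq : (fun z => z + (y - f x0)) ⁻¹' (Metric.ball y r ∩ (A : Set W)) = S := by
        ext z
        simp only [mem_preimage, mem_inter_iff, Metric.mem_ball, hSdef]
        have hdist : dist (z + (y - f x0)) y = dist z (f x0) := by
          rw [dist_eq_norm, dist_eq_norm]
          congr 1
          abel
        rw [hdist]
        constructor
        · rintro ⟨h1, h2⟩
          refine ⟨h1, ?_⟩
          have h3 := AffineSubspace.vadd_mem_of_mem_direction (A.direction.neg_mem hv) h2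
          have h4 : (-(y - f x0)) +ᵥ (z + (y - f x0)) = z := by
            rw [vadd_eq_add]; abel
          rwa [h4] at h3
        · rintro ⟨h1, h2⟩
          refine ⟨h1, ?_⟩
          have h3 := AffineSubspace.vadd_mem_of_mem_direction hv h2
          have h4 : (y - f x0) +ᵥ z = z + (y - f x0) := by
            rw [vadd_eq_add]; abel
          rwa [h4] at h3
      rw [← hinv (y - f x0) hv (Metric.ball y r ∩ (A : Set W)), heq]
    have hμS : μ S ≠ 0 := by
      intro h0
      obtain ⟨T, hTF, hTcov⟩ := hFcomp.elim_nhds_subcover (fun y => Metric.ball y r)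
        (fun y _ => Metric.ball_mem_nhds y hrpos)
      have hcov : F ⊆ ⋃ y ∈ T, (Metric.ball y r ∩ (A : Set W)) := by
        intro z hz
        obtain ⟨y, hyT, hzy⟩ := mem_iUnion₂.mp (hTcov hz)
        exact mem_iUnion₂.mpr ⟨y, hyT, hzy, subset_affineSpan ℝ F hz⟩
      have hF0 : μ F = 0 := measure_mono_null hcov <|
        (measure_biUnion_null_iff T.countable_toSet).mpr fun y hy => by
          rw [htrans y (hTF y hy)]; exact h0
      exact hpos.ne' hF0
    obtain ⟨γ0, hγ0m, hγ0sec⟩ := exists_measurable_section X hXne hXconv hXcomp f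
    have hγ0X : ∀ y ∈ F, γ0 y ∈ X := fun y hy => (hγ0sec y hy).1
    have hσbc : Continuous σb :=
      continuous_const.add (hℓcont.comp (continuous_id.sub continuous_const))
    haveI hfinS : IsFiniteMeasure (μ.restrict S) :=
      ⟨by rw [Measure.restrict_apply_univ]; exact hμSfin⟩
    have hσbint : IntegrableOn σb S μ := by
      refine Integrable.mono' (integrable_const (‖x0‖ + Cl * r))
        hσbc.measurable.aestronglyMeasurable ?_
      filter_upwards [ae_restrict_mem hSmeas] with y hy
      have hynorm : ‖y - f x0‖ < r := by simpa [dist_eq_norm] using hy.1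
      calc ‖σb y‖ ≤ ‖x0‖ + ‖ℓ (y - f x0)‖ := norm_add_le _ _
        _ ≤ ‖x0‖ + Cl * ‖y - f x0‖ := by gcongr; exact hℓnorm _
        _ ≤ ‖x0‖ + Cl * r := by
            have := mul_le_mul_of_nonneg_left hynorm.le hCl0
            linarith
    set t : ℝ := c * (μ S).toReal with htdef
    have htpos : 0 < t :=
      mul_pos (inv_pos.mpr hμFpos) (ENNReal.toReal_pos hμS hμSfin.ne)
    set C0 : V := c • ((∫ y in S, σb y ∂μ) + ∫ y in F \ S, γ0 y ∂μ) with hC0def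
    have hmemk : ∀ k ∈ KK, ‖k‖ < δ / 2 → C0 + t • k ∈ fiberBody μ (⇑f) X := by
      intro k hk hkn
      set γk : W → V := fun y => if y ∈ S then σb y + k else γ0 y with hγkdef
      have hγkm : Measurable γk :=
        Measurable.ite hSmeas (hσbc.add continuous_const).measurable hγ0m
      have hγksec : ∀ y ∈ ⇑f '' X, γk y ∈ X ∧ f (γk y) = y := by
        intro y hy
        by_cases hyS : y ∈ S
        · have hh := hσ k hk hkn y hyS
          simp only [hγkdef, if_pos hyS]
          exact hh
        · simp only [hγkdef, if_neg hyS]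
          exact hγ0sec y hy
      refine ⟨γk, hγkm, hγksec, ?_⟩
      have hγkX : ∀ y ∈ F, γk y ∈ X := fun y hy => (hγksec y hy).1
      have hintk : IntegrableOn γk F μ := hint γk hγkm hγkX
      have hsplit : ∫ y in F, γk y ∂μ = (∫ y in S, γk y ∂μ) + ∫ y in F \ S, γk y ∂μ := by
        have hdis : Disjoint S (F \ S) := disjoint_sdiff_right
        have hun : S ∪ (F \ S) = F := union_diff_cancel hSF
        have := setIntegral_union hdis (hFmeas.diff hSmeas)
          (hintk.mono_set hSF) (hintk.mono_set diff_subset)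
        rw [hun] at this
        exact this
      have h1 : ∫ y in S, γk y ∂μ = (∫ y in S, σb y ∂μ) + (μ S).toReal • k := by
        rw [setIntegral_congr_fun hSmeas (fun y hy => if_pos hy),
          integral_add hσbint (integrable_const _), setIntegral_const]
        rfl
      have h2 : ∫ y in F \ S, γk y ∂μ = ∫ y in F \ S, γ0 y ∂μ :=
        setIntegral_congr_fun (hFmeas.diff hSmeas) (fun y hy => if_neg hy.2)
      show C0 + t • k = c • ∫ y in F, γk y ∂μ
      rw [hsplit, h1, h2, hC0def, htdef]
      rw [smul_add, smul_add, smul_add, smul_smul]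
      abel
    intro k hk
    rw [direction_affineSpan]
    set s : ℝ := (δ / 2) / (‖k‖ + 1) with hsdef
    have hspos : 0 < s := by positivity
    have hk' : s • k ∈ KK := KK.smul_mem s hk
    have hk'norm : ‖s • k‖ < δ / 2 := by
      rw [norm_smul, Real.norm_eq_abs, abs_of_pos hspos, hsdef]
      rw [div_mul_eq_mul_div, div_lt_iff₀ (by positivity : (0:ℝ) < ‖k‖ + 1)]
      nlinarith [hδpos, norm_nonneg k]
    have hp1 : C0 + t • (s • k) ∈ fiberBody μ (⇑f) X := hmemk _ hk' hk'norm
    have hp0 : C0 ∈ fiberBody μ (⇑f) X := by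
      have := hmemk 0 hk0 h0norm
      rwa [smul_zero, add_zero] at this
    have hvs : (C0 + t • (s • k)) -ᵥ C0 ∈ vectorSpan ℝ (fiberBody μ (⇑f) X) :=
      vsub_mem_vectorSpan ℝ hp1 hp0
    have heq2 : (C0 + t • (s • k)) -ᵥ C0 = (t * s) • k := by
      rw [vsub_eq_sub, smul_smul]
      abel
    rw [heq2] at hvs
    have hkeq : k = (t * s)⁻¹ • ((t * s) • k) := by
      rw [smul_smul, inv_mul_cancel₀ (by positivity), one_smul]
    rw [hkeq]
    exact Submodule.smul_mem _ _ hvs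
  have hupper' : (affineSpan ℝ (fiberBody μ (⇑f) X)).direction ≤ KK := by
    rw [direction_affineSpan, vectorSpan_def]
    rw [Submodule.span_le]
    rintro v ⟨p, hp, q, hq, rfl⟩
    have h1 : p -ᵥ q ∈ D := AffineSubspace.vsub_mem_direction (hupper p hp).1 (hupper q hq).1
    have h2 : p -ᵥ q ∈ LinearMap.ker L := by
      rw [LinearMap.mem_ker, hL, f.linearMap_vsub, (hupper p hp).2, (hupper q hq).2, vsub_self]
    exact Submodule.mem_inf.mpr ⟨h1, h2⟩
  have hdireq : (affineSpan ℝ (fiberBody μ (⇑f) X)).direction = KK :=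
    le_antisymm hupper' hlower
  have : convDim (fiberBody μ (⇑f) X) = Module.finrank ℝ KK := by
    rw [convDim, hdireq]
  omega
end

section
/- Let P = conv{(2,1),(2,−1),(−2,1),(−2,−1)} ⊂ ℝ², Q = conv{(1,2),(1,−2),(−1,2),(−1,−2)} ⊂ ℝ², and R = [0,1] ⊂ ℝ. Then there is no bijective affine map from Hom(P,R) + Hom(Q,R) onto Hom(P+Q, R), where the Hom-sets are subsets of the 3-dimensional vector space of affine maps ℝ² → ℝ and + is the Minkowski sum there. -/
open Set Pointwise

set_option maxHeartbeats 1000000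


abbrev V2 := (ℝ × ℝ) →ᵃ[ℝ] ℝ

noncomputable def mk2 (a b c : ℝ) : V2 :=
  LinearMap.toAffineMap (a • LinearMap.fst ℝ ℝ ℝ + b • LinearMap.snd ℝ ℝ ℝ) +
    AffineMap.const ℝ (ℝ × ℝ) c

@[simp] lemma mk2_apply (a b c x y : ℝ) : mk2 a b c (x, y) = a * x + b * y + c := by
  simp [mk2, smul_eq_mul]

lemma eval_eq (g : V2) (x y : ℝ) :
    g (x, y) = (1 - x - y) * g (0, 0) + x * g (1, 0) + y * g (0, 1) := by
  have key : ∀ v : ℝ × ℝ, g v = g.linear v + g (0, 0) := by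
    intro v
    have h := g.map_vadd ((0 : ℝ), (0 : ℝ)) v
    simpa [vadd_eq_add, Prod.mk_zero_zero] using h
  have hxy : ((x, y) : ℝ × ℝ) = x • ((1 : ℝ), (0 : ℝ)) + y • ((0 : ℝ), (1 : ℝ)) := by
    simp [Prod.ext_iff]
  rw [key (x, y), hxy, map_add, map_smul, map_smul, smul_eq_mul, smul_eq_mul]
  have h1 : g.linear (1, 0) = g (1, 0) - g (0, 0) := by rw [key (1, 0)]; ring
  have h2 : g.linear (0, 1) = g (0, 1) - g (0, 0) := by rw [key (0, 1)]; ring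
  rw [h1, h2]; ring

lemma ext3 {g h : V2} (e0 : g (0, 0) = h (0, 0)) (e1 : g (1, 0) = h (1, 0))
    (e2 : g (0, 1) = h (0, 1)) : g = h := by
  apply AffineMap.ext
  rintro ⟨x, y⟩
  rw [eval_eq g, eval_eq h, e0, e1, e2]


def setA : Set V2 :=
  {g | ⇑g '' convexHull ℝ ({(2, 1), (2, -1), (-2, 1), (-2, -1)} : Set (ℝ × ℝ)) ⊆ Set.Icc (0 : ℝ) 1}
def setB : Set V2 :=
  {g | ⇑g '' convexHull ℝ ({(1, 2), (1, -2), (-1, 2), (-1, -2)} : Set (ℝ × ℝ)) ⊆ Set.Icc (0 : ℝ) 1}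
def setT : Set V2 :=
  {h | ⇑h '' (convexHull ℝ ({(2, 1), (2, -1), (-2, 1), (-2, -1)} : Set (ℝ × ℝ)) +
      convexHull ℝ ({(1, 2), (1, -2), (-1, 2), (-1, -2)} : Set (ℝ × ℝ))) ⊆ Set.Icc (0 : ℝ) 1}

lemma memA_iff (g : V2) :
    g ∈ setA ↔ (g (2,1) ∈ Icc (0:ℝ) 1 ∧ g (2,-1) ∈ Icc (0:ℝ) 1 ∧
      g (-2,1) ∈ Icc (0:ℝ) 1 ∧ g (-2,-1) ∈ Icc (0:ℝ) 1) := by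
  constructor
  · intro hg
    refine ⟨?_, ?_, ?_, ?_⟩ <;>
      exact hg (mem_image_of_mem _ (subset_convexHull ℝ _ (by norm_num [Prod.ext_iff])))
  · rintro ⟨h1, h2, h3, h4⟩
    intro z hz
    rw [AffineMap.image_convexHull] at hz
    refine convexHull_min ?_ (convex_Icc (0:ℝ) 1) hz
    rintro _ ⟨v, hv, rfl⟩
    simp only [Set.mem_insert_iff, Set.mem_singleton_iff] at hv
    rcases hv with rfl | rfl | rfl | rfl <;> assumption

lemma memB_iff (g : V2) :
    g ∈ setB ↔ (g (1,2) ∈ Icc (0:ℝ) 1 ∧ g (1,-2) ∈ Icc (0:ℝ) 1 ∧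
      g (-1,2) ∈ Icc (0:ℝ) 1 ∧ g (-1,-2) ∈ Icc (0:ℝ) 1) := by
  constructor
  · intro hg
    refine ⟨?_, ?_, ?_, ?_⟩ <;>
      exact hg (mem_image_of_mem _ (subset_convexHull ℝ _ (by norm_num [Prod.ext_iff])))
  · rintro ⟨h1, h2, h3, h4⟩
    intro z hz
    rw [AffineMap.image_convexHull] at hz
    refine convexHull_min ?_ (convex_Icc (0:ℝ) 1) hz
    rintro _ ⟨v, hv, rfl⟩
    simp only [Set.mem_insert_iff, Set.mem_singleton_iff] at hv
    rcases hv with rfl | rfl | rfl | rfl <;> assumption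

-- the big square hull lemma
lemma square_mem {x y : ℝ} (hx1 : -3 ≤ x) (hx2 : x ≤ 3) (hy1 : -3 ≤ y) (hy2 : y ≤ 3) :
    ((x, y) : ℝ × ℝ) ∈ convexHull ℝ ({(3,3),(3,-3),(-3,3),(-3,-3)} : Set (ℝ × ℝ)) := by
  set K := convexHull ℝ ({(3,3),(3,-3),(-3,3),(-3,-3)} : Set (ℝ × ℝ))
  have hK : Convex ℝ K := convex_convexHull ℝ _
  have m1 : ((3,3) : ℝ×ℝ) ∈ K := subset_convexHull ℝ _ (by norm_num [Prod.ext_iff])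
  have m2 : ((3,-3) : ℝ×ℝ) ∈ K := subset_convexHull ℝ _ (by norm_num [Prod.ext_iff])
  have m3 : ((-3,3) : ℝ×ℝ) ∈ K := subset_convexHull ℝ _ (by norm_num [Prod.ext_iff])
  have m4 : ((-3,-3) : ℝ×ℝ) ∈ K := subset_convexHull ℝ _ (by norm_num [Prod.ext_iff])
  have hxy : ((x, 3) : ℝ × ℝ) ∈ K := by
    have := hK m1 m3 (a := (3 + x)/6) (b := (3 - x)/6) (by linarith) (by linarith) (by ring)
    convert this using 1
    simp [Prod.ext_iff, Prod.smul_def, smul_eq_mul]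
    constructor <;> ring
  have hxy' : ((x, -3) : ℝ × ℝ) ∈ K := by
    have := hK m2 m4 (a := (3 + x)/6) (b := (3 - x)/6) (by linarith) (by linarith) (by ring)
    convert this using 1
    simp [Prod.ext_iff, Prod.smul_def, smul_eq_mul]
    constructor <;> ring
  have := hK hxy hxy' (a := (3 + y)/6) (b := (3 - y)/6) (by linarith) (by linarith) (by ring)
  convert this using 1
  simp [Prod.ext_iff, Prod.smul_def, smul_eq_mul]
  constructor <;> ring

lemma sum_subset :
    convexHull ℝ ({(2, 1), (2, -1), (-2, 1), (-2, -1)} : Set (ℝ × ℝ)) +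
      convexHull ℝ ({(1, 2), (1, -2), (-1, 2), (-1, -2)} : Set (ℝ × ℝ)) ⊆
      convexHull ℝ ({(3,3),(3,-3),(-3,3),(-3,-3)} : Set (ℝ × ℝ)) := by
  have hP : convexHull ℝ ({(2, 1), (2, -1), (-2, 1), (-2, -1)} : Set (ℝ × ℝ)) ⊆
      Icc ((-2,-1) : ℝ×ℝ) (2,1) := by
    refine convexHull_min ?_ (convex_Icc _ _)
    intro v hv
    simp only [Set.mem_insert_iff, Set.mem_singleton_iff] at hv
    rcases hv with rfl | rfl | rfl | rfl <;>
      simp [Set.mem_Icc, Prod.le_def] <;> norm_num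
  have hQ : convexHull ℝ ({(1, 2), (1, -2), (-1, 2), (-1, -2)} : Set (ℝ × ℝ)) ⊆
      Icc ((-1,-2) : ℝ×ℝ) (1,2) := by
    refine convexHull_min ?_ (convex_Icc _ _)
    intro v hv
    simp only [Set.mem_insert_iff, Set.mem_singleton_iff] at hv
    rcases hv with rfl | rfl | rfl | rfl <;>
      simp [Set.mem_Icc, Prod.le_def] <;> norm_num
  rintro _ ⟨p, hp, q, hq, rfl⟩
  obtain ⟨hp1, hp2⟩ := hP hp
  obtain ⟨hq1, hq2⟩ := hQ hq
  rw [Prod.le_def] at hp1 hp2 hq1 hq2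
  show p + q ∈ _
  have hpq : p + q = ((p.1 + q.1, p.2 + q.2) : ℝ × ℝ) := rfl
  rw [hpq]
  exact square_mem (by obtain ⟨a1,a2⟩ := hp1; obtain ⟨b1,b2⟩ := hq1; norm_num at a1 a2 b1 b2; linarith)
    (by obtain ⟨a1,a2⟩ := hp2; obtain ⟨b1,b2⟩ := hq2; norm_num at a1 a2 b1 b2; linarith)
    (by obtain ⟨a1,a2⟩ := hp1; obtain ⟨b1,b2⟩ := hq1; norm_num at a1 a2 b1 b2; linarith)
    (by obtain ⟨a1,a2⟩ := hp2; obtain ⟨b1,b2⟩ := hq2; norm_num at a1 a2 b1 b2; linarith)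

lemma memT_iff (h : V2) :
    h ∈ setT ↔ (h (3,3) ∈ Icc (0:ℝ) 1 ∧ h (3,-3) ∈ Icc (0:ℝ) 1 ∧
      h (-3,3) ∈ Icc (0:ℝ) 1 ∧ h (-3,-3) ∈ Icc (0:ℝ) 1) := by
  constructor
  · intro hg
    have mP : ∀ v ∈ ({(2, 1), (2, -1), (-2, 1), (-2, -1)} : Set (ℝ × ℝ)),
        v ∈ convexHull ℝ ({(2, 1), (2, -1), (-2, 1), (-2, -1)} : Set (ℝ × ℝ)) :=
      fun v hv => subset_convexHull ℝ _ hv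
    have mQ : ∀ v ∈ ({(1, 2), (1, -2), (-1, 2), (-1, -2)} : Set (ℝ × ℝ)),
        v ∈ convexHull ℝ ({(1, 2), (1, -2), (-1, 2), (-1, -2)} : Set (ℝ × ℝ)) :=
      fun v hv => subset_convexHull ℝ _ hv
    refine ⟨?_, ?_, ?_, ?_⟩
    · have := add_mem_add (mP (2,1) (by norm_num [Prod.ext_iff])) (mQ (1,2) (by norm_num [Prod.ext_iff]))
      rw [show (((2,1) : ℝ×ℝ) + (1,2)) = (3,3) from by norm_num [Prod.ext_iff, Prod.mk_add_mk]] at this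
      exact hg (mem_image_of_mem _ this)
    · have := add_mem_add (mP (2,-1) (by norm_num [Prod.ext_iff])) (mQ (1,-2) (by norm_num [Prod.ext_iff]))
      rw [show (((2,-1) : ℝ×ℝ) + (1,-2)) = (3,-3) from by norm_num [Prod.ext_iff, Prod.mk_add_mk]] at this
      exact hg (mem_image_of_mem _ this)
    · have := add_mem_add (mP (-2,1) (by norm_num [Prod.ext_iff])) (mQ (-1,2) (by norm_num [Prod.ext_iff]))
      rw [show (((-2,1) : ℝ×ℝ) + (-1,2)) = (-3,3) from by norm_num [Prod.ext_iff, Prod.mk_add_mk]] at this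
      exact hg (mem_image_of_mem _ this)
    · have := add_mem_add (mP (-2,-1) (by norm_num [Prod.ext_iff])) (mQ (-1,-2) (by norm_num [Prod.ext_iff]))
      rw [show (((-2,-1) : ℝ×ℝ) + (-1,-2)) = (-3,-3) from by norm_num [Prod.ext_iff, Prod.mk_add_mk]] at this
      exact hg (mem_image_of_mem _ this)
  · rintro ⟨h1, h2, h3, h4⟩
    rintro _ ⟨w, hw, rfl⟩
    have hw' := sum_subset hw
    have : h w ∈ ⇑h '' convexHull ℝ ({(3,3),(3,-3),(-3,3),(-3,-3)} : Set (ℝ × ℝ)) :=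
      mem_image_of_mem _ hw'
    rw [AffineMap.image_convexHull] at this
    refine convexHull_min ?_ (convex_Icc (0:ℝ) 1) this
    rintro _ ⟨v, hv, rfl⟩
    simp only [Set.mem_insert_iff, Set.mem_singleton_iff] at hv
    rcases hv with rfl | rfl | rfl | rfl <;> assumption


/-! ### Midpoint-extreme machinery -/

def MidExt (S : Set V2) (x : V2) : Prop :=
  x ∈ S ∧ ∀ y ∈ S, ∀ z ∈ S, x = midpoint ℝ y z → y = z

/-- the linear functional used for exposing points -/
def L (α β γ : ℝ) (g : V2) : ℝ := α * g (1, 0) + β * g (0, 1) + γ * g (0, 0)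

lemma L_add (α β γ : ℝ) (g h : V2) : L α β γ (g + h) = L α β γ g + L α β γ h := by
  simp [L, AffineMap.coe_add, Pi.add_apply]; ring

lemma L_midpoint (α β γ : ℝ) (y z : V2) :
    L α β γ (midpoint ℝ y z) = (L α β γ y + L α β γ z) / 2 := by
  have h : midpoint ℝ y z = (2⁻¹ : ℝ) • (y + z) := by
    rw [midpoint_eq_smul_add]; norm_num
  rw [h]
  simp [L, AffineMap.coe_smul, AffineMap.coe_add, Pi.smul_apply, Pi.add_apply, smul_eq_mul]
  ring

lemma sum_unique {A B : Set V2} {α β γ : ℝ} {p q : ℝ} {u v : V2}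
    (hA : ∀ g ∈ A, L α β γ g ≤ p ∧ (L α β γ g = p → g = u))
    (hB : ∀ g ∈ B, L α β γ g ≤ q ∧ (L α β γ g = q → g = v)) :
    ∀ y ∈ A + B, L α β γ y ≤ p + q ∧ (L α β γ y = p + q → y = u + v) := by
  rintro _ ⟨g, hg, h, hh, rfl⟩
  obtain ⟨hg1, hg2⟩ := hA g hg
  obtain ⟨hh1, hh2⟩ := hB h hh
  rw [L_add]
  refine ⟨by linarith, fun he => ?_⟩
  have e1 : L α β γ g = p := by linarith
  have e2 : L α β γ h = q := by linarith
  rw [hg2 e1, hh2 e2]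

lemma midext_of_unique {S : Set V2} {α β γ m : ℝ} {x : V2} (hx : x ∈ S)
    (hm : L α β γ x = m)
    (hu : ∀ y ∈ S, L α β γ y ≤ m ∧ (L α β γ y = m → y = x)) : MidExt S x := by
  refine ⟨hx, fun y hy z hz he => ?_⟩
  obtain ⟨hy1, hy2⟩ := hu y hy
  obtain ⟨hz1, hz2⟩ := hu z hz
  have hmx : L α β γ x = (L α β γ y + L α β γ z) / 2 := by
    rw [he, L_midpoint]
  have ey : L α β γ y = m := by linarith
  have ez : L α β γ z = m := by linarith
  rw [hy2 ey, hz2 ez]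

lemma midext_transfer {S T : Set V2} (hS : Convex ℝ S)
    (φ : V2 →ᵃ[ℝ] V2) (hbij : Set.BijOn ⇑φ S T) {x : V2} (hx : MidExt S x) :
    MidExt T (φ x) := by
  refine ⟨hbij.mapsTo hx.1, fun y hy z hz he => ?_⟩
  obtain ⟨y', hy', rfl⟩ := hbij.surjOn hy
  obtain ⟨z', hz', rfl⟩ := hbij.surjOn hz
  have hm : midpoint ℝ y' z' ∈ S :=
    hS.segment_subset hy' hz' (midpoint_mem_segment _ _)
  have : φ x = φ (midpoint ℝ y' z') := by rw [AffineMap.map_midpoint]; exact he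
  have hxe : x = midpoint ℝ y' z' := hbij.injOn hx.1 hm this
  rw [hx.2 y' hy' z' hz' hxe]

lemma boundA_a : ∀ g ∈ setA, L 1 0 (-1) g ≤ 1/4 ∧ (L 1 0 (-1) g = 1/4 → g = mk2 (1/4) 0 (1/2)) := by
  intro g hg
  rw [memA_iff] at hg
  simp only [Set.mem_Icc] at hg
  obtain ⟨⟨a1,a2⟩,⟨b1,b2⟩,⟨c1,c2⟩,⟨d1,d2⟩⟩ := hg
  rw [eval_eq g 2 1] at a1 a2
  rw [eval_eq g 2 (-1)] at b1 b2
  rw [eval_eq g (-2) 1] at c1 c2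
  rw [eval_eq g (-2) (-1)] at d1 d2
  unfold L
  refine ⟨by linarith, fun he => ?_⟩
  refine ext3 ?_ ?_ ?_ <;> rw [mk2_apply] <;> linarith

lemma boundA_na : ∀ g ∈ setA, L (-1) 0 1 g ≤ 1/4 ∧ (L (-1) 0 1 g = 1/4 → g = mk2 (-1/4) 0 (1/2)) := by
  intro g hg
  rw [memA_iff] at hg
  simp only [Set.mem_Icc] at hg
  obtain ⟨⟨a1,a2⟩,⟨b1,b2⟩,⟨c1,c2⟩,⟨d1,d2⟩⟩ := hg
  rw [eval_eq g 2 1] at a1 a2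
  rw [eval_eq g 2 (-1)] at b1 b2
  rw [eval_eq g (-2) 1] at c1 c2
  rw [eval_eq g (-2) (-1)] at d1 d2
  unfold L
  refine ⟨by linarith, fun he => ?_⟩
  refine ext3 ?_ ?_ ?_ <;> rw [mk2_apply] <;> linarith

lemma boundA_b : ∀ g ∈ setA, L 0 1 (-1) g ≤ 1/2 ∧ (L 0 1 (-1) g = 1/2 → g = mk2 0 (1/2) (1/2)) := by
  intro g hg
  rw [memA_iff] at hg
  simp only [Set.mem_Icc] at hg
  obtain ⟨⟨a1,a2⟩,⟨b1,b2⟩,⟨c1,c2⟩,⟨d1,d2⟩⟩ := hg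
  rw [eval_eq g 2 1] at a1 a2
  rw [eval_eq g 2 (-1)] at b1 b2
  rw [eval_eq g (-2) 1] at c1 c2
  rw [eval_eq g (-2) (-1)] at d1 d2
  unfold L
  refine ⟨by linarith, fun he => ?_⟩
  refine ext3 ?_ ?_ ?_ <;> rw [mk2_apply] <;> linarith

lemma boundA_nb : ∀ g ∈ setA, L 0 (-1) 1 g ≤ 1/2 ∧ (L 0 (-1) 1 g = 1/2 → g = mk2 0 (-1/2) (1/2)) := by
  intro g hg
  rw [memA_iff] at hg
  simp only [Set.mem_Icc] at hg
  obtain ⟨⟨a1,a2⟩,⟨b1,b2⟩,⟨c1,c2⟩,⟨d1,d2⟩⟩ := hg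
  rw [eval_eq g 2 1] at a1 a2
  rw [eval_eq g 2 (-1)] at b1 b2
  rw [eval_eq g (-2) 1] at c1 c2
  rw [eval_eq g (-2) (-1)] at d1 d2
  unfold L
  refine ⟨by linarith, fun he => ?_⟩
  refine ext3 ?_ ?_ ?_ <;> rw [mk2_apply] <;> linarith

lemma boundA_c : ∀ g ∈ setA, L 0 0 1 g ≤ 1 ∧ (L 0 0 1 g = 1 → g = mk2 0 0 1) := by
  intro g hg
  rw [memA_iff] at hg
  simp only [Set.mem_Icc] at hg
  obtain ⟨⟨a1,a2⟩,⟨b1,b2⟩,⟨c1,c2⟩,⟨d1,d2⟩⟩ := hg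
  rw [eval_eq g 2 1] at a1 a2
  rw [eval_eq g 2 (-1)] at b1 b2
  rw [eval_eq g (-2) 1] at c1 c2
  rw [eval_eq g (-2) (-1)] at d1 d2
  unfold L
  refine ⟨by linarith, fun he => ?_⟩
  refine ext3 ?_ ?_ ?_ <;> rw [mk2_apply] <;> linarith

lemma boundA_nc : ∀ g ∈ setA, L 0 0 (-1) g ≤ 0 ∧ (L 0 0 (-1) g = 0 → g = mk2 0 0 0) := by
  intro g hg
  rw [memA_iff] at hg
  simp only [Set.mem_Icc] at hg
  obtain ⟨⟨a1,a2⟩,⟨b1,b2⟩,⟨c1,c2⟩,⟨d1,d2⟩⟩ := hg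
  rw [eval_eq g 2 1] at a1 a2
  rw [eval_eq g 2 (-1)] at b1 b2
  rw [eval_eq g (-2) 1] at c1 c2
  rw [eval_eq g (-2) (-1)] at d1 d2
  unfold L
  refine ⟨by linarith, fun he => ?_⟩
  refine ext3 ?_ ?_ ?_ <;> rw [mk2_apply] <;> linarith

lemma boundA_ab : ∀ g ∈ setA, L 1 1 (-2) g ≤ 1/2 ∧ (L 1 1 (-2) g = 1/2 → g = mk2 0 (1/2) (1/2)) := by
  intro g hg
  rw [memA_iff] at hg
  simp only [Set.mem_Icc] at hg
  obtain ⟨⟨a1,a2⟩,⟨b1,b2⟩,⟨c1,c2⟩,⟨d1,d2⟩⟩ := hg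
  rw [eval_eq g 2 1] at a1 a2
  rw [eval_eq g 2 (-1)] at b1 b2
  rw [eval_eq g (-2) 1] at c1 c2
  rw [eval_eq g (-2) (-1)] at d1 d2
  unfold L
  refine ⟨by linarith, fun he => ?_⟩
  refine ext3 ?_ ?_ ?_ <;> rw [mk2_apply] <;> linarith

lemma boundB_a : ∀ g ∈ setB, L 1 0 (-1) g ≤ 1/2 ∧ (L 1 0 (-1) g = 1/2 → g = mk2 (1/2) 0 (1/2)) := by
  intro g hg
  rw [memB_iff] at hg
  simp only [Set.mem_Icc] at hg
  obtain ⟨⟨a1,a2⟩,⟨b1,b2⟩,⟨c1,c2⟩,⟨d1,d2⟩⟩ := hg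
  rw [eval_eq g 1 2] at a1 a2
  rw [eval_eq g 1 (-2)] at b1 b2
  rw [eval_eq g (-1) 2] at c1 c2
  rw [eval_eq g (-1) (-2)] at d1 d2
  unfold L
  refine ⟨by linarith, fun he => ?_⟩
  refine ext3 ?_ ?_ ?_ <;> rw [mk2_apply] <;> linarith

lemma boundB_na : ∀ g ∈ setB, L (-1) 0 1 g ≤ 1/2 ∧ (L (-1) 0 1 g = 1/2 → g = mk2 (-1/2) 0 (1/2)) := by
  intro g hg
  rw [memB_iff] at hg
  simp only [Set.mem_Icc] at hg
  obtain ⟨⟨a1,a2⟩,⟨b1,b2⟩,⟨c1,c2⟩,⟨d1,d2⟩⟩ := hg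
  rw [eval_eq g 1 2] at a1 a2
  rw [eval_eq g 1 (-2)] at b1 b2
  rw [eval_eq g (-1) 2] at c1 c2
  rw [eval_eq g (-1) (-2)] at d1 d2
  unfold L
  refine ⟨by linarith, fun he => ?_⟩
  refine ext3 ?_ ?_ ?_ <;> rw [mk2_apply] <;> linarith

lemma boundB_b : ∀ g ∈ setB, L 0 1 (-1) g ≤ 1/4 ∧ (L 0 1 (-1) g = 1/4 → g = mk2 0 (1/4) (1/2)) := by
  intro g hg
  rw [memB_iff] at hg
  simp only [Set.mem_Icc] at hg
  obtain ⟨⟨a1,a2⟩,⟨b1,b2⟩,⟨c1,c2⟩,⟨d1,d2⟩⟩ := hg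
  rw [eval_eq g 1 2] at a1 a2
  rw [eval_eq g 1 (-2)] at b1 b2
  rw [eval_eq g (-1) 2] at c1 c2
  rw [eval_eq g (-1) (-2)] at d1 d2
  unfold L
  refine ⟨by linarith, fun he => ?_⟩
  refine ext3 ?_ ?_ ?_ <;> rw [mk2_apply] <;> linarith

lemma boundB_nb : ∀ g ∈ setB, L 0 (-1) 1 g ≤ 1/4 ∧ (L 0 (-1) 1 g = 1/4 → g = mk2 0 (-1/4) (1/2)) := by
  intro g hg
  rw [memB_iff] at hg
  simp only [Set.mem_Icc] at hg
  obtain ⟨⟨a1,a2⟩,⟨b1,b2⟩,⟨c1,c2⟩,⟨d1,d2⟩⟩ := hg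
  rw [eval_eq g 1 2] at a1 a2
  rw [eval_eq g 1 (-2)] at b1 b2
  rw [eval_eq g (-1) 2] at c1 c2
  rw [eval_eq g (-1) (-2)] at d1 d2
  unfold L
  refine ⟨by linarith, fun he => ?_⟩
  refine ext3 ?_ ?_ ?_ <;> rw [mk2_apply] <;> linarith

lemma boundB_c : ∀ g ∈ setB, L 0 0 1 g ≤ 1 ∧ (L 0 0 1 g = 1 → g = mk2 0 0 1) := by
  intro g hg
  rw [memB_iff] at hg
  simp only [Set.mem_Icc] at hg
  obtain ⟨⟨a1,a2⟩,⟨b1,b2⟩,⟨c1,c2⟩,⟨d1,d2⟩⟩ := hg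
  rw [eval_eq g 1 2] at a1 a2
  rw [eval_eq g 1 (-2)] at b1 b2
  rw [eval_eq g (-1) 2] at c1 c2
  rw [eval_eq g (-1) (-2)] at d1 d2
  unfold L
  refine ⟨by linarith, fun he => ?_⟩
  refine ext3 ?_ ?_ ?_ <;> rw [mk2_apply] <;> linarith

lemma boundB_nc : ∀ g ∈ setB, L 0 0 (-1) g ≤ 0 ∧ (L 0 0 (-1) g = 0 → g = mk2 0 0 0) := by
  intro g hg
  rw [memB_iff] at hg
  simp only [Set.mem_Icc] at hg
  obtain ⟨⟨a1,a2⟩,⟨b1,b2⟩,⟨c1,c2⟩,⟨d1,d2⟩⟩ := hg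
  rw [eval_eq g 1 2] at a1 a2
  rw [eval_eq g 1 (-2)] at b1 b2
  rw [eval_eq g (-1) 2] at c1 c2
  rw [eval_eq g (-1) (-2)] at d1 d2
  unfold L
  refine ⟨by linarith, fun he => ?_⟩
  refine ext3 ?_ ?_ ?_ <;> rw [mk2_apply] <;> linarith

lemma boundB_ab : ∀ g ∈ setB, L 1 1 (-2) g ≤ 1/2 ∧ (L 1 1 (-2) g = 1/2 → g = mk2 (1/2) 0 (1/2)) := by
  intro g hg
  rw [memB_iff] at hg
  simp only [Set.mem_Icc] at hg
  obtain ⟨⟨a1,a2⟩,⟨b1,b2⟩,⟨c1,c2⟩,⟨d1,d2⟩⟩ := hg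
  rw [eval_eq g 1 2] at a1 a2
  rw [eval_eq g 1 (-2)] at b1 b2
  rw [eval_eq g (-1) 2] at c1 c2
  rw [eval_eq g (-1) (-2)] at d1 d2
  unfold L
  refine ⟨by linarith, fun he => ?_⟩
  refine ext3 ?_ ?_ ?_ <;> rw [mk2_apply] <;> linarith


/-! ### Classification of midpoint-extreme points of the target set -/

lemma classify {h : V2} (hmd : MidExt setT h) :
    h = mk2 0 0 0 ∨ h = mk2 0 0 1 ∨ h = mk2 (1/6) 0 (1/2) ∨ h = mk2 (-1/6) 0 (1/2) ∨
      h = mk2 0 (1/6) (1/2) ∨ h = mk2 0 (-1/6) (1/2) := by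
  obtain ⟨hT, hmid⟩ := hmd
  rw [memT_iff] at hT
  simp only [Set.mem_Icc] at hT
  rw [eval_eq h 3 3, eval_eq h 3 (-3), eval_eq h (-3) 3, eval_eq h (-3) (-3)] at hT
  obtain ⟨⟨v11, v12⟩, ⟨v21, v22⟩, ⟨v31, v32⟩, ⟨v41, v42⟩⟩ := hT
  have hsub : ∀ p q r : ℝ, h - mk2 p q r = h + mk2 (-p) (-q) (-r) := by
    intro p q r
    refine ext3 ?_ ?_ ?_ <;>
      simp only [AffineMap.coe_sub, AffineMap.coe_add, Pi.sub_apply, Pi.add_apply, mk2_apply] <;>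
      ring
  have pert : ∀ p q r : ℝ, h + mk2 p q r ∈ setT → h + mk2 (-p) (-q) (-r) ∈ setT →
      p = 0 ∧ q = 0 ∧ r = 0 := by
    intro p q r h1 h2
    rw [← hsub] at h2
    have hmp : h = midpoint ℝ (h + mk2 p q r) (h - mk2 p q r) := (midpoint_add_sub ℝ h _).symm
    have heq := hmid _ h1 _ h2 hmp
    have e0 := congrArg (fun f : V2 => f ((0:ℝ),(0:ℝ))) heq
    have e1 := congrArg (fun f : V2 => f ((1:ℝ),(0:ℝ))) heq
    have e2 := congrArg (fun f : V2 => f ((0:ℝ),(1:ℝ))) heq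
    simp only [AffineMap.coe_add, AffineMap.coe_sub, Pi.add_apply, Pi.sub_apply, mk2_apply]
      at e0 e1 e2
    refine ⟨by linarith, by linarith, by linarith⟩
  have mem_pert : ∀ p q r : ℝ,
      0 ≤ -5*h (0,0) + 3*h (1,0) + 3*h (0,1) + (3*p+3*q+r) →
      -5*h (0,0) + 3*h (1,0) + 3*h (0,1) + (3*p+3*q+r) ≤ 1 →
      0 ≤ h (0,0) + 3*h (1,0) - 3*h (0,1) + (3*p-3*q+r) →
      h (0,0) + 3*h (1,0) - 3*h (0,1) + (3*p-3*q+r) ≤ 1 →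
      0 ≤ h (0,0) - 3*h (1,0) + 3*h (0,1) + (-3*p+3*q+r) →
      h (0,0) - 3*h (1,0) + 3*h (0,1) + (-3*p+3*q+r) ≤ 1 →
      0 ≤ 7*h (0,0) - 3*h (1,0) - 3*h (0,1) + (-3*p-3*q+r) →
      7*h (0,0) - 3*h (1,0) - 3*h (0,1) + (-3*p-3*q+r) ≤ 1 →
      h + mk2 p q r ∈ setT := by
    intro p q r e1 e2 e3 e4 e5 e6 e7 e8
    rw [memT_iff]
    simp only [AffineMap.coe_add, Pi.add_apply, mk2_apply, Set.mem_Icc]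
    rw [eval_eq h 3 3, eval_eq h 3 (-3), eval_eq h (-3) 3, eval_eq h (-3) (-3)]
    exact ⟨⟨by linarith, by linarith⟩, ⟨by linarith, by linarith⟩, ⟨by linarith, by linarith⟩,
      ⟨by linarith, by linarith⟩⟩
  by_cases h0 : h (0,0) = 0
  · left
    refine ext3 ?_ ?_ ?_ <;> rw [mk2_apply] <;> linarith
  by_cases h1 : h (0,0) = 1
  · right; left
    refine ext3 ?_ ?_ ?_ <;> rw [mk2_apply] <;> linarith
  have hc0 : 0 < h (0,0) := lt_of_le_of_ne (by linarith) (Ne.symm h0)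
  have hc1 : h (0,0) < 1 := lt_of_le_of_ne (by linarith) h1
  set m := min (h (0,0)) (1 - h (0,0)) with hmdef
  have hm1 : m ≤ h (0,0) := min_le_left _ _
  have hm2 : m ≤ 1 - h (0,0) := min_le_right _ _
  have hm0 : 0 < m := lt_min hc0 (by linarith)
  have hmor : m = h (0,0) ∨ m = 1 - h (0,0) := min_choice _ _
  have hs : 3*h (1,0) + 3*h (0,1) - 6*h (0,0) = m ∨
      3*h (1,0) + 3*h (0,1) - 6*h (0,0) = -m := by
    by_contra hns
    push_neg at hns
    obtain ⟨hn1, hn2⟩ := hns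
    have hsle : 3*h (1,0) + 3*h (0,1) - 6*h (0,0) ≤ m := by
      rcases hmor with he | he <;> rw [he] <;> linarith
    have hsge : -m ≤ 3*h (1,0) + 3*h (0,1) - 6*h (0,0) := by
      rcases hmor with he | he <;> rw [he] <;> linarith
    have hslt := lt_of_le_of_ne hsle hn1
    have hsgt := lt_of_le_of_ne hsge (fun hx => hn2 hx.symm)
    set ε := min (m - (3*h (1,0) + 3*h (0,1) - 6*h (0,0)))
      ((3*h (1,0) + 3*h (0,1) - 6*h (0,0)) + m) with hedef
    have he1 : ε ≤ m - (3*h (1,0) + 3*h (0,1) - 6*h (0,0)) := min_le_left _ _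
    have he2 : ε ≤ (3*h (1,0) + 3*h (0,1) - 6*h (0,0)) + m := min_le_right _ _
    have he0 : 0 < ε := lt_min (by linarith) (by linarith)
    obtain ⟨hp, -, -⟩ := pert (ε/6) (ε/6) 0
      (mem_pert _ _ _ (by linarith) (by linarith) (by linarith) (by linarith) (by linarith) (by linarith) (by linarith) (by linarith))
      (mem_pert _ _ _ (by linarith) (by linarith) (by linarith) (by linarith) (by linarith) (by linarith) (by linarith) (by linarith))
    linarith
  have ht : 3*h (1,0) - 3*h (0,1) = m ∨ 3*h (1,0) - 3*h (0,1) = -m := by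
    by_contra hns
    push_neg at hns
    obtain ⟨hn1, hn2⟩ := hns
    have htle : 3*h (1,0) - 3*h (0,1) ≤ m := by
      rcases hmor with he | he <;> rw [he] <;> linarith
    have htge : -m ≤ 3*h (1,0) - 3*h (0,1) := by
      rcases hmor with he | he <;> rw [he] <;> linarith
    have htlt := lt_of_le_of_ne htle hn1
    have htgt := lt_of_le_of_ne htge (fun hx => hn2 hx.symm)
    set ε := min (m - (3*h (1,0) - 3*h (0,1))) ((3*h (1,0) - 3*h (0,1)) + m) with hedef
    have he1 : ε ≤ m - (3*h (1,0) - 3*h (0,1)) := min_le_left _ _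
    have he2 : ε ≤ (3*h (1,0) - 3*h (0,1)) + m := min_le_right _ _
    have he0 : 0 < ε := lt_min (by linarith) (by linarith)
    obtain ⟨hp, -, -⟩ := pert (ε/6) (-(ε/6)) 0
      (mem_pert _ _ _ (by linarith) (by linarith) (by linarith) (by linarith) (by linarith) (by linarith) (by linarith) (by linarith))
      (mem_pert _ _ _ (by linarith) (by linarith) (by linarith) (by linarith) (by linarith) (by linarith) (by linarith) (by linarith))
    linarith
  have hc : h (0,0) = 1/2 := by
    by_contra hcne
    rcases lt_or_gt_of_ne hcne with hlt | hgt
    · have hmeq : m = h (0,0) := min_eq_left (by linarith)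
      set ε := min (h (0,0)) (1/2 - h (0,0)) with hedef
      have he1 : ε ≤ h (0,0) := min_le_left _ _
      have he2 : ε ≤ 1/2 - h (0,0) := min_le_right _ _
      have he0 : 0 < ε := lt_min hc0 (by linarith)
      rw [hmeq] at hs ht
      rcases hs with hs' | hs' <;> rcases ht with ht' | ht'
      · obtain ⟨-, -, hr⟩ := pert (ε/3) 0 ε
          (mem_pert _ _ _ (by linarith) (by linarith) (by linarith) (by linarith) (by linarith) (by linarith) (by linarith) (by linarith))
          (mem_pert _ _ _ (by linarith) (by linarith) (by linarith) (by linarith) (by linarith) (by linarith) (by linarith) (by linarith))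
        linarith
      · obtain ⟨-, -, hr⟩ := pert 0 (ε/3) ε
          (mem_pert _ _ _ (by linarith) (by linarith) (by linarith) (by linarith) (by linarith) (by linarith) (by linarith) (by linarith))
          (mem_pert _ _ _ (by linarith) (by linarith) (by linarith) (by linarith) (by linarith) (by linarith) (by linarith) (by linarith))
        linarith
      · obtain ⟨-, -, hr⟩ := pert 0 (-(ε/3)) ε
          (mem_pert _ _ _ (by linarith) (by linarith) (by linarith) (by linarith) (by linarith) (by linarith) (by linarith) (by linarith))
          (mem_pert _ _ _ (by linarith) (by linarith) (by linarith) (by linarith) (by linarith) (by linarith) (by linarith) (by linarith))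
        linarith
      · obtain ⟨-, -, hr⟩ := pert (-(ε/3)) 0 ε
          (mem_pert _ _ _ (by linarith) (by linarith) (by linarith) (by linarith) (by linarith) (by linarith) (by linarith) (by linarith))
          (mem_pert _ _ _ (by linarith) (by linarith) (by linarith) (by linarith) (by linarith) (by linarith) (by linarith) (by linarith))
        linarith
    · have hmeq : m = 1 - h (0,0) := min_eq_right (by linarith)
      set ε := min (1 - h (0,0)) (h (0,0) - 1/2) with hedef
      have he1 : ε ≤ 1 - h (0,0) := min_le_left _ _
      have he2 : ε ≤ h (0,0) - 1/2 := min_le_right _ _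
      have he0 : 0 < ε := lt_min (by linarith) (by linarith)
      rw [hmeq] at hs ht
      rcases hs with hs' | hs' <;> rcases ht with ht' | ht'
      · obtain ⟨-, -, hr⟩ := pert (ε/3) 0 (-ε)
          (mem_pert _ _ _ (by linarith) (by linarith) (by linarith) (by linarith) (by linarith) (by linarith) (by linarith) (by linarith))
          (mem_pert _ _ _ (by linarith) (by linarith) (by linarith) (by linarith) (by linarith) (by linarith) (by linarith) (by linarith))
        linarith
      · obtain ⟨-, -, hr⟩ := pert 0 (ε/3) (-ε)
          (mem_pert _ _ _ (by linarith) (by linarith) (by linarith) (by linarith) (by linarith) (by linarith) (by linarith) (by linarith))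
          (mem_pert _ _ _ (by linarith) (by linarith) (by linarith) (by linarith) (by linarith) (by linarith) (by linarith) (by linarith))
        linarith
      · obtain ⟨-, -, hr⟩ := pert 0 (-(ε/3)) (-ε)
          (mem_pert _ _ _ (by linarith) (by linarith) (by linarith) (by linarith) (by linarith) (by linarith) (by linarith) (by linarith))
          (mem_pert _ _ _ (by linarith) (by linarith) (by linarith) (by linarith) (by linarith) (by linarith) (by linarith) (by linarith))
        linarith
      · obtain ⟨-, -, hr⟩ := pert (-(ε/3)) 0 (-ε)
          (mem_pert _ _ _ (by linarith) (by linarith) (by linarith) (by linarith) (by linarith) (by linarith) (by linarith) (by linarith))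
          (mem_pert _ _ _ (by linarith) (by linarith) (by linarith) (by linarith) (by linarith) (by linarith) (by linarith) (by linarith))
        linarith
  have hm12 : m = 1/2 := by rcases hmor with he | he <;> rw [he, hc] <;> norm_num
  rw [hm12] at hs ht
  rcases hs with hs' | hs' <;> rcases ht with ht' | ht'
  · right; right; left
    refine ext3 ?_ ?_ ?_ <;> rw [mk2_apply] <;> linarith
  · right; right; right; right; left
    refine ext3 ?_ ?_ ?_ <;> rw [mk2_apply] <;> linarith
  · right; right; right; right; right
    refine ext3 ?_ ?_ ?_ <;> rw [mk2_apply] <;> linarith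
  · right; right; right; left
    refine ext3 ?_ ?_ ?_ <;> rw [mk2_apply] <;> linarith
/-! ### Convexity, sums, distinctness -/

lemma mk2_add (a b c a' b' c' : ℝ) :
    mk2 a b c + mk2 a' b' c' = mk2 (a+a') (b+b') (c+c') := by
  refine ext3 ?_ ?_ ?_ <;>
    simp only [AffineMap.coe_add, Pi.add_apply, mk2_apply] <;> ring

lemma mk2_inj {a b c a' b' c' : ℝ} (h : mk2 a b c = mk2 a' b' c') :
    a = a' ∧ b = b' ∧ c = c' := by
  have e0 := congrArg (fun f : V2 => f ((0:ℝ),(0:ℝ))) h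
  have e1 := congrArg (fun f : V2 => f ((1:ℝ),(0:ℝ))) h
  have e2 := congrArg (fun f : V2 => f ((0:ℝ),(1:ℝ))) h
  simp only [mk2_apply] at e0 e1 e2
  refine ⟨by linarith, by linarith, by linarith⟩

lemma convexA : Convex ℝ setA := by
  intro g hg k hk a b ha hb hab
  rw [memA_iff] at hg hk ⊢
  simp only [Set.mem_Icc] at hg hk ⊢
  simp only [AffineMap.coe_add, AffineMap.coe_smul, Pi.add_apply, Pi.smul_apply, smul_eq_mul]
  obtain ⟨⟨a1,a2⟩,⟨b1,b2⟩,⟨c1,c2⟩,⟨d1,d2⟩⟩ := hg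
  obtain ⟨⟨a1',a2'⟩,⟨b1',b2'⟩,⟨c1',c2'⟩,⟨d1',d2'⟩⟩ := hk
  refine ⟨⟨?_,?_⟩,⟨?_,?_⟩,⟨?_,?_⟩,⟨?_,?_⟩⟩ <;> nlinarith

lemma convexB : Convex ℝ setB := by
  intro g hg k hk a b ha hb hab
  rw [memB_iff] at hg hk ⊢
  simp only [Set.mem_Icc] at hg hk ⊢
  simp only [AffineMap.coe_add, AffineMap.coe_smul, Pi.add_apply, Pi.smul_apply, smul_eq_mul]
  obtain ⟨⟨a1,a2⟩,⟨b1,b2⟩,⟨c1,c2⟩,⟨d1,d2⟩⟩ := hg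
  obtain ⟨⟨a1',a2'⟩,⟨b1',b2'⟩,⟨c1',c2'⟩,⟨d1',d2'⟩⟩ := hk
  refine ⟨⟨?_,?_⟩,⟨?_,?_⟩,⟨?_,?_⟩,⟨?_,?_⟩⟩ <;> nlinarith

/-! ### The seven exposed points of the Minkowski sum -/

lemma memA1 : (mk2 (1/4) 0 (1/2)) ∈ setA := by
  rw [memA_iff]; norm_num [Set.mem_Icc]

lemma memB1 : (mk2 (1/2) 0 (1/2)) ∈ setB := by
  rw [memB_iff]; norm_num [Set.mem_Icc]

lemma midext1 : MidExt (setA + setB) (mk2 (3/4) 0 1) := by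
  have hsum := sum_unique boundA_a boundB_a
  have hx : (mk2 (3/4) 0 1) ∈ setA + setB :=
    Set.mem_add.mpr ⟨_, memA1, _, memB1, by rw [mk2_add]; norm_num⟩
  refine midext_of_unique hx ?_
    (fun y hy => ⟨(hsum y hy).1, fun he => by rw [(hsum y hy).2 he, mk2_add]; norm_num⟩)
  simp only [L, mk2_apply]; norm_num

lemma memA2 : (mk2 (-1/4) 0 (1/2)) ∈ setA := by
  rw [memA_iff]; norm_num [Set.mem_Icc]

lemma memB2 : (mk2 (-1/2) 0 (1/2)) ∈ setB := by
  rw [memB_iff]; norm_num [Set.mem_Icc]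

lemma midext2 : MidExt (setA + setB) (mk2 (-3/4) 0 1) := by
  have hsum := sum_unique boundA_na boundB_na
  have hx : (mk2 (-3/4) 0 1) ∈ setA + setB :=
    Set.mem_add.mpr ⟨_, memA2, _, memB2, by rw [mk2_add]; norm_num⟩
  refine midext_of_unique hx ?_
    (fun y hy => ⟨(hsum y hy).1, fun he => by rw [(hsum y hy).2 he, mk2_add]; norm_num⟩)
  simp only [L, mk2_apply]; norm_num

lemma memA3 : (mk2 0 (1/2) (1/2)) ∈ setA := by
  rw [memA_iff]; norm_num [Set.mem_Icc]

lemma memB3 : (mk2 0 (1/4) (1/2)) ∈ setB := by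
  rw [memB_iff]; norm_num [Set.mem_Icc]

lemma midext3 : MidExt (setA + setB) (mk2 0 (3/4) 1) := by
  have hsum := sum_unique boundA_b boundB_b
  have hx : (mk2 0 (3/4) 1) ∈ setA + setB :=
    Set.mem_add.mpr ⟨_, memA3, _, memB3, by rw [mk2_add]; norm_num⟩
  refine midext_of_unique hx ?_
    (fun y hy => ⟨(hsum y hy).1, fun he => by rw [(hsum y hy).2 he, mk2_add]; norm_num⟩)
  simp only [L, mk2_apply]; norm_num

lemma memA4 : (mk2 0 (-1/2) (1/2)) ∈ setA := by
  rw [memA_iff]; norm_num [Set.mem_Icc]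

lemma memB4 : (mk2 0 (-1/4) (1/2)) ∈ setB := by
  rw [memB_iff]; norm_num [Set.mem_Icc]

lemma midext4 : MidExt (setA + setB) (mk2 0 (-3/4) 1) := by
  have hsum := sum_unique boundA_nb boundB_nb
  have hx : (mk2 0 (-3/4) 1) ∈ setA + setB :=
    Set.mem_add.mpr ⟨_, memA4, _, memB4, by rw [mk2_add]; norm_num⟩
  refine midext_of_unique hx ?_
    (fun y hy => ⟨(hsum y hy).1, fun he => by rw [(hsum y hy).2 he, mk2_add]; norm_num⟩)
  simp only [L, mk2_apply]; norm_num

lemma memA5 : (mk2 0 0 1) ∈ setA := by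
  rw [memA_iff]; norm_num [Set.mem_Icc]

lemma memB5 : (mk2 0 0 1) ∈ setB := by
  rw [memB_iff]; norm_num [Set.mem_Icc]

lemma midext5 : MidExt (setA + setB) (mk2 0 0 2) := by
  have hsum := sum_unique boundA_c boundB_c
  have hx : (mk2 0 0 2) ∈ setA + setB :=
    Set.mem_add.mpr ⟨_, memA5, _, memB5, by rw [mk2_add]; norm_num⟩
  refine midext_of_unique hx ?_
    (fun y hy => ⟨(hsum y hy).1, fun he => by rw [(hsum y hy).2 he, mk2_add]; norm_num⟩)
  simp only [L, mk2_apply]; norm_num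

lemma memA6 : (mk2 0 0 0) ∈ setA := by
  rw [memA_iff]; norm_num [Set.mem_Icc]

lemma memB6 : (mk2 0 0 0) ∈ setB := by
  rw [memB_iff]; norm_num [Set.mem_Icc]

lemma midext6 : MidExt (setA + setB) (mk2 0 0 0) := by
  have hsum := sum_unique boundA_nc boundB_nc
  have hx : (mk2 0 0 0) ∈ setA + setB :=
    Set.mem_add.mpr ⟨_, memA6, _, memB6, by rw [mk2_add]; norm_num⟩
  refine midext_of_unique hx ?_
    (fun y hy => ⟨(hsum y hy).1, fun he => by rw [(hsum y hy).2 he, mk2_add]; norm_num⟩)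
  simp only [L, mk2_apply]; norm_num

lemma memA7 : (mk2 0 (1/2) (1/2)) ∈ setA := by
  rw [memA_iff]; norm_num [Set.mem_Icc]

lemma memB7 : (mk2 (1/2) 0 (1/2)) ∈ setB := by
  rw [memB_iff]; norm_num [Set.mem_Icc]

lemma midext7 : MidExt (setA + setB) (mk2 (1/2) (1/2) 1) := by
  have hsum := sum_unique boundA_ab boundB_ab
  have hx : (mk2 (1/2) (1/2) 1) ∈ setA + setB :=
    Set.mem_add.mpr ⟨_, memA7, _, memB7, by rw [mk2_add]; norm_num⟩
  refine midext_of_unique hx ?_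
    (fun y hy => ⟨(hsum y hy).1, fun he => by rw [(hsum y hy).2 he, mk2_add]; norm_num⟩)
  simp only [L, mk2_apply]; norm_num


open Classical in
noncomputable def F6 : Finset V2 :=
  {mk2 0 0 0, mk2 0 0 1, mk2 (1/6) 0 (1/2), mk2 (-1/6) 0 (1/2),
    mk2 0 (1/6) (1/2), mk2 0 (-1/6) (1/2)}

open Classical in
lemma F6_card : F6.card ≤ 6 := by
  refine le_trans (Finset.card_insert_le _ _) (Nat.add_le_add_right ?_ 1)
  refine le_trans (Finset.card_insert_le _ _) (Nat.add_le_add_right ?_ 1)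
  refine le_trans (Finset.card_insert_le _ _) (Nat.add_le_add_right ?_ 1)
  refine le_trans (Finset.card_insert_le _ _) (Nat.add_le_add_right ?_ 1)
  refine le_trans (Finset.card_insert_le _ _) (Nat.add_le_add_right ?_ 1)
  simp

noncomputable def Xv : Fin 7 → V2 :=
  ![mk2 (3/4) 0 1, mk2 (-3/4) 0 1, mk2 0 (3/4) 1, mk2 0 (-3/4) 1,
    mk2 0 0 2, mk2 0 0 0, mk2 (1/2) (1/2) 1]

lemma midextX : ∀ i : Fin 7, MidExt (setA + setB) (Xv i) := by
  intro i
  fin_cases i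
  · exact midext1
  · exact midext2
  · exact midext3
  · exact midext4
  · exact midext5
  · exact midext6
  · exact midext7

/-- For the rectangles
`P = conv{(2,1),(2,−1),(−2,1),(−2,−1)}`, `Q = conv{(1,2),(1,−2),(−1,2),(−1,−2)}` in `ℝ²`
and `R = [0,1] ⊆ ℝ`, there is no bijective affine map from
`Hom(P,R) + Hom(Q,R)` onto `Hom(P+Q, R)`, the hom-sets being subsets of the
3-dimensional vector space of affine maps `ℝ² → ℝ` and `+` the Minkowski sum there. -/
theorem no_affine_bijection_homSum_homMinkowskiSum :
    ¬ ∃ φ : ((ℝ × ℝ) →ᵃ[ℝ] ℝ) →ᵃ[ℝ] ((ℝ × ℝ) →ᵃ[ℝ] ℝ),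
      Set.BijOn ⇑φ
        ({g : (ℝ × ℝ) →ᵃ[ℝ] ℝ |
            ⇑g '' convexHull ℝ ({(2, 1), (2, -1), (-2, 1), (-2, -1)} : Set (ℝ × ℝ)) ⊆
              Set.Icc (0 : ℝ) 1} +
          {g : (ℝ × ℝ) →ᵃ[ℝ] ℝ |
            ⇑g '' convexHull ℝ ({(1, 2), (1, -2), (-1, 2), (-1, -2)} : Set (ℝ × ℝ)) ⊆
              Set.Icc (0 : ℝ) 1})
        {h : (ℝ × ℝ) →ᵃ[ℝ] ℝ |
          ⇑h '' (convexHull ℝ ({(2, 1), (2, -1), (-2, 1), (-2, -1)} : Set (ℝ × ℝ)) +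
              convexHull ℝ ({(1, 2), (1, -2), (-1, 2), (-1, -2)} : Set (ℝ × ℝ))) ⊆
            Set.Icc (0 : ℝ) 1} := by
  rintro ⟨φ, hφ⟩
  have hφ' : Set.BijOn ⇑φ (setA + setB) setT := hφ
  have hconv : Convex ℝ (setA + setB) := convexA.add convexB
  have hmem : ∀ i : Fin 7, φ (Xv i) ∈ F6 := by
    intro i
    have h6 := classify (midext_transfer hconv φ hφ' (midextX i))
    simp only [F6, Finset.mem_insert, Finset.mem_singleton]
    tauto
  have hinj : Set.InjOn (fun i => φ (Xv i)) ↑(Finset.univ : Finset (Fin 7)) := by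
    intro i _ j _ hij
    have hXij : Xv i = Xv j := hφ'.injOn (midextX i).1 (midextX j).1 hij
    fin_cases i <;> fin_cases j <;>
      first
        | rfl
        | (exfalso
           obtain ⟨e1, e2, e3⟩ := mk2_inj (by simpa [Xv] using hXij)
           revert e1 e2 e3; norm_num)
  have hcard := Finset.card_le_card_of_injOn _ (fun i _ => hmem i) hinj
  have : (7 : ℕ) ≤ 6 := by
    simpa using hcard.trans F6_card
  norm_num at this
end

section
/- Let U, V, W be finite-dimensional real vector spaces, let Z ⊆ U, X ⊆ V, Y ⊆ W be nonempty convex compact sets with Z affinely spanning U, and let f : X → Y be an affine map. Then the set K = {g : g an affine map U → V with g(Z) ⊆ X and f ∘ g constant on Z} is a convex compact subset of the vector space of affine maps U → V. Moreover, if Z, X, Y are polytopes and f is affine, then K is a polytope (the convex hull of a finite set) in that vector space. -/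
open Set Pointwise

section SliceLemmas

variable {E : Type*} [AddCommGroup E] [Module ℝ E]

/-- Core induction: a convex combination lying on the hyperplane `L = c` is a convex
combination of points of `T`, where `T` contains the generators on the hyperplane and
the crossings of segments between generators with the hyperplane. -/
private lemma slice_aux [DecidableEq E] (s : Finset E) (L : E →ₗ[ℝ] ℝ) (c : ℝ) (T : Set E)
    (hTs : ∀ y ∈ s, L y = c → y ∈ T)
    (hTm : ∀ u ∈ s, ∀ v ∈ s, L u < c → c < L v →
      ((L v - c)/(L v - L u)) • u + ((c - L u)/(L v - L u)) • v ∈ T) :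
    ∀ n : ℕ, ∀ w : E → ℝ, ((s.filter fun y => 0 < w y ∧ L y ≠ c).card = n) →
      (∀ y ∈ s, 0 ≤ w y) → (∑ y ∈ s, w y = 1) → (∑ y ∈ s, w y * L y = c) →
      (∑ y ∈ s, w y • y) ∈ convexHull ℝ T := by
  classical
  intro n
  induction n using Nat.strong_induction_on with
  | _ n ih =>
  intro w hcard hw0 hw1 hwL
  have hsum0 : ∑ y ∈ s, w y * (L y - c) = 0 := by
    have h1 : ∀ y ∈ s, w y * (L y - c) = w y * L y - w y * c := fun y _ => by ring
    rw [Finset.sum_congr rfl h1, Finset.sum_sub_distrib, hwL, ← Finset.sum_mul, hw1, one_mul,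
      sub_self]
  by_cases hLow : ∀ y ∈ s, 0 < w y → c ≤ L y
  · -- all the support lies on the hyperplane
    have hz : ∀ y ∈ s, w y * (L y - c) = 0 := by
      rw [Finset.sum_eq_zero_iff_of_nonneg] at hsum0
      · exact hsum0
      · intro y hy
        rcases (hw0 y hy).lt_or_eq with h | h
        · exact mul_nonneg (hw0 y hy) (sub_nonneg.2 (hLow y hy h))
        · rw [← h, zero_mul]
    have hLc : ∀ y ∈ s, w y ≠ 0 → L y = c := by
      intro y hy hwy
      rcases mul_eq_zero.1 (hz y hy) with h | h
      · exact absurd h hwy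
      · exact sub_eq_zero.1 h
    have hx : (s.filter fun y => w y ≠ 0).centerMass w id = ∑ y ∈ s, w y • y := by
      rw [Finset.centerMass_filter_ne_zero, Finset.centerMass_eq_of_sum_1 _ _ hw1]
      simp
    rw [← hx]
    apply Finset.centerMass_mem_convexHull
    · intro i hi; exact hw0 i (Finset.mem_filter.1 hi).1
    · rw [Finset.sum_filter_ne_zero, hw1]; exact one_pos
    · intro i hi
      obtain ⟨his, hiw⟩ := Finset.mem_filter.1 hi
      exact hTs i his (hLc i his hiw)
  · push_neg at hLow
    obtain ⟨u, hus, hwu, huc⟩ := hLow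
    have hvex : ∃ v ∈ s, 0 < w v ∧ c < L v := by
      by_contra hv
      push_neg at hv
      have hz : ∀ y ∈ s, w y * (L y - c) = 0 := by
        rw [Finset.sum_eq_zero_iff_of_nonpos] at hsum0
        · exact hsum0
        · intro y hy
          rcases (hw0 y hy).lt_or_eq with h | h
          · exact mul_nonpos_of_nonneg_of_nonpos (hw0 y hy) (sub_nonpos.2 (hv y hy h))
          · rw [← h, zero_mul]
      have := hz u hus
      nlinarith
    obtain ⟨v, hvs, hwv, hvc⟩ := hvex
    have huv : u ≠ v := by intro h; rw [h] at huc; linarith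
    set a := L v - c with ha_def
    set b := c - L u with hb_def
    set d := L v - L u with hd_def
    have ha : 0 < a := sub_pos.2 hvc
    have hb : 0 < b := sub_pos.2 huc
    have hdab : d = a + b := by rw [ha_def, hb_def, hd_def]; ring
    have hd : 0 < d := by rw [hdab]; linarith
    set m := (a/d) • u + (b/d) • v with hm_def
    have hmT : m ∈ T := hTm u hus v hvs huc hvc
    set δ := min (w u * d / a) (w v * d / b) with hδ_def
    have hδpos : 0 < δ := lt_min (by positivity) (by positivity)
    have hδa : δ * a / d ≤ w u :=
      (div_le_iff₀ hd).2 ((le_div_iff₀ ha).1 (min_le_left _ _))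
    have hδb : δ * b / d ≤ w v :=
      (div_le_iff₀ hd).2 ((le_div_iff₀ hb).1 (min_le_right _ _))
    have hsplit : δ * a / d + δ * b / d = δ := by
      rw [← add_div, ← mul_add, ← hdab, mul_div_assoc, div_self hd.ne', mul_one]
    have hδ1 : δ ≤ 1 := by
      have h2 : w u + w v ≤ 1 := by
        rw [← hw1]
        have hsub : ({u, v} : Finset E) ⊆ s := by
          intro y hy
          rcases Finset.mem_insert.1 hy with rfl | hy
          · exact hus
          · rw [Finset.mem_singleton.1 hy]; exact hvs
        have := Finset.sum_le_sum_of_subset_of_nonneg hsub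
          (fun i hi _ => hw0 i hi)
        simpa [Finset.sum_pair huv] using this
      linarith
    set w' : E → ℝ := fun y =>
      w y - ((if y = u then δ * a / d else 0) + (if y = v then δ * b / d else 0)) with hw'_def
    have hw'u : w' u = w u - δ * a / d := by simp [hw'_def, huv]
    have hw'v : w' v = w v - δ * b / d := by simp [hw'_def, huv.symm]
    have hw'le : ∀ y, w' y ≤ w y := by
      intro y
      have h1 : (0:ℝ) ≤ (if y = u then δ * a / d else 0) := by positivity
      have h2 : (0:ℝ) ≤ (if y = v then δ * b / d else 0) := by positivity
      simp only [hw'_def]; linarith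
    have hw'nonneg : ∀ y ∈ s, 0 ≤ w' y := by
      intro y hy
      rcases eq_or_ne y u with rfl | hyu
      · rw [hw'u]; linarith
      rcases eq_or_ne y v with rfl | hyv
      · rw [hw'v]; linarith
      · simp only [hw'_def, if_neg hyu, if_neg hyv]
        simpa using hw0 y hy
    have hw'sum : ∑ y ∈ s, w' y = 1 - δ := by
      simp only [hw'_def]
      rw [Finset.sum_sub_distrib, Finset.sum_add_distrib, hw1,
        Finset.sum_ite_eq' s u (fun _ => δ * a / d),
        Finset.sum_ite_eq' s v (fun _ => δ * b / d), if_pos hus, if_pos hvs, hsplit]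
    have hδm : δ • m = (δ*a/d) • u + (δ*b/d) • v := by
      rw [hm_def, smul_add, smul_smul, smul_smul, mul_div_assoc, mul_div_assoc]
    have hw'smul : ∑ y ∈ s, w' y • y = (∑ y ∈ s, w y • y) - δ • m := by
      simp only [hw'_def, sub_smul, add_smul, ite_smul, zero_smul]
      rw [Finset.sum_sub_distrib, Finset.sum_add_distrib,
        Finset.sum_ite_eq' s u (fun y => (δ * a / d) • y),
        Finset.sum_ite_eq' s v (fun y => (δ * b / d) • y), if_pos hus, if_pos hvs, hδm]
    have hcross : δ*a/d * L u + δ*b/d * L v = δ * c := by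
      rw [ha_def, hb_def, hd_def]
      field_simp [show L v - L u ≠ 0 from hd.ne']
      ring
    have hw'L : ∑ y ∈ s, w' y * L y = (1 - δ) * c := by
      simp only [hw'_def, sub_mul, add_mul, ite_mul, zero_mul]
      rw [Finset.sum_sub_distrib, Finset.sum_add_distrib,
        Finset.sum_ite_eq' s u (fun y => (δ * a / d) * L y),
        Finset.sum_ite_eq' s v (fun y => (δ * b / d) * L y), if_pos hus, if_pos hvs, hwL,
        hcross]
      ring
    rcases eq_or_lt_of_le hδ1 with hδeq | hδlt
    · -- δ = 1 : the point is exactly the crossing point m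
      have hs0 : ∑ y ∈ s, w' y = 0 := by rw [hw'sum, hδeq, sub_self]
      have h0 : ∀ y ∈ s, w' y = 0 := (Finset.sum_eq_zero_iff_of_nonneg hw'nonneg).1 hs0
      have hzero : ∑ y ∈ s, w' y • y = 0 :=
        Finset.sum_eq_zero fun y hy => by rw [h0 y hy, zero_smul]
      have hxm : (∑ y ∈ s, w y • y) = δ • m := by
        rw [hw'smul] at hzero
        exact sub_eq_zero.1 hzero
      rw [hxm, hδeq, one_smul]
      exact subset_convexHull ℝ T hmT
    · have h1δ : 0 < 1 - δ := sub_pos.2 hδlt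
      set w'' : E → ℝ := fun y => w' y / (1 - δ) with hw''_def
      have hw''nonneg : ∀ y ∈ s, 0 ≤ w'' y := fun y hy =>
        div_nonneg (hw'nonneg y hy) h1δ.le
      have hw''sum : ∑ y ∈ s, w'' y = 1 := by
        simp only [hw''_def]
        rw [← Finset.sum_div, hw'sum, div_self h1δ.ne']
      have hw''L : ∑ y ∈ s, w'' y * L y = c := by
        simp only [hw''_def, div_mul_eq_mul_div]
        rw [← Finset.sum_div, hw'L, mul_comm, mul_div_assoc, div_self h1δ.ne', mul_one]
      -- support strictly decreases
      have hw''pos : ∀ y, 0 < w'' y → 0 < w y := by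
        intro y hy
        have h1 : 0 < w' y := by
          by_contra h
          push_neg at h
          have : w'' y ≤ 0 := div_nonpos_of_nonpos_of_nonneg h h1δ.le
          linarith
        calc (0:ℝ) < w' y := h1
          _ ≤ w y := hw'le y
      have hsubset : (s.filter fun y => 0 < w'' y ∧ L y ≠ c) ⊆
          (s.filter fun y => 0 < w y ∧ L y ≠ c) := by
        intro y hy
        obtain ⟨hys, hwy, hLy⟩ := Finset.mem_filter.1 hy
        exact Finset.mem_filter.2 ⟨hys, hw''pos y hwy, hLy⟩
      have hex : ∃ x₀ ∈ (s.filter fun y => 0 < w y ∧ L y ≠ c),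
          x₀ ∉ (s.filter fun y => 0 < w'' y ∧ L y ≠ c) := by
        rcases min_cases (w u * d / a) (w v * d / b) with ⟨hmin, _⟩ | ⟨hmin, _⟩
        · refine ⟨u, Finset.mem_filter.2 ⟨hus, hwu, huc.ne⟩, ?_⟩
          intro hmem
          have hpos := (Finset.mem_filter.1 hmem).2.1
          have hu0 : w' u = 0 := by
            rw [hw'u, hδ_def, hmin]
            field_simp
            ring
          simp only [hw''_def, hu0, zero_div, lt_self_iff_false] at hpos
        · refine ⟨v, Finset.mem_filter.2 ⟨hvs, hwv, hvc.ne'⟩, ?_⟩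
          intro hmem
          have hpos := (Finset.mem_filter.1 hmem).2.1
          have hv0 : w' v = 0 := by
            rw [hw'v, hδ_def, hmin]
            field_simp
            ring
          simp only [hw''_def, hv0, zero_div, lt_self_iff_false] at hpos
      obtain ⟨x₀, hx₀mem, hx₀not⟩ := hex
      have hlt : (s.filter fun y => 0 < w'' y ∧ L y ≠ c).card < n := by
        rw [← hcard]
        exact Finset.card_lt_card ((Finset.ssubset_iff_of_subset hsubset).2 ⟨x₀, hx₀mem, hx₀not⟩)
      have hx' := ih _ hlt w'' rfl hw''nonneg hw''sum hw''L
      have hxx' : ∑ y ∈ s, w'' y • y = (1-δ)⁻¹ • (∑ y ∈ s, w' y • y) := by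
        rw [Finset.smul_sum]
        refine Finset.sum_congr rfl fun y _ => ?_
        simp only [hw''_def, div_eq_inv_mul, smul_smul]
      have hxeq : (∑ y ∈ s, w y • y) = δ • m + (1 - δ) • (∑ y ∈ s, w'' y • y) := by
        rw [hxx', smul_inv_smul₀ h1δ.ne', hw'smul, add_sub_cancel]
      rw [hxeq]
      exact (convex_convexHull ℝ T) (subset_convexHull ℝ T hmT) hx' hδpos.le h1δ.le (by ring)

/-- Slicing a polytope by one hyperplane `L = c` yields a polytope. -/
private lemma slice_one {S : Set E} (hS : S.Finite) (L : E →ₗ[ℝ] ℝ) (c : ℝ) :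
    ∃ T : Set E, T.Finite ∧ convexHull ℝ S ∩ {x | L x = c} = convexHull ℝ T := by
  classical
  refine ⟨(S ∩ {x | L x = c}) ∪
    (fun p : E × E => ((L p.2 - c)/(L p.2 - L p.1)) • p.1 + ((c - L p.1)/(L p.2 - L p.1)) • p.2)
      '' ((S ×ˢ S) ∩ {p | L p.1 < c ∧ c < L p.2}), ?_, ?_⟩
  · exact (hS.inter_of_left _).union (((hS.prod hS).inter_of_left _).image _)
  apply Subset.antisymm
  · rintro x ⟨hx, hxc⟩
    rw [hS.convexHull_eq] at hx
    obtain ⟨w, hw0, hw1, hwx⟩ := hx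
    have hxe : x = ∑ y ∈ hS.toFinset, w y • y := by
      rw [← hwx, Finset.centerMass_eq_of_sum_1 _ _ hw1]
      simp
    have hwL : ∑ y ∈ hS.toFinset, w y * L y = c := by
      rw [hxe] at hxc
      simpa [map_sum, map_smul, smul_eq_mul] using hxc
    rw [hxe]
    refine slice_aux hS.toFinset L c _ ?_ ?_ _ w rfl
      (fun y hy => hw0 y (hS.mem_toFinset.1 hy)) hw1 hwL
    · intro y hy hyL
      exact Or.inl ⟨hS.mem_toFinset.1 hy, hyL⟩
    · intro u hu v hv huc hvc
      exact Or.inr ⟨(u, v), ⟨⟨hS.mem_toFinset.1 hu, hS.mem_toFinset.1 hv⟩, huc, hvc⟩, rfl⟩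
  · refine convexHull_min ?_ ((convex_convexHull ℝ S).inter (convex_hyperplane L.isLinear c))
    rintro x (⟨hxS, hxc⟩ | ⟨⟨u, v⟩, ⟨⟨huS, hvS⟩, huc, hvc⟩, rfl⟩)
    · exact ⟨subset_convexHull ℝ S hxS, hxc⟩
    · have hd : (0:ℝ) < L v - L u := by simp only [mem_setOf_eq] at huc hvc; linarith
      simp only [mem_setOf_eq] at huc hvc
      constructor
      · refine (convex_convexHull ℝ S) (subset_convexHull ℝ S huS) (subset_convexHull ℝ S hvS)
          (div_nonneg (by linarith) hd.le) (div_nonneg (by linarith) hd.le) ?_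
        rw [← add_div, show L v - c + (c - L u) = L v - L u by ring]
        exact div_self hd.ne'
      · show L _ = c
        simp only [map_add, map_smul, smul_eq_mul]
        field_simp
        ring

/-- Slicing a polytope by finitely many linear kernel conditions yields a polytope. -/
private lemma slice_list (ls : List (E →ₗ[ℝ] ℝ)) :
    ∀ (S : Set E), S.Finite →
      ∃ T : Set E, T.Finite ∧
        convexHull ℝ S ∩ {x | ∀ L ∈ ls, L x = 0} = convexHull ℝ T := by
  induction ls with
  | nil => exact fun S hS => ⟨S, hS, by simp⟩
  | cons L ls ihl =>
    intro S hS
    obtain ⟨T₁, hT₁, h₁⟩ := slice_one hS L 0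
    obtain ⟨T₂, hT₂, h₂⟩ := ihl T₁ hT₁
    refine ⟨T₂, hT₂, ?_⟩
    rw [← h₂, ← h₁]
    ext x
    simp only [mem_inter_iff, mem_setOf_eq, List.forall_mem_cons]
    tauto

/-- Slicing a polytope by the kernel of a linear map to a finite-dimensional
space yields a polytope. -/
private lemma slice_ker {F : Type*} [AddCommGroup F] [Module ℝ F] [FiniteDimensional ℝ F]
    {S : Set E} (hS : S.Finite) (φ : E →ₗ[ℝ] F) :
    ∃ T : Set E, T.Finite ∧ convexHull ℝ S ∩ {x | φ x = 0} = convexHull ℝ T := by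
  classical
  set b := Module.finBasis ℝ F with hb
  set ls : List (E →ₗ[ℝ] ℝ) :=
    (List.finRange (Module.finrank ℝ F)).map (fun i => (b.coord i).comp φ) with hls
  obtain ⟨T, hT, hTeq⟩ := slice_list ls S hS
  refine ⟨T, hT, ?_⟩
  rw [← hTeq]
  congr 1
  ext x
  simp only [mem_setOf_eq, hls, List.mem_map, List.mem_finRange]
  constructor
  · intro h L hL
    obtain ⟨i, _, rfl⟩ := hL
    simp [h]
  · intro h
    refine (b.forall_coord_eq_zero_iff.1 fun i => ?_)
    simpa using h ((b.coord i).comp φ) ⟨i, trivial, rfl⟩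

end SliceLemmas

section Eval

variable {U V : Type*} [NormedAddCommGroup U] [NormedSpace ℝ U]
  [NormedAddCommGroup V] [NormedSpace ℝ V]

/-- A continuous affine map vanishing on an affinely spanning set is zero. -/
private lemma caffine_eq_zero_of_span {t : Set U} (ht : affineSpan ℝ t = ⊤)
    {g : U →ᴬ[ℝ] V} (hg : ∀ z ∈ t, g z = 0) : g = 0 := by
  obtain ⟨z₀, hz₀⟩ := AffineSubspace.nonempty_of_affineSpan_eq_top ℝ U U ht
  have hvs : vectorSpan ℝ t = ⊤ :=
    AffineSubspace.vectorSpan_eq_top_of_affineSpan_eq_top ℝ U U ht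
  have hspan : Submodule.span ℝ ((fun x => x -ᵥ z₀) '' t) = ⊤ := by
    rw [← vectorSpan_eq_span_vsub_set_right ℝ hz₀, hvs]
  have hlker : ∀ y ∈ (fun x => x -ᵥ z₀) '' t, y ∈ LinearMap.ker (g.contLinear : U →ₗ[ℝ] V) := by
    rintro y ⟨z, hz, rfl⟩
    have h := g.contLinear_map_vsub z z₀
    rw [hg z hz, hg z₀ hz₀] at h
    simpa using h
  have hker : LinearMap.ker (g.contLinear : U →ₗ[ℝ] V) = ⊤ := by
    rw [eq_top_iff, ← hspan]
    exact Submodule.span_le.2 hlker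
  ext u
  have h := g.contLinear_map_vsub u z₀
  have h2 : g.contLinear (u -ᵥ z₀) = 0 := by
    have : (u -ᵥ z₀) ∈ LinearMap.ker (g.contLinear : U →ₗ[ℝ] V) := by
      rw [hker]; trivial
    simpa using this
  rw [h2] at h
  have : g u - g z₀ = 0 := by simpa [vsub_eq_sub] using h.symm
  have hgu : g u = 0 := by rw [hg z₀ hz₀] at this; simpa using this
  simpa using hgu

end Eval

/-- Let `Z ⊆ U`, `X ⊆ V`, `Y ⊆ W` be nonempty convex compact sets in
finite-dimensional real vector spaces, with `Z` affinely spanning `U`, and let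
`f : X → Y` be affine. Then
`K = {g : affine U → V | g(Z) ⊆ X and f ∘ g constant on Z}` is a convex compact
subset of the vector space of affine maps `U → V`; moreover if `Z, X, Y` are
polytopes then `K` is a polytope there. -/
theorem kernelFunctor_convex_compact_polytope {U V W : Type*}
    [NormedAddCommGroup U] [NormedSpace ℝ U] [FiniteDimensional ℝ U]
    [NormedAddCommGroup V] [NormedSpace ℝ V] [FiniteDimensional ℝ V]
    [NormedAddCommGroup W] [NormedSpace ℝ W] [FiniteDimensional ℝ W]
    (Z : Set U) (X : Set V) (Y : Set W)
    (hZne : Z.Nonempty) (hZconv : Convex ℝ Z) (hZcomp : IsCompact Z)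
    (hZspan : affineSpan ℝ Z = ⊤)
    (hXne : X.Nonempty) (hXconv : Convex ℝ X) (hXcomp : IsCompact X)
    (hYne : Y.Nonempty) (hYconv : Convex ℝ Y) (hYcomp : IsCompact Y)
    (f : V →ᵃ[ℝ] W) (hf : ⇑f '' X ⊆ Y) :
    Convex ℝ {g : U →ᴬ[ℝ] V | ⇑g '' Z ⊆ X ∧ ∃ y ∈ Y, ∀ z ∈ Z, f (g z) = y} ∧
    IsCompact {g : U →ᴬ[ℝ] V | ⇑g '' Z ⊆ X ∧ ∃ y ∈ Y, ∀ z ∈ Z, f (g z) = y} ∧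
    (((∃ s : Finset U, Z = convexHull ℝ (s : Set U)) ∧
      (∃ s : Finset V, X = convexHull ℝ (s : Set V)) ∧
      (∃ s : Finset W, Y = convexHull ℝ (s : Set W))) →
      ∃ S : Set (U →ᴬ[ℝ] V), S.Finite ∧
        {g : U →ᴬ[ℝ] V | ⇑g '' Z ⊆ X ∧ ∃ y ∈ Y, ∀ z ∈ Z, f (g z) = y} =
          convexHull ℝ S) := by
  classical
  haveI : FiniteDimensional ℝ (U →ᴬ[ℝ] V) :=
    LinearEquiv.finiteDimensional
      (ContinuousAffineMap.toConstProdContinuousLinearMap ℝ U V).toLinearEquiv.symm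
  -- rewrite the set in a more convenient form
  set K' : Set (U →ᴬ[ℝ] V) :=
    {g | (∀ z ∈ Z, g z ∈ X) ∧ ∀ z ∈ Z, ∀ z' ∈ Z, f (g z) = f (g z')} with hK'_def
  have hKeq : {g : U →ᴬ[ℝ] V | ⇑g '' Z ⊆ X ∧ ∃ y ∈ Y, ∀ z ∈ Z, f (g z) = y} = K' := by
    ext g
    simp only [hK'_def, mem_setOf_eq, image_subset_iff]
    constructor
    · rintro ⟨hX, y, _, hc⟩
      exact ⟨fun z hz => hX hz, fun z hz z' hz' => by rw [hc z hz, hc z' hz']⟩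
    · rintro ⟨hX, hc⟩
      obtain ⟨z₀, hz₀⟩ := hZne
      exact ⟨fun z hz => hX z hz, f (g z₀), hf ⟨g z₀, hX z₀ hz₀, rfl⟩,
        fun z hz => hc z hz z₀ hz₀⟩
  rw [hKeq]
  -- convexity
  have hKconv : Convex ℝ K' := by
    intro g₁ hg₁ g₂ hg₂ a b ha hb hab
    obtain ⟨h1X, h1c⟩ := hg₁
    obtain ⟨h2X, h2c⟩ := hg₂
    have happly : ∀ z : U, (a • g₁ + b • g₂) z = a • g₁ z + b • g₂ z := fun z => rfl
    constructor
    · intro z hz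
      rw [happly]
      exact hXconv (h1X z hz) (h2X z hz) ha hb hab
    · intro z hz z' hz'
      rw [happly, happly, Convex.combo_affine_apply hab, Convex.combo_affine_apply hab,
        h1c z hz z' hz', h2c z hz z' hz']
  -- evaluation continuity
  have hevalcont : ∀ z : U, Continuous (fun g : U →ᴬ[ℝ] V => g z) := by
    intro z
    exact LinearMap.continuous_of_finiteDimensional
      ({ toFun := fun g : U →ᴬ[ℝ] V => g z
         map_add' := fun _ _ => rfl
         map_smul' := fun _ _ => rfl } : (U →ᴬ[ℝ] V) →ₗ[ℝ] V)
  -- closedness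
  have hKclosed : IsClosed K' := by
    have hA : IsClosed {g : U →ᴬ[ℝ] V | ∀ z ∈ Z, g z ∈ X} := by
      have : {g : U →ᴬ[ℝ] V | ∀ z ∈ Z, g z ∈ X} =
          ⋂ z ∈ Z, (fun g : U →ᴬ[ℝ] V => g z) ⁻¹' X := by
        ext g; simp
      rw [this]
      exact isClosed_biInter fun z _ => (hXcomp.isClosed).preimage (hevalcont z)
    have hB : IsClosed {g : U →ᴬ[ℝ] V | ∀ z ∈ Z, ∀ z' ∈ Z, f (g z) = f (g z')} := by
      have : {g : U →ᴬ[ℝ] V | ∀ z ∈ Z, ∀ z' ∈ Z, f (g z) = f (g z')} =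
          ⋂ z ∈ Z, ⋂ z' ∈ Z, {g : U →ᴬ[ℝ] V | f (g z) = f (g z')} := by
        ext g; simp
      rw [this]
      refine isClosed_biInter fun z _ => isClosed_biInter fun z' _ => ?_
      exact isClosed_eq
        ((f.continuous_of_finiteDimensional).comp (hevalcont z))
        ((f.continuous_of_finiteDimensional).comp (hevalcont z'))
    have : K' = {g : U →ᴬ[ℝ] V | ∀ z ∈ Z, g z ∈ X} ∩
        {g : U →ᴬ[ℝ] V | ∀ z ∈ Z, ∀ z' ∈ Z, f (g z) = f (g z')} := rfl
    rw [this]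
    exact hA.inter hB
  -- compactness
  have hKcomp : IsCompact K' := by
    obtain ⟨t0, ht0Z, ht0span, ht0ind⟩ := exists_affineIndependent ℝ U Z
    rw [hZspan] at ht0span
    have ht0fin : t0.Finite := finite_set_of_fin_dim_affineIndependent ℝ ht0ind
    haveI := ht0fin.fintype
    set Ev : (U →ᴬ[ℝ] V) →ₗ[ℝ] (t0 → V) :=
      { toFun := fun g i => g i
        map_add' := fun _ _ => rfl
        map_smul' := fun _ _ => rfl } with hEv_def
    have hEvker : LinearMap.ker Ev = ⊥ := by
      rw [LinearMap.ker_eq_bot']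
      intro g hg
      refine caffine_eq_zero_of_span ht0span fun z hz => ?_
      exact congrFun hg ⟨z, hz⟩
    have hemb := LinearMap.isClosedEmbedding_of_injective hEvker
    have hpi : IsCompact (Set.univ.pi fun _ : t0 => X) := isCompact_univ_pi fun _ => hXcomp
    refine IsCompact.of_isClosed_subset (hemb.isCompact_preimage hpi) hKclosed ?_
    intro g hg
    simp only [mem_preimage, mem_pi, mem_univ, forall_true_left]
    intro i
    exact hg.1 i (ht0Z i.2)
  refine ⟨hKconv, hKcomp, ?_⟩
  -- polytope part
  rintro ⟨⟨s, hZs⟩, ⟨t, hXt⟩, -⟩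
  have haffs : affineSpan ℝ (s : Set U) = ⊤ := by
    rw [← affineSpan_convexHull, ← hZs, hZspan]
  have hsZ : (s : Set U) ⊆ Z := by rw [hZs]; exact subset_convexHull ℝ _
  -- characterization of K' by conditions on the vertices s
  have hK2 : ∀ g : U →ᴬ[ℝ] V, g ∈ K' ↔
      ((∀ z ∈ s, g z ∈ X) ∧ ∀ z ∈ s, ∀ z' ∈ s, f (g z) = f (g z')) := by
    intro g
    constructor
    · rintro ⟨h1, h2⟩
      exact ⟨fun z hz => h1 z (hsZ hz), fun z hz z' hz' => h2 z (hsZ hz) z' (hsZ hz')⟩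
    · rintro ⟨h1, h2⟩
      have hne : (s : Set U).Nonempty := by
        rcases Set.eq_empty_or_nonempty (s : Set U) with he | hne
        · exfalso
          rw [hZs, he] at hZne
          simpa using hZne
        · exact hne
      obtain ⟨z₀, hz₀⟩ := hne
      have himg : ∀ z ∈ Z, g z ∈ X := by
        intro z hz
        rw [hZs] at hz
        have : g z ∈ ⇑g '' convexHull ℝ (s : Set U) := ⟨z, hz, rfl⟩
        rw [show (⇑g : U → V) = ⇑(g : U →ᵃ[ℝ] V) from rfl,
          AffineMap.image_convexHull] at this
        refine convexHull_min ?_ hXconv this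
        rintro x ⟨u, hu, rfl⟩
        exact h1 u hu
      refine ⟨himg, ?_⟩
      have hsubA : Z ⊆ {u : U | f (g u) = f (g z₀)} := by
        rw [hZs]
        refine convexHull_min ?_ ?_
        · intro u hu
          exact h2 u hu z₀ hz₀
        · exact Convex.affine_preimage (f.comp (g : U →ᵃ[ℝ] V)) (convex_singleton _)
      intro z hz z' hz'
      rw [hsubA hz, hsubA hz']
  haveI : Fintype {x // x ∈ s} := FinsetCoe.fintype s
  set ι := {x // x ∈ s} with hι
  set Ev : (U →ᴬ[ℝ] V) →ₗ[ℝ] (ι → V) :=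
    { toFun := fun g i => g i.1
      map_add' := fun _ _ => rfl
      map_smul' := fun _ _ => rfl } with hEv_def
  have hEvker : LinearMap.ker Ev = ⊥ := by
    rw [LinearMap.ker_eq_bot']
    intro g hg
    refine caffine_eq_zero_of_span haffs fun z hz => ?_
    exact congrFun hg ⟨z, hz⟩
  have hEvinj : Function.Injective Ev := LinearMap.ker_eq_bot.1 hEvker
  -- the constancy constraint as a linear map
  set Ψ : (ι → V) →ₗ[ℝ] (ι × ι → W) :=
    { toFun := fun v p => f.linear (v p.1 - v p.2)
      map_add' := by
        intro v w
        funext p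
        show f.linear ((v p.1 + w p.1) - (v p.2 + w p.2)) = _
        rw [add_sub_add_comm, map_add]
        rfl
      map_smul' := by
        intro c v
        funext p
        show f.linear (c • v p.1 - c • v p.2) = _
        rw [← smul_sub, map_smul]
        rfl } with hΨ_def
  -- the range constraint as a linear map
  obtain ⟨q, hq⟩ := Submodule.exists_isCompl (LinearMap.range Ev)
  set π : (ι → V) →ₗ[ℝ] q := q.linearProjOfIsCompl (LinearMap.range Ev) hq.symm with hπ_def
  have hπker : LinearMap.ker π = LinearMap.range Ev := Submodule.linearProjOfIsCompl_ker hq.symm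
  set Θ : (ι → V) →ₗ[ℝ] ((ι × ι → W) × q) := Ψ.prod π with hΘ_def
  have hΘzero : ∀ v, Θ v = 0 ↔ (Ψ v = 0 ∧ π v = 0) := by
    intro v
    constructor
    · intro h
      exact ⟨congrArg Prod.fst h, congrArg Prod.snd h⟩
    · rintro ⟨h1, h2⟩
      exact Prod.ext h1 h2
  -- the polytope inside the product space
  set S₀ : Set (ι → V) := Set.univ.pi fun _ : ι => (t : Set V) with hS₀_def
  have hS₀fin : S₀.Finite := Set.Finite.pi fun _ => t.finite_toSet
  have hS₀hull : convexHull ℝ S₀ = Set.univ.pi fun _ : ι => X := by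
    rw [hS₀_def, convexHull_pi, hXt]
  obtain ⟨T, hTfin, hTeq⟩ := slice_ker hS₀fin Θ
  -- image of K' under Ev
  have hEK : Ev '' K' = convexHull ℝ S₀ ∩ {v | Θ v = 0} := by
    apply Subset.antisymm
    · rintro _ ⟨g, hg, rfl⟩
      obtain ⟨h1, h2⟩ := (hK2 g).1 hg
      refine ⟨?_, ?_⟩
      · rw [hS₀hull]
        intro i _
        exact h1 i.1 i.2
      · rw [mem_setOf_eq, hΘzero]
        constructor
        · funext p
          show f.linear (g p.1.1 - g p.2.1) = 0
          have := f.linearMap_vsub (g p.1.1) (g p.2.1)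
          rw [vsub_eq_sub, vsub_eq_sub] at this
          rw [this, h2 p.1.1 p.1.2 p.2.1 p.2.2, sub_self]
        · have : Ev g ∈ LinearMap.ker π := by
            rw [hπker]
            exact ⟨g, rfl⟩
          exact this
    · rintro v ⟨hv1, hv2⟩
      rw [mem_setOf_eq, hΘzero] at hv2
      obtain ⟨hΨ0, hπ0⟩ := hv2
      have : v ∈ LinearMap.range Ev := by rw [← hπker]; exact hπ0
      obtain ⟨g, rfl⟩ := this
      refine ⟨g, (hK2 g).2 ⟨?_, ?_⟩, rfl⟩
      · intro z hz
        rw [hS₀hull] at hv1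
        exact hv1 ⟨z, hz⟩ (mem_univ _)
      · intro z hz z' hz'
        have := congrFun hΨ0 (⟨z, hz⟩, ⟨z', hz'⟩)
        show f (g z) = f (g z')
        have hz0 : f.linear (g z - g z') = 0 := this
        have hvs := f.linearMap_vsub (g z) (g z')
        rw [vsub_eq_sub, vsub_eq_sub] at hvs
        rw [hvs] at hz0
        exact sub_eq_zero.1 hz0
  have hTsub : T ⊆ Ev '' K' := by
    rw [hEK, hTeq]
    exact subset_convexHull ℝ T
  set S' : Set (U →ᴬ[ℝ] V) := (Ev ⁻¹' T) ∩ K' with hS'_def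
  have hS'fin : S'.Finite := ((hTfin.preimage (hEvinj.injOn)).inter_of_left _)
  have hES' : Ev '' S' = T := by
    apply Subset.antisymm
    · rintro _ ⟨g, ⟨hgT, _⟩, rfl⟩
      exact hgT
    · intro x hxT
      obtain ⟨g, hgK, rfl⟩ := hTsub hxT
      exact ⟨g, ⟨hxT, hgK⟩, rfl⟩
  refine ⟨S', hS'fin, ?_⟩
  have himg : Ev '' (convexHull ℝ S') = Ev '' K' := by
    rw [Ev.image_convexHull, hES', ← hTeq, ← hEK]
  exact (hEvinj.image_injective himg).symm
end

section
/- Let U, V, W be finite-dimensional real vector spaces, let Z ⊆ U, X ⊆ V, Y ⊆ W be nonempty convex compact sets with Z affinely spanning U, and let f : X → Y be an affine map. Let K = {g : g an affine map U → V with g(Z) ⊆ X and f ∘ g constant on Z}. Then dim K = (dim Z + 1)·(dim X − dim f(X)) + dim f(X). -/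
open Set Pointwise Module

section Aux

variable {U V : Type*}
    [NormedAddCommGroup U] [NormedSpace ℝ U] [FiniteDimensional ℝ U]
    [NormedAddCommGroup V] [NormedSpace ℝ V] [FiniteDimensional ℝ V]

/-- The submodule of continuous affine maps with linear part landing in `P` and
value at `0` in `D`. -/
def kerSub (D P : Submodule ℝ V) : Submodule ℝ (U →ᴬ[ℝ] V) where
  carrier := {h | (∀ u, h.contLinear u ∈ P) ∧ h 0 ∈ D}
  add_mem' := by
    rintro a b ⟨ha1, ha2⟩ ⟨hb1, hb2⟩
    refine ⟨fun u => ?_, ?_⟩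
    · rw [ContinuousAffineMap.add_contLinear]
      exact P.add_mem (ha1 u) (hb1 u)
    · rw [ContinuousAffineMap.add_apply]
      exact D.add_mem ha2 hb2
  zero_mem' := by
    refine ⟨fun u => ?_, ?_⟩
    · rw [ContinuousAffineMap.zero_contLinear]; simp
    · simp [ContinuousAffineMap.coe_zero]
  smul_mem' := by
    rintro t a ⟨ha1, ha2⟩
    refine ⟨fun u => ?_, ?_⟩
    · rw [ContinuousAffineMap.smul_contLinear]
      exact P.smul_mem t (ha1 u)
    · rw [ContinuousAffineMap.smul_apply]
      exact D.smul_mem t ha2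

theorem mem_kerSub {D P : Submodule ℝ V} {h : U →ᴬ[ℝ] V} :
    h ∈ kerSub D P ↔ (∀ u, h.contLinear u ∈ P) ∧ h 0 ∈ D := Iff.rfl

noncomputable def kerSubEquiv (D P : Submodule ℝ V) :
    (kerSub (U := U) D P) ≃ₗ[ℝ] D × (U →ₗ[ℝ] P) where
  toFun h := (⟨(h : U →ᴬ[ℝ] V) 0, h.2.2⟩,
    LinearMap.codRestrict P ((h : U →ᴬ[ℝ] V).contLinear : U →ₗ[ℝ] V) h.2.1)
  map_add' a b := by
    refine Prod.ext (Subtype.ext ?_) (LinearMap.ext fun u => Subtype.ext ?_) <;>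
      simp [ContinuousAffineMap.add_apply, ContinuousAffineMap.add_contLinear]
  map_smul' t a := by
    refine Prod.ext (Subtype.ext ?_) (LinearMap.ext fun u => Subtype.ext ?_) <;>
      simp [ContinuousAffineMap.smul_apply, ContinuousAffineMap.smul_contLinear]
  invFun p := ⟨(LinearMap.toContinuousLinearMap
      (P.subtype ∘ₗ p.2)).toContinuousAffineMap + ContinuousAffineMap.const ℝ U (p.1 : V), by
    refine ⟨fun u => ?_, ?_⟩
    · rw [ContinuousAffineMap.add_contLinear, ContinuousAffineMap.const_contLinear,
        add_zero, ContinuousLinearMap.toContinuousAffineMap_contLinear]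
      simpa using (p.2 u).2
    · simp only [ContinuousAffineMap.add_apply, ContinuousAffineMap.coe_const,
        Function.const_apply, ContinuousLinearMap.coe_toContinuousAffineMap]
      simpa using D.add_mem D.zero_mem (p.1).2⟩
  left_inv h := by
    apply Subtype.ext
    ext u
    have hd := congrFun ((h : U →ᴬ[ℝ] V).decomp) u
    simp only [ContinuousAffineMap.coe_contLinear, Pi.add_apply, Function.const_apply] at hd
    simp only [ContinuousAffineMap.add_apply, ContinuousAffineMap.coe_const,
      Function.const_apply, ContinuousLinearMap.coe_toContinuousAffineMap,
      LinearMap.coe_toContinuousLinearMap']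
    rw [hd]
    simp
  right_inv p := by
    refine Prod.ext (Subtype.ext ?_) (LinearMap.ext fun u => Subtype.ext ?_)
    · simp [ContinuousAffineMap.add_apply, ContinuousAffineMap.coe_const,
        ContinuousLinearMap.coe_toContinuousAffineMap]
    · simp [ContinuousAffineMap.add_contLinear, ContinuousAffineMap.const_contLinear,
        ContinuousLinearMap.toContinuousAffineMap_contLinear]

theorem finrank_kerSub (D P : Submodule ℝ V) :
    finrank ℝ (kerSub (U := U) D P) = finrank ℝ D + finrank ℝ U * finrank ℝ P := by
  rw [LinearEquiv.finrank_eq (kerSubEquiv D P), Module.finrank_prod, Module.finrank_linearMap]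

theorem exists_ball_aux (X : Set V) {x₀ : V} (hx : x₀ ∈ intrinsicInterior ℝ X) :
    ∃ ε > 0, ∀ v ∈ (affineSpan ℝ X).direction, ‖v‖ < ε → x₀ + v ∈ X := by
  obtain ⟨p, hp, rfl⟩ := hx
  obtain ⟨ε, hε, hball⟩ := Metric.mem_nhds_iff.1 (mem_interior_iff_mem_nhds.1 hp)
  refine ⟨ε, hε, fun v hv hvn => ?_⟩
  have hmem : v +ᵥ (p : V) ∈ affineSpan ℝ X := AffineSubspace.vadd_mem_of_mem_direction hv p.2
  have hball' : (⟨v +ᵥ (p : V), hmem⟩ : affineSpan ℝ X) ∈ Metric.ball p ε := by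
    rw [Metric.mem_ball, Subtype.dist_eq]
    simpa [dist_eq_norm] using hvn
  have := hball hball'
  simpa [add_comm] using this

end Aux

/-- Let `Z ⊆ U`, `X ⊆ V`, `Y ⊆ W` be nonempty convex compact sets in
finite-dimensional real vector spaces, with `Z` affinely spanning `U`, and let
`f : X → Y` be affine. For
`K = {g : affine U → V | g(Z) ⊆ X and f ∘ g constant on Z}` one has
`dim K = (dim Z + 1)·(dim X − dim f(X)) + dim f(X)`. -/
theorem convDim_kernelFunctor {U V W : Type*}
    [NormedAddCommGroup U] [NormedSpace ℝ U] [FiniteDimensional ℝ U]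
    [NormedAddCommGroup V] [NormedSpace ℝ V] [FiniteDimensional ℝ V]
    [NormedAddCommGroup W] [NormedSpace ℝ W] [FiniteDimensional ℝ W]
    (Z : Set U) (X : Set V) (Y : Set W)
    (hZne : Z.Nonempty) (hZconv : Convex ℝ Z) (hZcomp : IsCompact Z)
    (hZspan : affineSpan ℝ Z = ⊤)
    (hXne : X.Nonempty) (hXconv : Convex ℝ X) (hXcomp : IsCompact X)
    (hYne : Y.Nonempty) (hYconv : Convex ℝ Y) (hYcomp : IsCompact Y)
    (f : V →ᵃ[ℝ] W) (hf : ⇑f '' X ⊆ Y) :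
    convDim {g : U →ᴬ[ℝ] V | ⇑g '' Z ⊆ X ∧ ∃ y ∈ Y, ∀ z ∈ Z, f (g z) = y} =
      (convDim Z + 1) * (convDim X - convDim (⇑f '' X)) + convDim (⇑f '' X) := by
  classical
  obtain ⟨z₀, hz₀⟩ := hZne
  obtain ⟨x₀, hx₀i⟩ := hXne.intrinsicInterior hXconv
  have hx₀X : x₀ ∈ X := intrinsicInterior_subset hx₀i
  set D := (affineSpan ℝ X).direction with hD
  set P := D ⊓ LinearMap.ker f.linear with hP
  set c : U →ᴬ[ℝ] V := ContinuousAffineMap.const ℝ U x₀ with hc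
  set K : Set (U →ᴬ[ℝ] V) :=
    {g : U →ᴬ[ℝ] V | ⇑g '' Z ⊆ X ∧ ∃ y ∈ Y, ∀ z ∈ Z, f (g z) = y} with hKdef
  have hcapp : ∀ u : U, c u = x₀ := fun u => rfl
  have hcK : c ∈ K := by
    refine ⟨?_, ⟨f x₀, hf ⟨x₀, hx₀X, rfl⟩, fun z _ => rfl⟩⟩
    rintro _ ⟨z, _, rfl⟩
    exact hx₀X
  -- step 1: K ⊆ mk' c (kerSub D P)
  have hsub1 : K ⊆ (AffineSubspace.mk' c (kerSub D P) : Set (U →ᴬ[ℝ] V)) := by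
    rintro g ⟨himg, y, hyY, hconst⟩
    rw [SetLike.mem_coe, AffineSubspace.mem_mk', vsub_eq_sub]
    have hlin : ∀ u, g.contLinear u ∈ P := by
      have hspanle : vectorSpan ℝ Z ≤ P.comap (g.contLinear : U →ₗ[ℝ] V) := by
        rw [vectorSpan_def, Submodule.span_le]
        rintro v ⟨z1, hz1, z2, hz2, rfl⟩
        have h1 : g z1 ∈ X := himg ⟨z1, hz1, rfl⟩
        have h2 : g z2 ∈ X := himg ⟨z2, hz2, rfl⟩
        have hvs : g.contLinear (z1 -ᵥ z2) = g z1 -ᵥ g z2 :=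
          g.contLinear_map_vsub z1 z2
        simp only [SetLike.mem_coe, Submodule.mem_comap, ContinuousLinearMap.coe_coe]
        rw [hP, Submodule.mem_inf, hvs]
        constructor
        · exact AffineSubspace.vsub_mem_direction
            (subset_affineSpan ℝ X h1) (subset_affineSpan ℝ X h2)
        · rw [LinearMap.mem_ker, AffineMap.linearMap_vsub, hconst z1 hz1, hconst z2 hz2]
          simp
      intro u
      have hu : u ∈ vectorSpan ℝ Z := by
        rw [← direction_affineSpan, hZspan, AffineSubspace.direction_top]
        trivial
      exact hspanle hu
    refine mem_kerSub.2 ⟨fun u => ?_, ?_⟩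
    · rw [ContinuousAffineMap.sub_contLinear, hc, ContinuousAffineMap.const_contLinear,
        sub_zero]
      exact hlin u
    · have hgz₀ : g z₀ ∈ X := himg ⟨z₀, hz₀, rfl⟩
      have hdcmp := congrFun g.decomp z₀
      simp only [ContinuousAffineMap.coe_contLinear, Pi.add_apply, Function.const_apply] at hdcmp
      have h1 : g z₀ - x₀ ∈ D :=
        AffineSubspace.vsub_mem_direction (subset_affineSpan ℝ X hgz₀)
          (subset_affineSpan ℝ X hx₀X)
      have h2 : (g - c) 0 = (g z₀ - x₀) - g.contLinear z₀ := by
        rw [ContinuousAffineMap.sub_apply, hcapp]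
        have : (g.contLinear : U → V) z₀ = (g : U →ᵃ[ℝ] V).linear z₀ := by
          rw [ContinuousAffineMap.coe_contLinear]
        rw [show g 0 = g z₀ - (g : U →ᵃ[ℝ] V).linear z₀ by rw [hdcmp]; abel]
        rw [← this]
        abel
      rw [h2]
      have hPD : P ≤ D := inf_le_left
      exact D.sub_mem h1 (hPD (hlin z₀))
  -- step 2: mk' c (kerSub D P) ≤ affineSpan ℝ K
  have hsub2 : AffineSubspace.mk' c (kerSub D P) ≤ affineSpan ℝ K := by
    intro g hg
    have hm : g - c ∈ kerSub D P := by
      rw [← vsub_eq_sub]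
      exact AffineSubspace.mem_mk'.1 hg
    obtain ⟨hlin, h0⟩ := mem_kerSub.1 hm
    have hgz : ∀ z : U, g z - x₀ ∈ D := by
      intro z
      have hdz := congrFun (g - c).decomp z
      simp only [ContinuousAffineMap.coe_contLinear, Pi.add_apply, Function.const_apply]
        at hdz
      have : g z - x₀ = (g - c).contLinear z + (g - c) 0 := by
        rw [← ContinuousAffineMap.coe_contLinear] at hdz
        rw [← hdz, ContinuousAffineMap.sub_apply, hcapp]
      rw [this]
      have hPD : P ≤ D := inf_le_left
      exact D.add_mem (hPD (hlin z)) h0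
    obtain ⟨M, hM⟩ := hZcomp.exists_bound_of_continuousOn
      ((g.continuous.sub continuous_const).continuousOn (s := Z))
    obtain ⟨ε, hε, hball⟩ := exists_ball_aux X hx₀i
    set t : ℝ := ε / (max M 0 + 1) with ht
    have hmax : (0 : ℝ) < max M 0 + 1 := by positivity
    have htpos : 0 < t := div_pos hε hmax
    have hsmall : ∀ z ∈ Z, ‖t • (g z - x₀)‖ < ε := by
      intro z hz
      rw [norm_smul, Real.norm_eq_abs, abs_of_pos htpos]
      calc t * ‖g z - x₀‖ ≤ t * max M 0 :=
            mul_le_mul_of_nonneg_left (le_trans (hM z hz) (le_max_left _ _)) htpos.le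
        _ < t * (max M 0 + 1) := by
            exact mul_lt_mul_of_pos_left (lt_add_one _) htpos
        _ = ε := by rw [ht]; field_simp
    set g' : U →ᴬ[ℝ] V := t • (g - c) + c with hg'
    have hg'app : ∀ z : U, g' z = x₀ + t • (g z - x₀) := by
      intro z
      rw [hg', ContinuousAffineMap.add_apply, ContinuousAffineMap.smul_apply,
        ContinuousAffineMap.sub_apply, hcapp]
      abel
    have hg'X : ∀ z ∈ Z, g' z ∈ X := by
      intro z hz
      rw [hg'app]
      exact hball _ (D.smul_mem t (hgz z)) (hsmall z hz)
    have hg'K : g' ∈ K := by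
      refine ⟨?_, ⟨f (g' z₀), hf ⟨g' z₀, hg'X z₀ hz₀, rfl⟩, fun z hz => ?_⟩⟩
      · rintro _ ⟨z, hz, rfl⟩
        exact hg'X z hz
      · have hkermem : g'.contLinear (z - z₀) ∈ LinearMap.ker f.linear := by
          have : g'.contLinear = t • (g - c).contLinear := by
            rw [hg', ContinuousAffineMap.add_contLinear, hc,
              ContinuousAffineMap.const_contLinear, add_zero,
              ContinuousAffineMap.smul_contLinear]
          rw [this]
          have := hlin (z - z₀)
          rw [hP, Submodule.mem_inf] at this
          exact (LinearMap.ker f.linear).smul_mem t this.2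
        have hvs : g'.contLinear (z -ᵥ z₀) = g' z -ᵥ g' z₀ := g'.contLinear_map_vsub z z₀
        have hlv := f.linearMap_vsub (g' z) (g' z₀)
        rw [← hvs] at hlv
        have hz' : f (g' z) - f (g' z₀) = 0 := by
          rw [← vsub_eq_sub, ← hlv]
          exact LinearMap.mem_ker.1 hkermem
        exact sub_eq_zero.1 hz'
    have key : t⁻¹ • (g' -ᵥ c) +ᵥ c = g := by
      rw [vsub_eq_sub, vadd_eq_add, hg', add_sub_cancel_right, smul_smul,
        inv_mul_cancel₀ htpos.ne', one_smul, sub_add_cancel]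
    rw [← key]
    exact AffineSubspace.smul_vsub_vadd_mem _ t⁻¹ (subset_affineSpan ℝ _ hg'K)
      (subset_affineSpan ℝ _ hcK) (subset_affineSpan ℝ _ hcK)
  have hspan : affineSpan ℝ K = AffineSubspace.mk' c (kerSub D P) :=
    le_antisymm (affineSpan_le.2 hsub1) hsub2
  -- dimensions
  have hKdim : convDim K = finrank ℝ D + finrank ℝ U * finrank ℝ P := by
    rw [convDim, hspan, AffineSubspace.direction_mk', finrank_kerSub]
  have hZdim : convDim Z = finrank ℝ U := by
    rw [convDim, hZspan, AffineSubspace.direction_top, finrank_top]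
  have hXdim : convDim X = finrank ℝ D := rfl
  have hfXdim : convDim (⇑f '' X) = finrank ℝ (D.map f.linear) := by
    rw [convDim, ← AffineSubspace.map_span, AffineSubspace.map_direction]
  have hrn : finrank ℝ (D.map f.linear) + finrank ℝ P = finrank ℝ D := by
    have h1 := LinearMap.finrank_range_add_finrank_ker (f.linear.domRestrict D)
    rw [LinearMap.range_domRestrict, LinearMap.ker_domRestrict] at h1
    have h2 : Submodule.comap D.subtype (LinearMap.ker f.linear) =
        Submodule.comap D.subtype P := by
      ext ⟨v, hv⟩
      simp [hP, Submodule.mem_comap, hv]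
    rw [h2, LinearEquiv.finrank_eq
      (Submodule.comapSubtypeEquivOfLe (inf_le_left : P ≤ D))] at h1
    exact h1
  rw [hKdim, hZdim, hXdim, hfXdim]
  have hsubeq : finrank ℝ D - finrank ℝ (D.map f.linear) = finrank ℝ P := by omega
  rw [hsubeq, ← hrn]
  ring
end

section
/- Let X ⊂ ℝ^d, Y ⊂ ℝ^e, Z ⊂ ℝ^m be nonempty polytopes with dim X = d, and let f : Y → X be an affine map with dim f(Y) = dim X. Identify the space of affine maps ℝ^m → ℝ^d with ℝ^{d(m+1)}. Then the set ⓢ(Z, f) = {g : g an affine map ℝ^m → ℝ^d with g(Z) ⊆ X and f(Y) ⊆ g(Z)} is a semialgebraic subset of ℝ^{d(m+1)}. -/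
open Set Pointwise

/-- A subset of `ℝ^N` is semialgebraic if it is a finite union of sets described by
finitely many polynomial equations and strict polynomial inequalities. -/
def IsSemialgebraic {N : ℕ} (S : Set (Fin N → ℝ)) : Prop :=
  ∃ (k : ℕ) (E F : Fin k → Finset (MvPolynomial (Fin N) ℝ)),
    S = ⋃ i : Fin k,
      {x | (∀ p ∈ E i, MvPolynomial.eval x p = 0) ∧ ∀ q ∈ F i, 0 < MvPolynomial.eval x q}

set_option linter.unusedVariables false
set_option linter.unusedSectionVars false
set_option maxHeartbeats 1000000

open Matrix MvPolynomial

namespace SAProof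

open MvPolynomial

variable {N : ℕ}

/-- basic semialgebraic set -/
def Basic (E F : Finset (MvPolynomial (Fin N) ℝ)) : Set (Fin N → ℝ) :=
  {x | (∀ p ∈ E, MvPolynomial.eval x p = 0) ∧ ∀ q ∈ F, 0 < MvPolynomial.eval x q}

lemma isSemialgebraic_def {S : Set (Fin N → ℝ)} :
    IsSemialgebraic S ↔ ∃ (k : ℕ) (E F : Fin k → Finset (MvPolynomial (Fin N) ℝ)),
      S = ⋃ i : Fin k, Basic (E i) (F i) := Iff.rfl

lemma isSA_of_iUnion_basic {γ : Type*} [Fintype γ]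
    (E F : γ → Finset (MvPolynomial (Fin N) ℝ)) :
    IsSemialgebraic (⋃ i : γ, Basic (E i) (F i)) := by
  classical
  obtain e := Fintype.equivFin γ
  refine isSemialgebraic_def.2 ⟨Fintype.card γ, E ∘ e.symm, F ∘ e.symm, ?_⟩
  ext x
  simp only [mem_iUnion, Function.comp_apply]
  exact ⟨fun ⟨i, hi⟩ => ⟨e i, by simpa using hi⟩, fun ⟨i, hi⟩ => ⟨e.symm i, hi⟩⟩

lemma isSA_iUnion {γ : Type*} [Fintype γ] {S : γ → Set (Fin N → ℝ)}
    (h : ∀ i, IsSemialgebraic (S i)) : IsSemialgebraic (⋃ i, S i) := by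
  classical
  choose k E F hS using fun i => isSemialgebraic_def.1 (h i)
  have : (⋃ i, S i) = ⋃ p : Σ i : γ, Fin (k i), Basic (E p.1 p.2) (F p.1 p.2) := by
    rw [iUnion_sigma]
    exact iUnion_congr fun i => (hS i)
  rw [this]
  exact isSA_of_iUnion_basic _ _

lemma basic_inter_pi {γ : Type*} [Fintype γ] [DecidableEq (MvPolynomial (Fin N) ℝ)]
    (E F : γ → Finset (MvPolynomial (Fin N) ℝ)) :
    (⋂ i, Basic (E i) (F i)) =
      Basic (Finset.univ.biUnion E) (Finset.univ.biUnion F) := by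
  ext x
  simp only [mem_iInter, Basic, mem_setOf_eq, Finset.mem_biUnion, Finset.mem_univ, true_and]
  exact ⟨fun h => ⟨fun p ⟨i, hp⟩ => (h i).1 p hp, fun q ⟨i, hq⟩ => (h i).2 q hq⟩,
    fun h i => ⟨fun p hp => h.1 p ⟨i, hp⟩, fun q hq => h.2 q ⟨i, hq⟩⟩⟩

lemma isSA_iInter {γ : Type*} [Fintype γ] {S : γ → Set (Fin N → ℝ)}
    (h : ∀ i, IsSemialgebraic (S i)) : IsSemialgebraic (⋂ i, S i) := by
  classical
  choose k E F hS using fun i => isSemialgebraic_def.1 (h i)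
  have : (⋂ i, S i) = ⋃ c : ∀ i : γ, Fin (k i),
      Basic (Finset.univ.biUnion fun i => E i (c i))
        (Finset.univ.biUnion fun i => F i (c i)) := by
    ext x
    simp only [mem_iInter, mem_iUnion]
    constructor
    · intro hx
      have : ∀ i, ∃ j, x ∈ Basic (E i j) (F i j) := by
        intro i
        have := hx i
        rw [hS i] at this
        simpa [mem_iUnion] using this
      choose c hc using this
      exact ⟨c, by rw [← basic_inter_pi]; exact mem_iInter.2 hc⟩
    · rintro ⟨c, hc⟩ i
      rw [← basic_inter_pi] at hc
      rw [hS i]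
      exact mem_iUnion.2 ⟨c i, mem_iInter.1 hc i⟩
  rw [this]
  exact isSA_of_iUnion_basic _ _

lemma isSA_inter2 {S T : Set (Fin N → ℝ)} (hS : IsSemialgebraic S) (hT : IsSemialgebraic T) :
    IsSemialgebraic (S ∩ T) := by
  have : S ∩ T = ⋂ b : Bool, (bif b then S else T) := by
    ext x; simp [Bool.forall_bool, and_comm]
  rw [this]
  exact isSA_iInter fun b => by cases b <;> simpa

lemma isSA_eq (p : MvPolynomial (Fin N) ℝ) :
    IsSemialgebraic {x | MvPolynomial.eval x p = 0} := by
  refine isSemialgebraic_def.2 ⟨1, fun _ => {p}, fun _ => ∅, ?_⟩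
  ext x; simp [Basic]

lemma isSA_pos (p : MvPolynomial (Fin N) ℝ) :
    IsSemialgebraic {x | 0 < MvPolynomial.eval x p} := by
  refine isSemialgebraic_def.2 ⟨1, fun _ => ∅, fun _ => {p}, ?_⟩
  ext x; simp [Basic]

lemma isSA_nonneg (p : MvPolynomial (Fin N) ℝ) :
    IsSemialgebraic {x | 0 ≤ MvPolynomial.eval x p} := by
  have : {x | 0 ≤ MvPolynomial.eval x p}
      = ⋃ b : Bool, (bif b then {x | MvPolynomial.eval x p = 0} else {x | 0 < MvPolynomial.eval x p}) := by
    ext x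
    simp only [mem_setOf_eq, mem_iUnion, Bool.exists_bool, cond_false, cond_true, mem_setOf_eq]
    constructor
    · intro hx
      rcases hx.lt_or_eq with h | h
      · exact Or.inl h
      · exact Or.inr h.symm
    · rintro (h | h)
      · exact h.le
      · exact h.ge
  rw [this]
  exact isSA_iUnion fun b => by cases b <;> simpa using (by first | exact isSA_pos p | exact isSA_eq p)


/-- Append a leading 1 coordinate. -/
def hat {R : Type*} [One R] {d : ℕ} (v : Fin d → R) : Fin (d + 1) → R := Fin.cons 1 v

/-- Gram matrix of a family of vectors under the dot product. -/
def gram {R : Type*} [CommRing R] {ι : Type*} [Fintype ι] {n : Type*} [Fintype n]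
    (u : ι → n → R) : Matrix ι ι R := Matrix.of fun i j => u i ⬝ᵥ u j

variable {ι : Type*} [Fintype ι] [DecidableEq ι] {D : ℕ}

lemma dot_sum_smul (u : ι → Fin D → ℝ) (μ : ι → ℝ) (x : Fin D → ℝ) :
    x ⬝ᵥ (∑ i, μ i • u i) = ∑ i, μ i * (x ⬝ᵥ u i) := by
  simp only [dotProduct, Finset.sum_apply, Pi.smul_apply, smul_eq_mul, Finset.mul_sum]
  rw [Finset.sum_comm]
  exact Finset.sum_congr rfl fun i _ => Finset.sum_congr rfl fun a _ => by ring

lemma sum_smul_dot (u : ι → Fin D → ℝ) (μ : ι → ℝ) (x : Fin D → ℝ) :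
    (∑ i, μ i • u i) ⬝ᵥ x = ∑ i, μ i * (u i ⬝ᵥ x) := by
  rw [dotProduct_comm, dot_sum_smul]
  exact Finset.sum_congr rfl fun i _ => by rw [dotProduct_comm]

lemma gram_mulVec (u : ι → Fin D → ℝ) (μ : ι → ℝ) (j : ι) :
    (gram u *ᵥ μ) j = u j ⬝ᵥ (∑ i, μ i • u i) := by
  rw [dot_sum_smul]
  simp only [mulVec, dotProduct, gram, Matrix.of_apply]
  exact Finset.sum_congr rfl fun i _ => by ring

lemma gram_posDef (u : ι → Fin D → ℝ) (h : LinearIndependent ℝ u) : (gram u).PosDef := by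
  rw [posDef_iff_dotProduct_mulVec]
  constructor
  · ext i j
    simp [gram, conjTranspose_apply, dotProduct_comm]
  · intro x hx
    have hsne : (∑ i, x i • u i) ≠ 0 := by
      intro h0
      exact hx (funext fun i => Fintype.linearIndependent_iff.1 h x h0 i)
    have key : star x ⬝ᵥ (gram u *ᵥ x) = (∑ i, x i • u i) ⬝ᵥ (∑ i, x i • u i) :=
      calc star x ⬝ᵥ (gram u *ᵥ x) = ∑ j, x j * (gram u *ᵥ x) j := by
            simp [dotProduct]
        _ = ∑ j, x j * (u j ⬝ᵥ (∑ i, x i • u i)) :=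
            Finset.sum_congr rfl fun j _ => by rw [gram_mulVec]
        _ = _ := (sum_smul_dot u x _).symm
    rw [key]
    have h0 : 0 ≤ (∑ i, x i • u i) ⬝ᵥ (∑ i, x i • u i) :=
      Finset.sum_nonneg fun a _ => mul_self_nonneg _
    rcases h0.lt_or_eq with h' | h'
    · exact h'
    · exact absurd (dotProduct_self_eq_zero.1 h'.symm) hsne

lemma gram_det_pos (u : ι → Fin D → ℝ) (h : LinearIndependent ℝ u) : 0 < (gram u).det :=
  (gram_posDef u h).det_pos

/-- Forward: the cramer vector of the dot products recovers the coefficients. -/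
lemma cramer_of_comb (u : ι → Fin D → ℝ) (h : LinearIndependent ℝ u) (μ : ι → ℝ) :
    Matrix.cramer (gram u) (fun j => u j ⬝ᵥ (∑ i, μ i • u i)) = (gram u).det • μ := by
  set G := gram u
  set b : ι → ℝ := fun j => u j ⬝ᵥ (∑ i, μ i • u i)
  have hb : b = G *ᵥ μ := funext fun j => (gram_mulVec u μ j).symm
  have hdet : IsUnit G.det := (gram_det_pos u h).ne'.isUnit
  have h1 : G *ᵥ (Matrix.cramer G b) = G *ᵥ (G.det • μ) := by
    rw [Matrix.mulVec_cramer, hb, Matrix.mulVec_smul]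
  have hinj : Function.Injective (G.mulVec) :=
    Matrix.mulVec_injective_iff_isUnit.2 ((Matrix.isUnit_iff_isUnit_det G).2 hdet)
  exact hinj h1


section real
variable {ι : Type*} [Fintype ι] [DecidableEq ι] {D : ℕ}

/-- Backward direction: from the determinant conditions, recover a nonnegative combination. -/
lemma comb_of_conditions (u : ι → Fin D → ℝ) (w : Fin D → ℝ)
    (hdet : 0 < (gram u).det)
    (hcr : ∀ i, 0 ≤ Matrix.cramer (gram u) (fun j => u j ⬝ᵥ w) i)
    (heq : (w ⬝ᵥ w) * (gram u).det
      = ∑ i, (u i ⬝ᵥ w) * Matrix.cramer (gram u) (fun j => u j ⬝ᵥ w) i) :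
    ∃ μ : ι → ℝ, (∀ i, 0 ≤ μ i) ∧ ∑ i, μ i • u i = w := by
  set G := gram u with hG
  set b : ι → ℝ := fun j => u j ⬝ᵥ w with hb
  set μ : ι → ℝ := (G.det)⁻¹ • Matrix.cramer G b with hμ
  have hdne : G.det ≠ 0 := hdet.ne'
  refine ⟨μ, fun i => mul_nonneg (inv_nonneg.2 hdet.le) (hcr i), ?_⟩
  have hGμ : G *ᵥ μ = b := by
    rw [hμ, Matrix.mulVec_smul, Matrix.mulVec_cramer, smul_smul, inv_mul_cancel₀ hdne, one_smul]
  set s : Fin D → ℝ := ∑ i, μ i • u i with hs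
  have hdots : ∀ j, u j ⬝ᵥ s = b j := fun j => by
    rw [hs, ← gram_mulVec, hGμ]
  have hss : s ⬝ᵥ s = ∑ i, μ i * b i := by
    rw [hs, sum_smul_dot]
    exact Finset.sum_congr rfl fun i _ => by rw [← hs, hdots]
  have hws : s ⬝ᵥ w = ∑ i, μ i * b i := by
    rw [hs, sum_smul_dot]
  have hww : w ⬝ᵥ w = ∑ i, μ i * b i := by
    have : (w ⬝ᵥ w) * G.det = (∑ i, μ i * b i) * G.det := by
      rw [heq, Finset.sum_mul]
      refine Finset.sum_congr rfl fun i _ => ?_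
      have : Matrix.cramer G b i = G.det * μ i := by
        rw [hμ]; simp only [Pi.smul_apply, smul_eq_mul]; field_simp
      rw [this]; ring
    exact mul_right_cancel₀ hdne this
  have hzero : (w - s) ⬝ᵥ (w - s) = 0 := by
    rw [sub_dotProduct, dotProduct_sub, dotProduct_sub, hss, hww, hws, dotProduct_comm w s, hws]
    ring
  have := dotProduct_self_eq_zero.1 hzero
  rw [sub_eq_zero] at this
  exact this.symm

end real

section hat2
variable {ι : Type*} [Fintype ι] {d : ℕ}

lemma sum_smul_hat (μ : ι → ℝ) (p : ι → Fin d → ℝ) (x : Fin d → ℝ)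
    (h1 : ∑ i, μ i = 1) (h2 : ∑ i, μ i • p i = x) :
    ∑ i, μ i • hat (p i) = hat x := by
  funext a
  refine Fin.cases ?_ ?_ a
  · simp only [Finset.sum_apply, Pi.smul_apply, hat, Fin.cons_zero, smul_eq_mul, mul_one]
    exact h1
  · intro a'
    simp only [Finset.sum_apply, Pi.smul_apply, hat, Fin.cons_succ, smul_eq_mul]
    have := congrFun h2 a'
    simpa [Finset.sum_apply] using this

lemma hat_sum_smul (μ : ι → ℝ) (p : ι → Fin d → ℝ) (x : Fin d → ℝ)
    (h : ∑ i, μ i • hat (p i) = hat x) :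
    (∑ i, μ i = 1) ∧ ∑ i, μ i • p i = x := by
  constructor
  · have := congrFun h 0
    simpa [hat, Finset.sum_apply] using this
  · funext a'
    have := congrFun h a'.succ
    simpa [hat, Finset.sum_apply] using this

/-- The hatted subfamily of an affinely independent family is linearly independent. -/
lemma hat_linearIndependent (p : ι → Fin d → ℝ) (h : AffineIndependent ℝ p) :
    LinearIndependent ℝ (fun i => hat (p i)) := by
  rw [Fintype.linearIndependent_iff]
  intro g hg
  have h0 : ∑ i, g i = 0 := by
    have := congrFun hg 0
    simpa [hat, Finset.sum_apply] using this
  have h1 : ∑ i, g i • p i = 0 := by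
    funext a'
    have := congrFun hg a'.succ
    simpa [hat, Finset.sum_apply] using this
  exact fun i => affineIndependent_iff.1 h Finset.univ g h0 h1 i (Finset.mem_univ i)

end hat2

/-- Main real characterization: membership in the convex hull of the range of a finite family
is equivalent to an explicit finite disjunction of polynomial sign conditions. -/
theorem mem_convexHull_range_iff {d k : ℕ} (v : Fin k → (Fin d → ℝ)) (w : Fin d → ℝ) :
    w ∈ convexHull ℝ (Set.range v) ↔
    ∃ t : Finset (Fin k),
      0 < (gram fun i : t => hat (v i)).det ∧
      (∀ i : t, 0 ≤ Matrix.cramer (gram fun i : t => hat (v i))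
        (fun j : t => hat (v j) ⬝ᵥ hat w) i) ∧
      (hat w ⬝ᵥ hat w) * (gram fun i : t => hat (v i)).det
        = ∑ i : t, (hat (v i) ⬝ᵥ hat w) *
            Matrix.cramer (gram fun i : t => hat (v i)) (fun j : t => hat (v j) ⬝ᵥ hat w) i := by
  classical
  constructor
  · intro hw
    obtain ⟨γ, hγ, z, wt, hrange, haff, hwt, hsum1, hsumz⟩ :=
      eq_pos_convex_span_of_mem_convexHull hw
    -- choose indices
    have hch : ∀ i : γ, ∃ a : Fin k, v a = z i := fun i => hrange ⟨i, rfl⟩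
    choose j hj using hch
    have hzinj : Function.Injective z := haff.injective
    have hjinj : Function.Injective j := fun i i' hii' => hzinj (by rw [← hj, ← hj, hii'])
    set t : Finset (Fin k) := Finset.univ.image j with ht
    have hmem : ∀ i : γ, j i ∈ t := fun i => Finset.mem_image_of_mem j (Finset.mem_univ i)
    set e : γ → t := fun i => ⟨j i, hmem i⟩ with he
    have hebij : Function.Bijective e := by
      constructor
      · intro i i' h'
        exact hjinj (congrArg Subtype.val h')
      · rintro ⟨a, ha⟩
        obtain ⟨i, _, hi⟩ := Finset.mem_image.1 ha
        exact ⟨i, Subtype.ext hi⟩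
    set σ : γ ≃ t := Equiv.ofBijective e hebij with hσ
    have hvz : ∀ i : γ, v ((σ i : t) : Fin k) = z i := fun i => by
      simpa [hσ, he] using hj i
    -- transported weights
    set μ : t → ℝ := fun i => wt (σ.symm i) with hμdef
    have hμsum : ∑ i : t, μ i = 1 := by
      rw [← hsum1]
      exact Equiv.sum_comp σ.symm wt
    have hμsumz : ∑ i : t, μ i • v i = w := by
      rw [← hsumz, ← Equiv.sum_comp σ (fun i : t => μ i • v (i : Fin k))]
      refine Finset.sum_congr rfl fun i _ => ?_
      rw [hμdef]
      simp only [Equiv.symm_apply_apply]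
      rw [hvz i]
    -- affine independence of the subfamily
    have haff' : AffineIndependent ℝ (fun i : t => v i) := by
      have : (fun i : t => v (i : Fin k)) = z ∘ σ.symm := by
        funext i
        have := hvz (σ.symm i)
        simpa [Equiv.apply_symm_apply] using this
      rw [this]
      exact haff.comp_embedding σ.symm.toEmbedding
    have hli : LinearIndependent ℝ (fun i : t => hat (v i)) :=
      hat_linearIndependent _ haff'
    have hdet := gram_det_pos _ hli
    have hhatw : ∑ i : t, μ i • hat (v i) = hat w := sum_smul_hat μ _ w hμsum hμsumz
    have hcr : Matrix.cramer (gram fun i : t => hat (v i))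
        (fun j : t => hat (v j) ⬝ᵥ hat w) = (gram fun i : t => hat (v i)).det • μ := by
      rw [← hhatw]
      exact cramer_of_comb _ hli μ
    refine ⟨t, hdet, ?_, ?_⟩
    · intro i
      rw [hcr]
      exact mul_nonneg hdet.le (hwt (σ.symm i)).le
    · have hb : hat w ⬝ᵥ hat w = ∑ i : t, μ i * (hat (v i) ⬝ᵥ hat w) := by
        rw [← sum_smul_dot, hhatw]
      rw [hb, hcr, Finset.sum_mul]
      refine Finset.sum_congr rfl fun i _ => ?_
      simp only [Pi.smul_apply, smul_eq_mul]
      ring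
  · rintro ⟨t, hdet, hcr, heq⟩
    obtain ⟨μ, hμ0, hμsum⟩ := comb_of_conditions (fun i : t => hat (v i)) (hat w) hdet hcr heq
    obtain ⟨h1, h2⟩ := hat_sum_smul μ _ w hμsum
    exact mem_convexHull_of_exists_fintype μ (fun i : t => v i) hμ0 h1
      (fun i => ⟨i, rfl⟩) h2

section mapping

variable {R S : Type*} [CommRing R] [CommRing S] (φ : R →+* S)

lemma hat_comp {d : ℕ} (v : Fin d → R) : φ ∘ hat v = hat (φ ∘ v) := by
  funext a
  refine Fin.cases ?_ ?_ a <;> simp [hat]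

lemma gram_map {ι : Type*} [Fintype ι] {n : Type*} [Fintype n] (u : ι → n → R) :
    (gram u).map φ = gram fun i => φ ∘ u i := by
  ext i j
  simp only [gram, Matrix.map_apply, Matrix.of_apply]
  rw [RingHom.map_dotProduct]

lemma det_gram_map {ι : Type*} [Fintype ι] [DecidableEq ι] {n : Type*} [Fintype n]
    (u : ι → n → R) :
    φ (gram u).det = (gram fun i => φ ∘ u i).det := by
  rw [RingHom.map_det, RingHom.mapMatrix_apply, gram_map]

lemma cramer_map {ι : Type*} [Fintype ι] [DecidableEq ι] {n : Type*} [Fintype n]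
    (u : ι → n → R) (b : ι → R) (i : ι) :
    φ (((gram u).updateCol i b).det)
      = Matrix.cramer (gram fun i => φ ∘ u i) (fun j => φ (b j)) i := by
  rw [Matrix.cramer_apply, RingHom.map_det, RingHom.mapMatrix_apply, Matrix.map_updateCol, gram_map]
  rfl

end mapping

/-- The key lemma: the set of parameters `x` for which a point with polynomial coordinates lies
in the convex hull of finitely many points with polynomial coordinates is semialgebraic. -/
lemma key {N k d : ℕ} (V : Fin k → Fin d → MvPolynomial (Fin N) ℝ)
    (W : Fin d → MvPolynomial (Fin N) ℝ) :
    IsSemialgebraic {x | (fun a => MvPolynomial.eval x (W a)) ∈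
      convexHull ℝ (Set.range fun j => fun a => MvPolynomial.eval x (V j a))} := by
  classical
  set Gp : (t : Finset (Fin k)) → Matrix t t (MvPolynomial (Fin N) ℝ) :=
    fun t => gram (fun i : t => hat (V i)) with hGp
  set bp : (t : Finset (Fin k)) → t → MvPolynomial (Fin N) ℝ :=
    fun t i => hat (V i) ⬝ᵥ hat W with hbp
  set detP : Finset (Fin k) → MvPolynomial (Fin N) ℝ := fun t => (Gp t).det with hdetP
  set crP : (t : Finset (Fin k)) → t → MvPolynomial (Fin N) ℝ :=
    fun t i => ((Gp t).updateCol i (bp t)).det with hcrP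
  set eqP : Finset (Fin k) → MvPolynomial (Fin N) ℝ :=
    fun t => (hat W ⬝ᵥ hat W) * detP t - ∑ i : t, bp t i * crP t i with heqP
  have main : {x | (fun a => MvPolynomial.eval x (W a)) ∈
      convexHull ℝ (Set.range fun j => fun a => MvPolynomial.eval x (V j a))}
      = ⋃ t : Finset (Fin k),
        ({x | 0 < MvPolynomial.eval x (detP t)} ∩
          ({x | MvPolynomial.eval x (eqP t) = 0} ∩
            ⋂ i : t, {x | 0 ≤ MvPolynomial.eval x (crP t i)})) := by
    ext x
    have hu : ∀ i : Fin k, (⇑(MvPolynomial.eval x)) ∘ hat (V i)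
        = hat (fun a => MvPolynomial.eval x (V i a)) := fun i => hat_comp _ _
    have hwm : (⇑(MvPolynomial.eval x)) ∘ hat W
        = hat (fun a => MvPolynomial.eval x (W a)) := hat_comp _ _
    have e1 : ∀ t : Finset (Fin k), MvPolynomial.eval x (detP t)
        = (gram fun i : t => hat (fun a => MvPolynomial.eval x (V i a))).det := by
      intro t
      rw [hdetP]
      rw [det_gram_map (MvPolynomial.eval x) (fun i : t => hat (V i))]
      simp only [hu]
    have e2 : ∀ (t : Finset (Fin k)) (i : t), MvPolynomial.eval x (crP t i)
        = Matrix.cramer (gram fun i : t => hat (fun a => MvPolynomial.eval x (V i a)))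
            (fun j : t => hat (fun a => MvPolynomial.eval x (V j a)) ⬝ᵥ
              hat (fun a => MvPolynomial.eval x (W a))) i := by
      intro t i
      rw [hcrP]
      rw [cramer_map (MvPolynomial.eval x) (fun i : t => hat (V i)) (bp t) i]
      simp only [hu, hbp, RingHom.map_dotProduct, hwm]
    have e3 : ∀ t : Finset (Fin k), MvPolynomial.eval x (eqP t)
        = (hat (fun a => MvPolynomial.eval x (W a)) ⬝ᵥ hat (fun a => MvPolynomial.eval x (W a)))
            * (gram fun i : t => hat (fun a => MvPolynomial.eval x (V i a))).det
          - ∑ i : t, (hat (fun a => MvPolynomial.eval x (V i a)) ⬝ᵥ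
              hat (fun a => MvPolynomial.eval x (W a))) *
              Matrix.cramer (gram fun i : t => hat (fun a => MvPolynomial.eval x (V i a)))
                (fun j : t => hat (fun a => MvPolynomial.eval x (V j a)) ⬝ᵥ
                  hat (fun a => MvPolynomial.eval x (W a))) i := by
      intro t
      rw [heqP]
      rw [map_sub, _root_.map_mul, RingHom.map_dotProduct, map_sum, hwm, e1 t]
      congr 1
      refine Finset.sum_congr rfl fun i _ => ?_
      rw [_root_.map_mul, e2 t i]
      simp only [hbp, RingHom.map_dotProduct, hwm, hu]
    simp only [mem_setOf_eq, mem_iUnion, mem_inter_iff, mem_setOf_eq, mem_iInter]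
    rw [mem_convexHull_range_iff]
    constructor
    · rintro ⟨t, h1, h2, h3⟩
      exact ⟨t, by rw [e1 t]; exact h1,
        by rw [e3 t, sub_eq_zero]; exact h3,
        fun i => by rw [e2 t i]; exact h2 i⟩
    · rintro ⟨t, h1, h3, h2⟩
      refine ⟨t, by rw [e1 t] at h1; exact h1,
        fun i => by have := h2 i; rw [e2 t i] at this; exact this, ?_⟩
      rw [e3 t, sub_eq_zero] at h3
      exact h3
  rw [main]
  exact isSA_iUnion fun t => isSA_inter2 (isSA_pos _)
    (isSA_inter2 (isSA_eq _) (isSA_iInter fun i => isSA_nonneg _))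

lemma eval_affine_poly {N m d : ℕ} (ι : (Fin N → ℝ) ≃ₗ[ℝ] ((Fin m → ℝ) →ᵃ[ℝ] (Fin d → ℝ)))
    (z : Fin m → ℝ) (a : Fin d) (c : Fin N → ℝ) :
    MvPolynomial.eval c (∑ i : Fin N,
        MvPolynomial.C ((ι fun j' => if i = j' then (1:ℝ) else 0) z a) * MvPolynomial.X i)
      = (ι c) z a := by
  classical
  set L : (Fin N → ℝ) →ₗ[ℝ] ℝ :=
    { toFun := fun c => (ι c) z a
      map_add' := by
        intro c c'
        simp [map_add]
      map_smul' := by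
        intro r c
        simp [_root_.map_smul] } with hL
  have h1 : (ι c) z a = L c := rfl
  rw [h1, LinearMap.pi_apply_eq_sum_univ L c]
  rw [map_sum]
  refine Finset.sum_congr rfl fun i _ => ?_
  rw [_root_.map_mul, eval_C, eval_X]
  simp only [hL, LinearMap.coe_mk, AddHom.coe_mk, smul_eq_mul]
  ring

lemma range_enum {α : Type*} [DecidableEq α] (s : Finset α) :
    (↑s : Set α) = Set.range (fun i : Fin s.card => (s.equivFin.symm i : α)) := by
  ext p
  constructor
  · intro hp
    exact ⟨s.equivFin ⟨p, hp⟩, by simp⟩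
  · rintro ⟨i, rfl⟩
    exact (s.equivFin.symm i).2


end SAProof

open SAProof in
/-- For nonempty polytopes `X ⊂ ℝ^d` (with `dim X = d`), `Y ⊂ ℝ^e`,
`Z ⊂ ℝ^m` and an affine map `f : Y → X` with `dim f(Y) = dim X`, identifying the space
of affine maps `ℝ^m → ℝ^d` with `ℝ^{d(m+1)}` (via any linear identification `ι`), the
sandwiching set `ⓢ(Z, f) = {g : g(Z) ⊆ X and f(Y) ⊆ g(Z)}` is semialgebraic. -/
theorem sandwiching_isSemialgebraic (d e m : ℕ)
    (X : Set (Fin d → ℝ)) (Y : Set (Fin e → ℝ)) (Z : Set (Fin m → ℝ))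
    (hXne : X.Nonempty) (hX : ∃ s : Finset (Fin d → ℝ), X = convexHull ℝ (s : Set (Fin d → ℝ)))
    (hYne : Y.Nonempty) (hY : ∃ s : Finset (Fin e → ℝ), Y = convexHull ℝ (s : Set (Fin e → ℝ)))
    (hZne : Z.Nonempty) (hZ : ∃ s : Finset (Fin m → ℝ), Z = convexHull ℝ (s : Set (Fin m → ℝ)))
    (hXdim : convDim X = d)
    (f : (Fin e → ℝ) →ᵃ[ℝ] (Fin d → ℝ)) (hf : ⇑f '' Y ⊆ X)
    (hfdim : convDim (⇑f '' Y) = convDim X)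
    (ι : (Fin (d * (m + 1)) → ℝ) ≃ₗ[ℝ] ((Fin m → ℝ) →ᵃ[ℝ] (Fin d → ℝ))) :
    IsSemialgebraic
      {c : Fin (d * (m + 1)) → ℝ | ⇑(ι c) '' Z ⊆ X ∧ ⇑f '' Y ⊆ ⇑(ι c) '' Z} := by
  classical
  obtain ⟨sX, hXeq⟩ := hX
  obtain ⟨sY, hYeq⟩ := hY
  obtain ⟨sZ, hZeq⟩ := hZ
  set vX : Fin sX.card → Fin d → ℝ := fun i => (sX.equivFin.symm i : Fin d → ℝ) with hvX
  set vY : Fin sY.card → Fin e → ℝ := fun i => (sY.equivFin.symm i : Fin e → ℝ) with hvY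
  set vZ : Fin sZ.card → Fin m → ℝ := fun i => (sZ.equivFin.symm i : Fin m → ℝ) with hvZ
  -- polynomial coordinate families
  set PZ : Fin sZ.card → Fin d → MvPolynomial (Fin (d * (m + 1))) ℝ :=
    fun j a => ∑ i : Fin (d * (m + 1)),
      MvPolynomial.C ((ι fun j' => if i = j' then (1:ℝ) else 0) (vZ j) a) * MvPolynomial.X i
      with hPZdef
  set CX : Fin sX.card → Fin d → MvPolynomial (Fin (d * (m + 1))) ℝ :=
    fun i a => MvPolynomial.C (vX i a) with hCX
  set CY : Fin sY.card → Fin d → MvPolynomial (Fin (d * (m + 1))) ℝ :=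
    fun i a => MvPolynomial.C (f (vY i) a) with hCY
  have hPZ : ∀ (c : Fin (d * (m + 1)) → ℝ) j a,
      MvPolynomial.eval c (PZ j a) = (ι c) (vZ j) a := fun c j a => eval_affine_poly ι (vZ j) a c
  -- image descriptions
  have himage : ∀ c : Fin (d * (m + 1)) → ℝ,
      (ι c) '' Z = convexHull ℝ (Set.range fun j => (ι c) (vZ j)) := by
    intro c
    rw [hZeq, range_enum sZ, AffineMap.image_convexHull, ← Set.range_comp]
    rfl
  have hfY : ⇑f '' Y = convexHull ℝ (Set.range fun i => f (vY i)) := by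
    rw [hYeq, range_enum sY, AffineMap.image_convexHull, ← Set.range_comp]
    rfl
  have hXconv : X = convexHull ℝ (Set.range vX) := by rw [hXeq, range_enum sX]
  -- the main set equality
  have main : {c : Fin (d * (m + 1)) → ℝ | ⇑(ι c) '' Z ⊆ X ∧ ⇑f '' Y ⊆ ⇑(ι c) '' Z}
      = (⋂ j : Fin sZ.card, {c | (fun a => MvPolynomial.eval c (PZ j a)) ∈
            convexHull ℝ (Set.range fun i => fun a => MvPolynomial.eval c (CX i a))})
        ∩ (⋂ i : Fin sY.card, {c | (fun a => MvPolynomial.eval c (CY i a)) ∈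
            convexHull ℝ (Set.range fun j => fun a => MvPolynomial.eval c (PZ j a))}) := by
    ext c
    have hfun1 : ∀ j, (fun a => MvPolynomial.eval c (PZ j a)) = (ι c) (vZ j) :=
      fun j => funext fun a => hPZ c j a
    have hfun2 : (fun (i : Fin sX.card) => fun a => MvPolynomial.eval c (CX i a)) = vX := by
      funext i a
      simp [hCX]
    have hfun3 : ∀ i, (fun a => MvPolynomial.eval c (CY i a)) = f (vY i) := by
      intro i
      funext a
      simp [hCY]
    simp only [mem_setOf_eq, mem_inter_iff, mem_iInter, mem_setOf_eq]
    have hr1 : (Set.range fun i => fun a => MvPolynomial.eval c (CX i a)) = Set.range vX := by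
      rw [hfun2]
    have hr2 : (Set.range fun j => fun a => MvPolynomial.eval c (PZ j a))
        = Set.range fun j => (ι c) (vZ j) := by
      exact congrArg Set.range (funext hfun1)
    constructor
    · rintro ⟨h1, h2⟩
      constructor
      · intro j
        rw [hfun1 j, hr1]
        rw [← hXconv]
        apply h1
        rw [himage c]
        exact subset_convexHull ℝ _ ⟨j, rfl⟩
      · intro i
        rw [hfun3 i, hr2, ← himage c]
        apply h2
        rw [hfY]
        exact subset_convexHull ℝ _ ⟨i, rfl⟩
    · rintro ⟨h1, h2⟩
      constructor
      · rw [himage c, hXconv]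
        refine convexHull_min ?_ (convex_convexHull ℝ _)
        rintro _ ⟨j, rfl⟩
        have := h1 j
        rwa [hfun1 j, hr1, ← hXconv, hXconv] at this
      · rw [hfY, himage c]
        refine convexHull_min ?_ (convex_convexHull ℝ _)
        rintro _ ⟨i, rfl⟩
        have := h2 i
        rw [hfun3 i, hr2] at this
        rw [← himage c] at this ⊢
        exact this
  rw [main]
  exact isSA_inter2 (isSA_iInter fun j => key CX (PZ j)) (isSA_iInter fun i => key PZ (CY i))
end
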